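/- arXiv:2212.02368 — 12 statements merged into one kernel-verified Lean document; each statement's English description precedes it below -/
import Mathlib

section
/- Let X be a finite set of row vectors in ℝⁿ and let Q be an n×n real symmetric positive definite matrix with A Q Aᵀ = 1 for every A ∈ X. Suppose Q is a critical point of the determinant on the slice W_X, in the sense that tr(Q⁻¹ S) = 0 for every real symmetric n×n matrix S satisfying A S Aᵀ = 0 for all A ∈ X. Then (1/n)·Q⁻¹ lies in the linear span of {AᵀA : A ∈ X}, and moreover tr((1/n)·Q⁻¹ · M) = 1 for every symmetric matrix M with A M Aᵀ = 1 for all A ∈ X. -/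
open Matrix

private lemma trace_vecMulVec_mul {n : ℕ} (A : Fin n → ℝ) (M : Matrix (Fin n) (Fin n) ℝ) :
    (Matrix.vecMulVec A A * M).trace = dotProduct A (M.mulVec A) := by
  simp only [Matrix.trace, Matrix.diag, Matrix.mul_apply, Matrix.vecMulVec_apply,
    dotProduct, Matrix.mulVec, Finset.mul_sum]
  rw [Finset.sum_comm]
  apply Finset.sum_congr rfl
  intro i _
  apply Finset.sum_congr rfl
  intro j _
  ring

private lemma inner_eq_trace {n : ℕ}
    (e : Matrix (Fin n) (Fin n) ℝ ≃ₗ[ℝ] EuclideanSpace ℝ (Fin n × Fin n))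
    (he : ∀ S p, e S p = S p.1 p.2)
    (S T : Matrix (Fin n) (Fin n) ℝ) :
    (inner ℝ (e S) (e T) : ℝ) = (Sᵀ * T).trace := by
  simp only [PiLp.inner_apply, RCLike.inner_apply', starRingEnd_apply, star_trivial, he]
  simp only [Matrix.trace, Matrix.diag, Matrix.mul_apply, Matrix.transpose_apply,
    Fintype.sum_prod_type]
  rw [Finset.sum_comm]

/-- If `Q` is a critical point of the determinant restricted on `W_X` (the set of
symmetric positive definite matrices `M` with `A M Aᵀ = 1` for all `A ∈ X`), then
`(1/n) Q⁻¹` lies in the span of the rank-one matrices `AᵀA`, `A ∈ X`, and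
`tr((1/n) Q⁻¹ M) = 1` for every symmetric `M` with `A M Aᵀ = 1` for all `A ∈ X`. -/
theorem stmt2 (n : ℕ) (hn : 0 < n) (X : Finset (Fin n → ℝ))
    (Q : Matrix (Fin n) (Fin n) ℝ) (hQsymm : Q.IsSymm) (hQpd : Q.PosDef)
    (hQX : ∀ A ∈ X, dotProduct A (Q.mulVec A) = 1)
    (hcrit : ∀ S : Matrix (Fin n) (Fin n) ℝ, S.IsSymm →
      (∀ A ∈ X, dotProduct A (S.mulVec A) = 0) → (Q⁻¹ * S).trace = 0) :
    (1 / (n : ℝ)) • Q⁻¹ ∈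
      Submodule.span ℝ ((fun A : Fin n → ℝ => Matrix.vecMulVec A A) '' (X : Set (Fin n → ℝ))) ∧
    ∀ M : Matrix (Fin n) (Fin n) ℝ, M.IsSymm →
      (∀ A ∈ X, dotProduct A (M.mulVec A) = 1) →
      (((1 / (n : ℝ)) • Q⁻¹) * M).trace = 1 := by
  classical
  have hQdet : IsUnit Q.det := isUnit_iff_ne_zero.2 (ne_of_gt hQpd.det_pos)
  have hQinvQ : Q⁻¹ * Q = 1 := Matrix.nonsing_inv_mul Q hQdet
  have hQinv_symm : Q⁻¹.IsSymm := by
    rw [Matrix.IsSymm, Matrix.transpose_nonsing_inv, hQsymm]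
  set V := Submodule.span ℝ
    ((fun A : Fin n → ℝ => Matrix.vecMulVec A A) '' (X : Set (Fin n → ℝ))) with hV
  -- every element of V is symmetric
  have hVsymm : ∀ T ∈ V, T.IsSymm := by
    intro T hT
    induction hT using Submodule.span_induction with
    | mem x hx =>
      obtain ⟨A, _, rfl⟩ := hx
      ext i j
      simp [Matrix.vecMulVec_apply, mul_comm]
    | zero => exact Matrix.isSymm_zero
    | add x y _ _ hx hy => exact hx.add hy
    | smul c x _ hx =>
      rw [Matrix.IsSymm] at hx ⊢
      rw [Matrix.transpose_smul, hx]
  -- the transport to Euclidean space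
  let e : Matrix (Fin n) (Fin n) ℝ ≃ₗ[ℝ] EuclideanSpace ℝ (Fin n × Fin n) :=
    (LinearEquiv.curry ℝ ℝ (Fin n) (Fin n)).symm.trans
      (WithLp.linearEquiv 2 ℝ ((Fin n × Fin n) → ℝ)).symm
  have he : ∀ S : Matrix (Fin n) (Fin n) ℝ, ∀ p, e S p = S p.1 p.2 := by
    intro S p
    rfl
  -- key step: Q⁻¹ ∈ V
  have hmem : Q⁻¹ ∈ V := by
    set V' := V.map e.toLinearMap with hV'
    set P : EuclideanSpace ℝ (Fin n × Fin n) := ((Submodule.orthogonalProjectionOnto V' (e Q⁻¹) : V') : EuclideanSpace ℝ (Fin n × Fin n)) with hP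
    have hPmem : P ∈ V' := SetLike.coe_mem _
    have hperp : e Q⁻¹ - P ∈ V'ᗮ := Submodule.sub_starProjection_mem_orthogonal _
    obtain ⟨R, hRV, hRe⟩ := hPmem
    set S : Matrix (Fin n) (Fin n) ℝ := Q⁻¹ - R with hS
    have heS : e S = e Q⁻¹ - P := by
      rw [hS, map_sub]
      exact congrArg (fun x => e Q⁻¹ - x) hRe
    have hSsymm : S.IsSymm := by
      rw [Matrix.IsSymm, hS, Matrix.transpose_sub, hQinv_symm, (hVsymm R hRV)]
    have hSX : ∀ A ∈ X, dotProduct A (S.mulVec A) = 0 := by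
      intro A hA
      have h1 : e (Matrix.vecMulVec A A) ∈ V' := by
        exact ⟨Matrix.vecMulVec A A, Submodule.subset_span ⟨A, hA, rfl⟩, rfl⟩
      have h2 : (inner ℝ (e (Matrix.vecMulVec A A)) (e S) : ℝ) = 0 := by
        rw [heS]
        exact Submodule.inner_right_of_mem_orthogonal h1 hperp
      rw [inner_eq_trace e he] at h2
      have h3 : (Matrix.vecMulVec A A)ᵀ = Matrix.vecMulVec A A := by
        ext i j; simp [Matrix.vecMulVec_apply, mul_comm]
      rw [h3, trace_vecMulVec_mul] at h2
      exact h2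
    have h0 := hcrit S hSsymm hSX
    -- tr(Q⁻¹ S) = tr(R S) + tr(S S)
    have hsplit : Q⁻¹ * S = R * S + S * S := by
      rw [hS, sub_mul]; abel
    have htRS : (R * S).trace = 0 := by
      have h1 : e R ∈ V' := ⟨R, hRV, rfl⟩
      have h2 : (inner ℝ (e R) (e S) : ℝ) = 0 := by
        rw [heS]
        exact Submodule.inner_right_of_mem_orthogonal h1 hperp
      rw [inner_eq_trace e he, hVsymm R hRV] at h2
      exact h2
    have htSS : (inner ℝ (e S) (e S) : ℝ) = 0 := by
      rw [inner_eq_trace e he, hSsymm]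
      rw [hsplit, Matrix.trace_add, htRS, zero_add] at h0
      exact h0
    have hS0 : S = 0 := by
      have := inner_self_eq_zero.mp htSS
      have : e S = 0 := this
      simpa using congrArg e.symm this
    have : Q⁻¹ = R := by rw [← sub_eq_zero]; exact hS0
    rw [this]; exact hRV
  refine ⟨V.smul_mem _ hmem, ?_⟩
  intro M hMsymm hMX
  -- the linear functional T ↦ tr(T * (M - Q)) vanishes on V
  have hker : ∀ T ∈ V, (T * (M - Q)).trace = 0 := by
    intro T hT
    have : V ≤ LinearMap.ker ((Matrix.traceLinearMap (Fin n) ℝ ℝ).comp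
        (LinearMap.mulRight ℝ (M - Q))) := by
      rw [hV, Submodule.span_le]
      rintro _ ⟨A, hA, rfl⟩
      simp only [SetLike.mem_coe, LinearMap.mem_ker, LinearMap.comp_apply,
        LinearMap.mulRight_apply, Matrix.traceLinearMap_apply]
      rw [trace_vecMulVec_mul, Matrix.sub_mulVec, dotProduct_sub,
        hMX A hA, hQX A hA, sub_self]
    exact this hT
  have h1 : (Q⁻¹ * M).trace = (n : ℝ) := by
    have := hker Q⁻¹ hmem
    rw [Matrix.mul_sub, Matrix.trace_sub, hQinvQ, Matrix.trace_one] at this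
    simp only [Fintype.card_fin] at this
    linarith
  rw [Matrix.smul_mul, Matrix.trace_smul, h1, smul_eq_mul]
  field_simp
end

section
/- Let A₁, …, A_k be row vectors in ℝⁿ, let y₁, …, y_k be real numbers with y_j > 0 for all j and y₁ + ⋯ + y_k = 1, and suppose the matrix P = Σ_{j=1}^{k} y_j A_jᵀA_j is positive definite. If for each j with 2 ≤ j ≤ k the derivative at t = 0 of t ↦ det(P + t(A_jᵀA_j − A₁ᵀA₁)) vanishes, then A_j P⁻¹ A_jᵀ = n for every j = 1, …, k. -/
open Matrix Polynomial

lemma deriv_det_aux {m : ℕ} (P M : Matrix (Fin m) (Fin m) ℝ) (hP : IsUnit P.det) :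
    deriv (fun t : ℝ => (P + t • M).det) 0 = P.det * (P⁻¹ * M).trace := by
  have key : ∀ t : ℝ, (P + t • M).det =
      P.det * (1 + (P⁻¹ * M).trace * t
        + (det (1 + (X : ℝ[X]) • (P⁻¹ * M).map C)).divX.divX.eval t * t ^ 2) := by
    intro t
    rw [← Matrix.det_one_add_smul t (P⁻¹ * M), ← Matrix.det_mul]
    congr 1
    rw [Matrix.mul_add, mul_one, Matrix.mul_smul, ← Matrix.mul_assoc,
      Matrix.mul_nonsing_inv _ hP, Matrix.one_mul]
  have hd : HasDerivAt (fun t : ℝ =>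
      P.det * (1 + (P⁻¹ * M).trace * t
        + (det (1 + (X : ℝ[X]) • (P⁻¹ * M).map C)).divX.divX.eval t * t ^ 2))
      (P.det * (P⁻¹ * M).trace) 0 := by
    have h1 : HasDerivAt (fun t : ℝ => 1 + (P⁻¹ * M).trace * t
        + (det (1 + (X : ℝ[X]) • (P⁻¹ * M).map C)).divX.divX.eval t * t ^ 2)
        ((P⁻¹ * M).trace) 0 := by
      have ha : HasDerivAt (fun t : ℝ => (P⁻¹ * M).trace * t) ((P⁻¹ * M).trace) 0 := by
        simpa using (hasDerivAt_id (0:ℝ)).const_mul ((P⁻¹ * M).trace)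
      have hb : HasDerivAt (fun t : ℝ =>
          (det (1 + (X : ℝ[X]) • (P⁻¹ * M).map C)).divX.divX.eval t * t ^ 2) 0 0 := by
        have := (Polynomial.hasDerivAt (det (1 + (X : ℝ[X]) • (P⁻¹ * M).map C)).divX.divX
          (0:ℝ)).mul ((hasDerivAt_pow 2 (0:ℝ)))
        simpa [Pi.mul_def] using this
      simpa [Pi.add_def] using ((hasDerivAt_const (0:ℝ) (1:ℝ)).add ha).add hb
    simpa using h1.const_mul P.det
  have : (fun t : ℝ => (P + t • M).det) = _ := funext key
  rw [this, hd.deriv]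

lemma trace_inv_vecMulVec {m : ℕ} (X : Matrix (Fin m) (Fin m) ℝ) (v : Fin m → ℝ) :
    (X * Matrix.vecMulVec v v).trace = dotProduct v (X.mulVec v) := by
  simp only [Matrix.trace, Matrix.diag, Matrix.mul_apply, Matrix.vecMulVec_apply,
    dotProduct, Matrix.mulVec, dotProduct]
  simp_rw [Finset.mul_sum]
  congr 1; ext i
  congr 1; ext j; ring


/-- Variational characterization of interior critical points of the determinant on the
convex hull of the rank-one matrices `AⱼᵀAⱼ`: if `P = Σ yⱼ AⱼᵀAⱼ` with all `yⱼ > 0`,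
`Σ yⱼ = 1`, `P` positive definite, and the derivative at `t = 0` of
`t ↦ det (P + t (AⱼᵀAⱼ − A₁ᵀA₁))` vanishes for every `j ≥ 2`, then
`Aⱼ P⁻¹ Aⱼᵀ = n` for every `j`. -/
theorem stmt3 (n k : ℕ) (hk : 0 < k) (A : Fin k → (Fin n → ℝ)) (y : Fin k → ℝ)
    (hy : ∀ j, 0 < y j) (hsum : ∑ j, y j = 1)
    (hP : (∑ j, y j • Matrix.vecMulVec (A j) (A j)).PosDef)
    (hcrit : ∀ j : Fin k, j ≠ ⟨0, hk⟩ →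
      deriv (fun t : ℝ =>
        ((∑ l, y l • Matrix.vecMulVec (A l) (A l)) +
          t • (Matrix.vecMulVec (A j) (A j) -
            Matrix.vecMulVec (A ⟨0, hk⟩) (A ⟨0, hk⟩))).det) 0 = 0) :
    ∀ j, dotProduct (A j)
      ((∑ l, y l • Matrix.vecMulVec (A l) (A l))⁻¹.mulVec (A j)) = (n : ℝ) := by

  intro j
  set P := ∑ l, y l • Matrix.vecMulVec (A l) (A l) with hPdef
  have hdet : IsUnit P.det := isUnit_iff_ne_zero.mpr hP.det_pos.ne'
  -- common value of traces
  have htr : ∀ i : Fin k, (P⁻¹ * Matrix.vecMulVec (A i) (A i)).trace =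
      (P⁻¹ * Matrix.vecMulVec (A ⟨0, hk⟩) (A ⟨0, hk⟩)).trace := by
    intro i
    by_cases hi : i = ⟨0, hk⟩
    · rw [hi]
    · have h := hcrit i hi
      rw [deriv_det_aux P _ hdet] at h
      rcases mul_eq_zero.mp h with h' | h'
      · exact absurd h' hP.det_pos.ne'
      · have : (P⁻¹ * Matrix.vecMulVec (A i) (A i)).trace -
            (P⁻¹ * Matrix.vecMulVec (A ⟨0, hk⟩) (A ⟨0, hk⟩)).trace = 0 := by
          rw [← Matrix.trace_sub, ← Matrix.mul_sub]; exact h'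
        linarith
  -- sum of traces weighted by y equals n
  have hsumtr : ∑ l, y l * (P⁻¹ * Matrix.vecMulVec (A l) (A l)).trace = (n : ℝ) := by
    have : P⁻¹ * P = 1 := Matrix.nonsing_inv_mul P hdet
    calc ∑ l, y l * (P⁻¹ * Matrix.vecMulVec (A l) (A l)).trace
        = (∑ l, y l • (P⁻¹ * Matrix.vecMulVec (A l) (A l))).trace := by
          rw [Matrix.trace_sum]; simp [Matrix.trace_smul, smul_eq_mul]
      _ = (P⁻¹ * P).trace := by
          rw [hPdef, Finset.mul_sum]
          congr 1
          refine Finset.sum_congr rfl fun l _ => ?_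
          rw [Matrix.mul_smul]
      _ = (n : ℝ) := by rw [this, Matrix.trace_one]; simp
  have h0 : (P⁻¹ * Matrix.vecMulVec (A ⟨0, hk⟩) (A ⟨0, hk⟩)).trace = (n : ℝ) := by
    have : ∑ l, y l * (P⁻¹ * Matrix.vecMulVec (A l) (A l)).trace =
        (P⁻¹ * Matrix.vecMulVec (A ⟨0, hk⟩) (A ⟨0, hk⟩)).trace := by
      calc ∑ l, y l * (P⁻¹ * Matrix.vecMulVec (A l) (A l)).trace
          = ∑ l, y l * (P⁻¹ * Matrix.vecMulVec (A ⟨0, hk⟩) (A ⟨0, hk⟩)).trace :=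
            Finset.sum_congr rfl fun l _ => by rw [htr l]
        _ = (∑ l, y l) * _ := by rw [Finset.sum_mul]
        _ = _ := by rw [hsum, one_mul]
    linarith [hsumtr]
  rw [← trace_inv_vecMulVec, htr j, h0]
end

section
/- Let n ≥ 3 and let Λ ⊆ ℝⁿ be a lattice of rank n, normalized so that its shortest nonzero vectors have norm 1, such that Ξ(Λ) contains n vectors generating Λ over ℤ and Λ is s-irreducible. Then there exist an integer k ≥ 4 and k vectors of Ξ(Λ) forming a generic k-tuple. -/
open Submodule Module Set

section Aux
variable {V : Type*} [AddCommGroup V] [Module ℝ V] [DecidableEq V]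

/-- Linear independence of a set of vectors. -/
def SIndep (s : Set V) : Prop := LinearIndependent ℝ ((↑) : s → V)

/-- A minimal linearly dependent finite set (a circuit). -/
def MinDep (C : Finset V) : Prop :=
  ¬ SIndep (C : Set V) ∧ ∀ D : Finset V, D ⊂ C → SIndep (D : Set V)

theorem sindep_mono {s t : Set V} (h : SIndep s) (hts : t ⊆ s) : SIndep t :=
  LinearIndepOn.mono (v := id) h hts

theorem exists_minDep (C : Finset V) (hC : ¬ SIndep (C : Set V)) :
    ∃ D : Finset V, D ⊆ C ∧ MinDep D := by
  classical
  induction C using Finset.strongInduction with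
  | _ C ih =>
    by_cases h : ∀ D : Finset V, D ⊂ C → SIndep (D : Set V)
    · exact ⟨C, subset_rfl, hC, h⟩
    · push_neg at h
      obtain ⟨D, hDC, hD⟩ := h
      obtain ⟨D', hD'D, hD'⟩ := ih D hDC hD
      exact ⟨D', hD'D.trans hDC.subset, hD'⟩

theorem MinDep.mem_span_erase {C : Finset V} (hC : MinDep C) {c : V} (hc : c ∈ C) :
    c ∈ span ℝ ((C.erase c : Finset V) : Set V) := by
  classical
  have h1 := hC.1
  rw [SIndep, linearIndependent_subtype_iff, linearIndepOn_iff] at h1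
  push_neg at h1
  obtain ⟨l, hl_supp, hl0, hlne⟩ := h1
  rw [Finsupp.mem_supported ℝ] at hl_supp
  have hsup : l.support = C := by
    by_contra hne
    have hss : l.support ⊂ C :=
      Finset.ssubset_iff_subset_ne.mpr ⟨Finset.coe_subset.mp hl_supp, hne⟩
    have hinds := hC.2 _ hss
    rw [SIndep, linearIndependent_subtype_iff, linearIndepOn_iff] at hinds
    exact hlne (hinds l ((Finsupp.mem_supported ℝ l).mpr subset_rfl) hl0)
  have hsum : ∑ x ∈ C, l x • x = 0 := by
    rw [Finsupp.linearCombination_apply, Finsupp.sum, hsup] at hl0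
    simpa using hl0
  have hlc : l c ≠ 0 := by
    rw [← Finsupp.mem_support_iff, hsup]; exact hc
  have hkey : l c • c = -∑ x ∈ C.erase c, l x • x := by
    rw [← Finset.add_sum_erase C _ hc] at hsum
    exact eq_neg_of_add_eq_zero_left hsum
  have hmem : (∑ x ∈ C.erase c, l x • x) ∈ span ℝ ((C.erase c : Finset V) : Set V) :=
    Submodule.sum_mem _ fun x hx => Submodule.smul_mem _ _ (subset_span hx)
  have hfin : (l c)⁻¹ • (-∑ x ∈ C.erase c, l x • x) ∈ span ℝ ((C.erase c : Finset V) : Set V) :=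
    Submodule.smul_mem _ _ (Submodule.neg_mem _ hmem)
  have hcc : c = (l c)⁻¹ • (-∑ x ∈ C.erase c, l x • x) := by
    rw [← hkey, smul_smul, inv_mul_cancel₀ hlc, one_smul]
  exact Set.mem_of_eq_of_mem hcc hfin

theorem MinDep.span_erase {C : Finset V} (hC : MinDep C) {c : V} (hc : c ∈ C) :
    span ℝ ((C.erase c : Finset V) : Set V) = span ℝ (C : Set V) := by
  refine le_antisymm (span_mono (by simp [Finset.coe_subset, Finset.erase_subset])) ?_
  rw [span_le]
  intro x hx
  rcases eq_or_ne x c with rfl | hne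
  · exact hC.mem_span_erase hc
  · exact subset_span (by simpa [Finset.mem_erase, hne] using hx)

theorem MinDep.finrank_span {C : Finset V} (hC : MinDep C) :
    finrank ℝ (span ℝ (C : Set V)) = C.card - 1 := by
  have hne : C.Nonempty := by
    rcases C.eq_empty_or_nonempty with rfl | h
    · refine absurd ?_ hC.1
      rw [Finset.coe_empty]
      exact linearIndependent_empty ℝ V
    · exact h
  obtain ⟨c, hc⟩ := hne
  have hind : SIndep ((C.erase c : Finset V) : Set V) :=
    hC.2 _ (Finset.erase_ssubset hc)
  rw [← hC.span_erase hc, finrank_span_finset_eq_card hind, Finset.card_erase_of_mem hc]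

theorem sindep_card_le_finrank {D : Finset V} (hD : SIndep (D : Set V))
    {U : Submodule ℝ V} [FiniteDimensional ℝ U] (hsub : (D : Set V) ⊆ (U : Set V)) :
    D.card ≤ finrank ℝ U := by
  have h1 : span ℝ (D : Set V) ≤ U := span_le.mpr hsub
  have := Submodule.finrank_mono h1
  rwa [finrank_span_finset_eq_card hD] at this

theorem pick_two [FiniteDimensional ℝ V] {M : Finset V} (hM : MinDep M) (h3 : M.card = 3)
    {p : V} (hp : p ≠ 0) :
    ∃ q r : V, q ∈ M ∧ r ∈ M ∧ q ≠ r ∧ q ∉ span ℝ ({p} : Set V) ∧ r ∉ span ℝ ({p} : Set V) ∧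
      SIndep ({q, r} : Set V) ∧ span ℝ ({q, r} : Set V) = span ℝ (M : Set V) := by
  classical
  set F := M.filter (fun x => x ∈ span ℝ ({p} : Set V)) with hF
  have hFcard : F.card ≤ 1 := by
    by_contra hgt
    push_neg at hgt
    obtain ⟨a, ha, b, hb, hab⟩ := Finset.one_lt_card.mp hgt
    have haM : a ∈ M := (Finset.mem_filter.mp ha).1
    have hbM : b ∈ M := (Finset.mem_filter.mp hb).1
    have hasp : a ∈ span ℝ ({p} : Set V) := (Finset.mem_filter.mp ha).2
    have hbsp : b ∈ span ℝ ({p} : Set V) := (Finset.mem_filter.mp hb).2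
    set D : Finset V := {a, b} with hD
    have hDcard : D.card = 2 := by
      rw [hD, Finset.card_insert_of_notMem (by simp [hab]), Finset.card_singleton]
    have hDsub : D ⊆ M := by
      intro x hx
      rcases Finset.mem_insert.mp hx with rfl | hx
      · exact haM
      · rw [Finset.mem_singleton.mp hx]; exact hbM
    have hDss : D ⊂ M := Finset.ssubset_iff_subset_ne.mpr ⟨hDsub, by intro h; rw [h, h3] at hDcard; omega⟩
    have hind := hM.2 D hDss
    have hle := sindep_card_le_finrank hind (U := span ℝ ({p} : Set V)) (by
      intro x hx
      have hx' : x ∈ D := by exact_mod_cast hx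
      rcases Finset.mem_insert.mp hx' with rfl | hx''
      · exact hasp
      · rw [Finset.mem_singleton.mp hx'']; exact hbsp)
    rw [finrank_span_singleton hp, hDcard] at hle
    omega
  have hGcard : 2 ≤ (M \ F).card := by
    have hFsub : F ⊆ M := Finset.filter_subset _ _
    rw [Finset.card_sdiff_of_subset hFsub, h3]
    omega
  obtain ⟨q, hq, r, hr, hqr⟩ := Finset.one_lt_card.mp (by omega : 1 < (M \ F).card)
  have hqM : q ∈ M := (Finset.mem_sdiff.mp hq).1
  have hrM : r ∈ M := (Finset.mem_sdiff.mp hr).1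
  have hqp : q ∉ span ℝ ({p} : Set V) := by
    intro h; exact (Finset.mem_sdiff.mp hq).2 (Finset.mem_filter.mpr ⟨hqM, h⟩)
  have hrp : r ∉ span ℝ ({p} : Set V) := by
    intro h; exact (Finset.mem_sdiff.mp hr).2 (Finset.mem_filter.mpr ⟨hrM, h⟩)
  set D : Finset V := {q, r} with hD
  have hDcoe : (D : Set V) = ({q, r} : Set V) := by simp [hD]
  have hDcard : D.card = 2 := by
    rw [hD, Finset.card_insert_of_notMem (by simp [hqr]), Finset.card_singleton]
  have hDsub : D ⊆ M := by
    intro x hx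
    rcases Finset.mem_insert.mp hx with rfl | hx
    · exact hqM
    · rw [Finset.mem_singleton.mp hx]; exact hrM
  have hDss : D ⊂ M := Finset.ssubset_iff_subset_ne.mpr ⟨hDsub, by intro h; rw [h, h3] at hDcard; omega⟩
  have hind := hM.2 D hDss
  have hspan : span ℝ ({q, r} : Set V) = span ℝ (M : Set V) := by
    have hle : span ℝ ((D : Finset V) : Set V) ≤ span ℝ (M : Set V) :=
      span_mono (by exact_mod_cast hDsub)
    have heq := Submodule.eq_of_le_of_finrank_le hle (by
      rw [hM.finrank_span, h3, finrank_span_finset_eq_card hind, hDcard])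
    rw [← hDcoe]; exact heq
  exact ⟨q, r, hqM, hrM, hqr, hqp, hrp, by rw [← hDcoe]; exact hind, hspan⟩

set_option maxHeartbeats 1000000 in
theorem glue [FiniteDimensional ℝ V] (S : Set V)
    (spade : ∀ C : Finset V, (C : Set V) ⊆ S → MinDep C → C.card ≤ 3)
    {M M' : Finset V} (hMS : (M : Set V) ⊆ S) (hM'S : (M' : Set V) ⊆ S)
    (hM : MinDep M) (hM' : MinDep M')
    {p : V} (hp : p ≠ 0) (hpM : p ∈ span ℝ (M : Set V)) (hpM' : p ∈ span ℝ (M' : Set V)) :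
    finrank ℝ ↥(span ℝ (M : Set V) ⊔ span ℝ (M' : Set V)) ≤ 2 := by
  classical
  set U := span ℝ (M : Set V) with hU
  set U' := span ℝ (M' : Set V) with hU'
  have hpU : span ℝ ({p} : Set V) ≤ U := (span_singleton_le_iff_mem p U).mpr hpM
  have hpU' : span ℝ ({p} : Set V) ≤ U' := (span_singleton_le_iff_mem p U').mpr hpM'
  have h1p : finrank ℝ (span ℝ ({p} : Set V)) = 1 := finrank_span_singleton hp
  have hU2 : finrank ℝ U ≤ 2 := by
    rw [hU, hM.finrank_span]
    have := spade M hMS hM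
    omega
  have hU'2 : finrank ℝ U' ≤ 2 := by
    rw [hU', hM'.finrank_span]
    have := spade M' hM'S hM'
    omega
  by_cases hU1 : finrank ℝ U ≤ 1
  · have heq : span ℝ ({p} : Set V) = U :=
      Submodule.eq_of_le_of_finrank_le hpU (by omega)
    have hle : U ≤ U' := heq ▸ hpU'
    rw [sup_eq_right.mpr hle]
    exact hU'2
  by_cases hU'1 : finrank ℝ U' ≤ 1
  · have heq : span ℝ ({p} : Set V) = U' :=
      Submodule.eq_of_le_of_finrank_le hpU' (by omega)
    have hle : U' ≤ U := heq ▸ hpU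
    rw [sup_eq_left.mpr hle]
    exact hU2
  push_neg at hU1 hU'1
  have hcardM : M.card = 3 := by have := hM.finrank_span; rw [← hU] at this; omega
  have hcardM' : M'.card = 3 := by have := hM'.finrank_span; rw [← hU'] at this; omega
  by_contra hbig
  push_neg at hbig
  have hsum := Submodule.finrank_sup_add_finrank_inf_eq U U'
  have hinfP : span ℝ ({p} : Set V) ≤ U ⊓ U' := le_inf hpU hpU'
  have hinf1 : 1 ≤ finrank ℝ ↥(U ⊓ U') := h1p ▸ Submodule.finrank_mono hinfP
  have hfU : finrank ℝ U = 2 := by omega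
  have hfU' : finrank ℝ U' = 2 := by omega
  have hsup3 : finrank ℝ ↥(U ⊔ U') = 3 := by omega
  have hinf : span ℝ ({p} : Set V) = U ⊓ U' :=
    Submodule.eq_of_le_of_finrank_le hinfP (by omega)
  obtain ⟨q, r, hqM, hrM, hqr, hqp, hrp, hqr_ind, hqr_span⟩ := pick_two hM hcardM hp
  obtain ⟨s, t, hsM, htM, hst, hsp, htp, hst_ind, hst_span⟩ := pick_two hM' hcardM' hp
  have cross : ∀ x, x ∈ M → x ∉ span ℝ ({p} : Set V) → ∀ y, y ∈ M' → x ≠ y := by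
    intro x hx hxp y hy hxy
    refine hxp ?_
    rw [hinf]
    exact ⟨subset_span hx, hxy ▸ subset_span hy⟩
  have hqs := cross q hqM hqp s hsM
  have hqt := cross q hqM hqp t htM
  have hrs := cross r hrM hrp s hsM
  have hrt := cross r hrM hrp t htM
  set D : Finset V := {q, r, s, t} with hD
  have hDcoe : (D : Set V) = ({q, r} : Set V) ∪ ({s, t} : Set V) := by
    rw [hD]; ext x; simp only [Finset.coe_insert, Finset.coe_singleton, Set.mem_insert_iff, Set.mem_singleton_iff, Set.mem_union]; tauto
  have hDspan : span ℝ (D : Set V) = U ⊔ U' := by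
    rw [hDcoe, span_union, hqr_span, hst_span]
  have hDS : (D : Set V) ⊆ S := by
    intro x hx
    have hx' : x ∈ D := by exact_mod_cast hx
    rw [hD] at hx'
    simp only [Finset.mem_insert, Finset.mem_singleton] at hx'
    rcases hx' with rfl | rfl | rfl | rfl
    · exact hMS hqM
    · exact hMS hrM
    · exact hM'S hsM
    · exact hM'S htM
  have hDcard : D.card = 4 := by
    rw [hD]
    rw [Finset.card_insert_of_notMem (by simp [hqr, hqs, hqt]),
      Finset.card_insert_of_notMem (by simp [hrs, hrt]),
      Finset.card_insert_of_notMem (by simp [hst]), Finset.card_singleton]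
  have hDdep : ¬ SIndep (D : Set V) := by
    intro h
    have h4 := finrank_span_finset_eq_card h
    rw [hDspan, hsup3, hDcard] at h4
    omega
  obtain ⟨M'', hM''D, hmd⟩ := exists_minDep D hDdep
  have hM''S : (M'' : Set V) ⊆ S := fun x hx => hDS (Finset.coe_subset.mpr hM''D hx)
  have hM''card : M''.card ≤ 3 := spade M'' hM''S hmd
  set A : Finset V := M'' ∩ {q, r} with hA
  set B : Finset V := M'' ∩ {s, t} with hB
  have hunion : M'' = A ∪ B := by
    ext x
    simp only [hA, hB, Finset.mem_union, Finset.mem_inter, Finset.mem_insert,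
      Finset.mem_singleton]
    constructor
    · intro hx
      have h2 := hM''D hx
      rw [hD] at h2
      simp only [Finset.mem_insert, Finset.mem_singleton] at h2
      rcases h2 with rfl | rfl | rfl | rfl
      · exact Or.inl ⟨hx, Or.inl rfl⟩
      · exact Or.inl ⟨hx, Or.inr rfl⟩
      · exact Or.inr ⟨hx, Or.inl rfl⟩
      · exact Or.inr ⟨hx, Or.inr rfl⟩
    · rintro (⟨h, _⟩ | ⟨h, _⟩) <;> exact h
  have hABdisj : Disjoint A B := by
    rw [Finset.disjoint_left]
    intro x hxA hxB
    simp only [hA, Finset.mem_inter, Finset.mem_insert, Finset.mem_singleton] at hxA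
    simp only [hB, Finset.mem_inter, Finset.mem_insert, Finset.mem_singleton] at hxB
    rcases hxA.2 with rfl | rfl <;> rcases hxB.2 with rfl | rfl
    · exact hqs rfl
    · exact hqt rfl
    · exact hrs rfl
    · exact hrt rfl
  have hAne : A.Nonempty := by
    rw [Finset.nonempty_iff_ne_empty]
    intro hAe
    have hsub : (M'' : Set V) ⊆ ({s, t} : Set V) := by
      intro x hx
      have : x ∈ A ∪ B := hunion ▸ hx
      rcases Finset.mem_union.mp this with h | h
      · rw [hAe] at h; simp at h
      · have := (Finset.mem_inter.mp h).2
        simpa using this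
    exact hmd.1 (sindep_mono hst_ind hsub)
  have hBne : B.Nonempty := by
    rw [Finset.nonempty_iff_ne_empty]
    intro hBe
    have hsub : (M'' : Set V) ⊆ ({q, r} : Set V) := by
      intro x hx
      have : x ∈ A ∪ B := hunion ▸ hx
      rcases Finset.mem_union.mp this with h | h
      · have := (Finset.mem_inter.mp h).2
        simpa using this
      · rw [hBe] at h; simp at h
    exact hmd.1 (sindep_mono hqr_ind hsub)
  have hcards : A.card + B.card = M''.card := by
    rw [hunion, Finset.card_union_of_disjoint hABdisj]
  have hone : A.card = 1 ∨ B.card = 1 := by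
    have h1 := hAne.card_pos
    have h2 := hBne.card_pos
    omega
  have final : ∀ (c : V), c ∈ M'' →
      c ∈ U → (((M''.erase c : Finset V) : Set V) ⊆ (U' : Set V)) →
      c ∉ span ℝ ({p} : Set V) → False := by
    intro c hcM'' hcU hsub hcp
    have hcsp : c ∈ span ℝ (((M''.erase c : Finset V)) : Set V) := hmd.mem_span_erase hcM''
    have hcU' : c ∈ U' := by
      have : span ℝ (((M''.erase c : Finset V)) : Set V) ≤ U' := span_le.mpr hsub
      exact this hcsp
    exact hcp (hinf ▸ Submodule.mem_inf.mpr ⟨hcU, hcU'⟩)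
  rcases hone with hA1 | hB1
  · obtain ⟨c, hc⟩ := Finset.card_eq_one.mp hA1
    have hcA : c ∈ A := hc ▸ Finset.mem_singleton_self c
    have hcM'' : c ∈ M'' := (Finset.mem_inter.mp hcA).1
    have hcqr : c ∈ ({q, r} : Finset V) := (Finset.mem_inter.mp hcA).2
    have hcM : c ∈ M := by
      rcases Finset.mem_insert.mp hcqr with rfl | h
      · exact hqM
      · rw [Finset.mem_singleton.mp h]; exact hrM
    have hcp : c ∉ span ℝ ({p} : Set V) := by
      rcases Finset.mem_insert.mp hcqr with rfl | h
      · exact hqp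
      · rw [Finset.mem_singleton.mp h]; exact hrp
    refine final c hcM'' (subset_span hcM) ?_ hcp
    intro x hx
    have hxe : x ∈ M''.erase c := by exact_mod_cast hx
    have hxM'' : x ∈ M'' := Finset.mem_of_mem_erase hxe
    have hxc : x ≠ c := Finset.ne_of_mem_erase hxe
    have hxB : x ∈ B := by
      rcases Finset.mem_union.mp (hunion ▸ hxM'') with h | h
      · exact absurd (Finset.mem_singleton.mp (hc ▸ h)) hxc
      · exact h
    have hxst : x ∈ ({s, t} : Finset V) := (Finset.mem_inter.mp hxB).2
    have : x ∈ span ℝ ({s, t} : Set V) := subset_span (by simpa using hxst)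
    rw [hst_span] at this
    exact this
  · obtain ⟨c, hc⟩ := Finset.card_eq_one.mp hB1
    have hcB : c ∈ B := hc ▸ Finset.mem_singleton_self c
    have hcM'' : c ∈ M'' := (Finset.mem_inter.mp hcB).1
    have hcst : c ∈ ({s, t} : Finset V) := (Finset.mem_inter.mp hcB).2
    have hcM' : c ∈ M' := by
      rcases Finset.mem_insert.mp hcst with rfl | h
      · exact hsM
      · rw [Finset.mem_singleton.mp h]; exact htM
    have hcp : c ∉ span ℝ ({p} : Set V) := by
      rcases Finset.mem_insert.mp hcst with rfl | h
      · exact hsp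
      · rw [Finset.mem_singleton.mp h]; exact htp
    -- symmetric: c ∈ U', erase ⊆ U
    have hcU' : c ∈ U' := subset_span hcM'
    have hsub : ((M''.erase c : Finset V) : Set V) ⊆ (U : Set V) := by
      intro x hx
      have hxe : x ∈ M''.erase c := by exact_mod_cast hx
      have hxM'' : x ∈ M'' := Finset.mem_of_mem_erase hxe
      have hxc : x ≠ c := Finset.ne_of_mem_erase hxe
      have hxA : x ∈ A := by
        rcases Finset.mem_union.mp (hunion ▸ hxM'') with h | h
        · exact h
        · exact absurd (Finset.mem_singleton.mp (hc ▸ h)) hxc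
      have hxqr : x ∈ ({q, r} : Finset V) := (Finset.mem_inter.mp hxA).2
      have : x ∈ span ℝ ({q, r} : Set V) := subset_span (by simpa using hxqr)
      rw [hqr_span] at this
      exact this
    have hcsp : c ∈ span ℝ (((M''.erase c : Finset V)) : Set V) := hmd.mem_span_erase hcM''
    have hcU : c ∈ U := span_le.mpr hsub hcsp
    exact hcp (hinf ▸ Submodule.mem_inf.mpr ⟨hcU, hcU'⟩)

end Aux


/-- A family of `k` vectors in `ℝⁿ` is a generic `k`-tuple if it has rank `k − 1`
and any `k − 1` of its vectors are linearly independent. -/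
def GenericTuple {n k : ℕ} (w : Fin k → EuclideanSpace ℝ (Fin n)) : Prop :=
  Module.finrank ℝ (Submodule.span ℝ (Set.range w)) = k - 1 ∧
  ∀ i : Fin k, LinearIndependent ℝ fun j : {j : Fin k // j ≠ i} => w j.1

set_option maxHeartbeats 1000000 in
/-- For `n ≥ 3`, if `Λ ⊆ ℝⁿ` is a lattice of rank `n` whose shortest nonzero vectors
have norm `1`, such that the set `Ξ(Λ)` of shortest vectors contains `n` vectors
generating `Λ` over `ℤ`, and `Λ` is s-irreducible (there is no nontrivial direct sum
decomposition `ℝⁿ = V₁ ⊕ V₂` with `Ξ(Λ) ⊆ V₁ ∪ V₂`), then `Ξ(Λ)` contains a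
generic `k`-tuple for some `k ≥ 4`. -/
theorem stmt5 (n : ℕ) (hn : 3 ≤ n) (Λ : Submodule ℤ (EuclideanSpace ℝ (Fin n)))
    (hlat : ∃ b : Fin n → EuclideanSpace ℝ (Fin n),
      LinearIndependent ℝ b ∧ Λ = Submodule.span ℤ (Set.range b))
    (hmin : ∀ x ∈ Λ, x ≠ 0 → 1 ≤ ‖x‖)
    (hgen : ∃ ξ : Fin n → EuclideanSpace ℝ (Fin n),
      (∀ i, ξ i ∈ Λ ∧ ‖ξ i‖ = 1) ∧ Submodule.span ℤ (Set.range ξ) = Λ)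
    (hirr : ¬ ∃ V₁ V₂ : Submodule ℝ (EuclideanSpace ℝ (Fin n)),
      V₁ ≠ ⊥ ∧ V₂ ≠ ⊥ ∧ IsCompl V₁ V₂ ∧
        ∀ x ∈ Λ, ‖x‖ = 1 → x ∈ V₁ ∨ x ∈ V₂) :
    ∃ k : ℕ, 4 ≤ k ∧ ∃ w : Fin k → EuclideanSpace ℝ (Fin n),
      (∀ i, w i ∈ Λ ∧ ‖w i‖ = 1) ∧ Function.Injective w ∧ GenericTuple w := by
  classical
  obtain ⟨b, hb, hΛ⟩ := hlat
  obtain ⟨ξ, hξ, hξspan⟩ := hgen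
  set S : Set (EuclideanSpace ℝ (Fin n)) := {x | x ∈ Λ ∧ ‖x‖ = 1} with hS
  have hSne0 : ∀ x ∈ S, x ≠ 0 := by
    intro x hx h0
    rw [h0] at hx
    simpa using hx.2
  have hfinrank : finrank ℝ (EuclideanSpace ℝ (Fin n)) = n := finrank_euclideanSpace_fin
  have hΛ_span : ∀ x ∈ Λ, x ∈ span ℝ S := by
    intro x hx
    rw [← hξspan] at hx
    have hsub : Set.range ξ ⊆ (span ℝ S : Set (EuclideanSpace ℝ (Fin n))) := by
      rintro _ ⟨i, rfl⟩
      exact subset_span ⟨(hξ i).1, (hξ i).2⟩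
    have hle : span ℤ (Set.range ξ) ≤ (span ℝ S).restrictScalars ℤ := span_le.mpr hsub
    exact hle hx
  have hSspan : span ℝ S = ⊤ := by
    have hne : Nonempty (Fin n) := ⟨⟨0, by omega⟩⟩
    have h1 : span ℝ (Set.range b) = ⊤ :=
      hb.span_eq_top_of_card_eq_finrank (by simp [hfinrank])
    rw [eq_top_iff, ← h1, span_le]
    rintro _ ⟨i, rfl⟩
    exact hΛ_span (b i) (hΛ ▸ subset_span ⟨i, rfl⟩)
  set s₀ : EuclideanSpace ℝ (Fin n) := ξ ⟨0, by omega⟩ with hs₀def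
  have hs₀S : s₀ ∈ S := ⟨(hξ _).1, (hξ _).2⟩
  have hs₀ne : s₀ ≠ 0 := hSne0 s₀ hs₀S
  by_contra hcon
  push_neg at hcon
  -- every circuit in S has at most 3 elements
  have spade : ∀ C : Finset (EuclideanSpace ℝ (Fin n)), (C : Set (EuclideanSpace ℝ (Fin n))) ⊆ S → MinDep C →
      C.card ≤ 3 := by
    intro C hCS hmd
    by_contra h4
    push_neg at h4
    set k := C.card with hk
    obtain ⟨w, hInj, hwmem, hrange⟩ :
        ∃ w : Fin k → EuclideanSpace ℝ (Fin n), Function.Injective w ∧ (∀ i, w i ∈ C) ∧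
          Set.range w = (C : Set (EuclideanSpace ℝ (Fin n))) := by
      refine ⟨fun i => ((C.equivFin.symm i : {x // x ∈ C}) : EuclideanSpace ℝ (Fin n)), ?_,
        fun i => (C.equivFin.symm i).2, ?_⟩
      · intro i j hij
        exact C.equivFin.symm.injective (Subtype.ext hij)
      · ext x
        constructor
        · rintro ⟨i, rfl⟩; exact (C.equivFin.symm i).2
        · intro hx; exact ⟨C.equivFin ⟨x, hx⟩, by simp⟩
    refine hcon k (by omega) w (fun i => hCS (hwmem i)) hInj ⟨?_, ?_⟩
    · rw [hrange]
      exact hmd.finrank_span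
    · intro i
      have hci : w i ∈ C := hwmem i
      have hind : SIndep ((C.erase (w i) : Finset _) : Set (EuclideanSpace ℝ (Fin n))) :=
        hmd.2 _ (Finset.erase_ssubset hci)
      set g : {j : Fin k // j ≠ i} → ((C.erase (w i) : Finset _) : Set (EuclideanSpace ℝ (Fin n))) := fun j =>
        ⟨w j.1, by
          have : w j.1 ∈ C.erase (w i) :=
            Finset.mem_erase.mpr ⟨fun h => j.2 (hInj h), hwmem j.1⟩
          exact_mod_cast this⟩ with hg
      have hginj : Function.Injective g := by
        intro a b hab
        have hval : w a.1 = w b.1 := congrArg Subtype.val hab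
        exact Subtype.ext (hInj hval)
      exact hind.comp g hginj
  -- construct the plane W
  obtain ⟨W, hWrank, hWs₀, hWSW, hK2⟩ :
      ∃ W : Submodule ℝ (EuclideanSpace ℝ (Fin n)), finrank ℝ W ≤ 2 ∧ s₀ ∈ W ∧
        W ≤ span ℝ (S ∩ (W : Set (EuclideanSpace ℝ (Fin n)))) ∧
        ∀ M : Finset (EuclideanSpace ℝ (Fin n)), (M : Set (EuclideanSpace ℝ (Fin n))) ⊆ S → MinDep M →
          ∀ p : EuclideanSpace ℝ (Fin n), p ≠ 0 → p ∈ span ℝ (M : Set (EuclideanSpace ℝ (Fin n))) → p ∈ W →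
            span ℝ (M : Set (EuclideanSpace ℝ (Fin n))) ≤ W := by
    by_cases h2 : ∃ M₀ : Finset (EuclideanSpace ℝ (Fin n)), (M₀ : Set (EuclideanSpace ℝ (Fin n))) ⊆ S ∧ MinDep M₀ ∧
        s₀ ∈ span ℝ (M₀ : Set (EuclideanSpace ℝ (Fin n))) ∧ 2 ≤ finrank ℝ (span ℝ (M₀ : Set (EuclideanSpace ℝ (Fin n))))
    · obtain ⟨M₀, hM₀S, hM₀, hs₀M₀, hfr⟩ := h2
      refine ⟨span ℝ (M₀ : Set (EuclideanSpace ℝ (Fin n))), ?_, hs₀M₀, ?_, ?_⟩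
      · rw [hM₀.finrank_span]
        have := spade M₀ hM₀S hM₀
        omega
      · refine span_le.mpr fun x hx => subset_span ⟨hM₀S hx, subset_span hx⟩
      · intro M hMS hMD p hp hpM hpW
        have hglue := glue S spade hMS hM₀S hMD hM₀ hp hpM hpW
        have hle : span ℝ (M₀ : Set (EuclideanSpace ℝ (Fin n))) ≤ span ℝ (M : Set (EuclideanSpace ℝ (Fin n))) ⊔ span ℝ (M₀ : Set (EuclideanSpace ℝ (Fin n))) :=
          le_sup_right
        have heq := Submodule.eq_of_le_of_finrank_le hle (by omega)
        rw [heq]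
        exact le_sup_left
    · push_neg at h2
      refine ⟨span ℝ ({s₀} : Set (EuclideanSpace ℝ (Fin n))), ?_, mem_span_singleton_self s₀, ?_, ?_⟩
      · rw [finrank_span_singleton hs₀ne]; omega
      · exact (span_singleton_le_iff_mem _ _).mpr
          (subset_span ⟨hs₀S, mem_span_singleton_self s₀⟩)
      · intro M hMS hMD p hp hpM hpW
        obtain ⟨c, hc⟩ := mem_span_singleton.mp hpW
        have hcne : c ≠ 0 := by rintro rfl; rw [← hc] at hp; simp at hp
        have hs₀M : s₀ ∈ span ℝ (M : Set (EuclideanSpace ℝ (Fin n))) := by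
          have : s₀ = c⁻¹ • p := by rw [← hc, smul_smul, inv_mul_cancel₀ hcne, one_smul]
          rw [this]
          exact Submodule.smul_mem _ _ hpM
        have hfr := h2 M hMS hMD hs₀M
        have heq := Submodule.eq_of_le_of_finrank_le
          ((span_singleton_le_iff_mem _ _).mpr hs₀M)
          (by rw [finrank_span_singleton hs₀ne]; omega)
        exact le_of_eq heq.symm
  have hclosed : ∀ M : Finset (EuclideanSpace ℝ (Fin n)),
      (M : Set (EuclideanSpace ℝ (Fin n))) ⊆ S → MinDep M →
      ∀ x ∈ M, x ∈ W → (M : Set (EuclideanSpace ℝ (Fin n))) ⊆ (W : Set (EuclideanSpace ℝ (Fin n))) := by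
    intro M hMS hMD x hxM hxW
    have hle : span ℝ (M : Set (EuclideanSpace ℝ (Fin n))) ≤ W :=
      hK2 M hMS hMD x (hSne0 x (hMS hxM)) (subset_span hxM) hxW
    exact fun y hy => hle (subset_span hy)
  obtain ⟨x₂, hx₂S, hx₂W⟩ : ∃ x₂ ∈ S, x₂ ∉ (W : Set (EuclideanSpace ℝ (Fin n))) := by
    by_contra h
    push_neg at h
    have htop : (⊤ : Submodule ℝ (EuclideanSpace ℝ (Fin n))) ≤ W := by
      rw [← hSspan]; exact span_le.mpr h
    have h1 := Submodule.finrank_mono htop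
    rw [finrank_top, hfinrank] at h1
    omega
  have hWeq : span ℝ (S ∩ (W : Set (EuclideanSpace ℝ (Fin n)))) = W :=
    le_antisymm (span_le.mpr fun x hx => hx.2) hWSW
  obtain ⟨B₁, hB₁sub, hB₁span, hB₁ind⟩ := exists_linearIndependent ℝ (S ∩ (W : Set (EuclideanSpace ℝ (Fin n))))
  obtain ⟨B₂, hB₂sub, hB₂span, hB₂ind⟩ := exists_linearIndependent ℝ (S \ (W : Set (EuclideanSpace ℝ (Fin n))))
  have hB₁fin : B₁.Finite := hB₁ind.setFinite
  have hB₂fin : B₂.Finite := hB₂ind.setFinite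
  have hUnion : SIndep (B₁ ∪ B₂) := by
    by_contra hdep
    set F : Finset (EuclideanSpace ℝ (Fin n)) := hB₁fin.toFinset ∪ hB₂fin.toFinset with hF
    have hFcoe : (F : Set (EuclideanSpace ℝ (Fin n))) = B₁ ∪ B₂ := by simp [hF]
    obtain ⟨M'', hM''F, hmd⟩ := exists_minDep F (by rw [hFcoe]; exact hdep)
    have hM''sub : (M'' : Set (EuclideanSpace ℝ (Fin n))) ⊆ B₁ ∪ B₂ := by
      rw [← hFcoe]; exact_mod_cast hM''F
    have hM''S : (M'' : Set (EuclideanSpace ℝ (Fin n))) ⊆ S := by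
      intro x hx
      rcases hM''sub hx with h | h
      · exact (hB₁sub h).1
      · exact (hB₂sub h).1
    by_cases hmeet : ∃ x ∈ M'', x ∈ W
    · obtain ⟨x, hxM, hxW⟩ := hmeet
      have hMW := hclosed M'' hM''S hmd x hxM hxW
      have hsub : (M'' : Set (EuclideanSpace ℝ (Fin n))) ⊆ B₁ := by
        intro y hy
        rcases hM''sub hy with h | h
        · exact h
        · exact absurd (hMW hy) (hB₂sub h).2
      exact hmd.1 (sindep_mono hB₁ind hsub)
    · push_neg at hmeet
      have hsub : (M'' : Set (EuclideanSpace ℝ (Fin n))) ⊆ B₂ := by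
        intro y hy
        rcases hM''sub hy with h | h
        · exact absurd (hB₁sub h).2 (hmeet y (by exact_mod_cast hy))
        · exact h
      exact hmd.1 (sindep_mono hB₂ind hsub)
  have hdisj : Disjoint W (span ℝ (S \ (W : Set (EuclideanSpace ℝ (Fin n))))) := by
    have hidx : Disjoint {x : ↥(B₁ ∪ B₂) | (x : EuclideanSpace ℝ (Fin n)) ∈ B₁}
        {x : ↥(B₁ ∪ B₂) | (x : EuclideanSpace ℝ (Fin n)) ∈ B₂} := by
      rw [Set.disjoint_left]
      intro x hx1 hx2
      exact (hB₂sub hx2).2 (hB₁sub hx1).2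
    have him := hUnion.disjoint_span_image hidx
    have h1 : Subtype.val '' {x : ↥(B₁ ∪ B₂) | (x : EuclideanSpace ℝ (Fin n)) ∈ B₁} = B₁ := by
      ext y
      constructor
      · rintro ⟨x, hx, rfl⟩; exact hx
      · intro hy; exact ⟨⟨y, Or.inl hy⟩, hy, rfl⟩
    have h2 : Subtype.val '' {x : ↥(B₁ ∪ B₂) | (x : EuclideanSpace ℝ (Fin n)) ∈ B₂} = B₂ := by
      ext y
      constructor
      · rintro ⟨x, hx, rfl⟩; exact hx
      · intro hy; exact ⟨⟨y, Or.inr hy⟩, hy, rfl⟩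
    rw [h1, h2, hB₁span, hB₂span, hWeq] at him
    exact him
  have hco : W ⊔ span ℝ (S \ (W : Set (EuclideanSpace ℝ (Fin n)))) = ⊤ := by
    have h' : span ℝ (S ∩ (W : Set (EuclideanSpace ℝ (Fin n)))) ⊔
        span ℝ (S \ (W : Set (EuclideanSpace ℝ (Fin n)))) = ⊤ := by
      rw [← span_union, Set.inter_union_diff, hSspan]
    rwa [hWeq] at h'
  refine hirr ⟨W, span ℝ (S \ (W : Set (EuclideanSpace ℝ (Fin n)))), ?_, ?_, ⟨hdisj, codisjoint_iff.mpr hco⟩, ?_⟩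
  · exact Submodule.ne_bot_iff _ |>.mpr ⟨s₀, hWs₀, hs₀ne⟩
  · exact Submodule.ne_bot_iff _ |>.mpr ⟨x₂, subset_span ⟨hx₂S, hx₂W⟩, hSne0 x₂ hx₂S⟩
  · intro x hxΛ hxn
    by_cases hxW : x ∈ W
    · exact Or.inl hxW
    · exact Or.inr (subset_span ⟨⟨hxΛ, hxn⟩, hxW⟩)
end

section
/- Let Λ ⊆ ℝⁿ be a prime lattice of rank n, normalized so that its shortest nonzero vectors have norm 1, and let α₁, …, αₙ ∈ Ξ(Λ) be linearly independent (hence, by primality, a ℤ-generating set of Λ). Then every ξ ∈ Ξ(Λ) can be written as ξ = a₁α₁ + ⋯ + aₙαₙ with every coefficient aᵢ ∈ {0, 1, −1}. -/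
/-- A lattice `Λ ⊆ ℝⁿ` (normalized so that its shortest nonzero vectors have norm `1`)
is prime if every `n` linearly independent vectors of minimal norm generate `Λ` over `ℤ`. -/
def IsPrimeLattice {n : ℕ} (Λ : Submodule ℤ (EuclideanSpace ℝ (Fin n))) : Prop :=
  ∀ ξ : Fin n → EuclideanSpace ℝ (Fin n),
    (∀ i, ξ i ∈ Λ ∧ ‖ξ i‖ = 1) → LinearIndependent ℝ ξ →
    Submodule.span ℤ (Set.range ξ) = Λ

lemma aux_sum_update {V : Type*} [AddCommGroup V] [Module ℝ V] {n : ℕ}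
    (α : Fin n → V) (j : Fin n) (ξ : V) (f : Fin n → ℝ) :
    ∑ i, f i • Function.update α j ξ i
      = ∑ i, f i • α i + f j • (ξ - α j) := by
  have h : ∀ i, f i • Function.update α j ξ i
      = f i • α i + (if i = j then f j • (ξ - α j) else 0) := by
    intro i; rcases eq_or_ne i j with rfl | h <;> simp [smul_sub, *]
  simp [h, Finset.sum_add_distrib]

lemma aux_expand {V : Type*} [AddCommGroup V] [Module ℝ V] {n : ℕ}
    (α : Fin n → V) (j : Fin n) (ξ : V) (a : Fin n → ℝ)
    (hξ : ξ = ∑ i, a i • α i) (f : Fin n → ℝ) :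
    ∑ i, f i • Function.update α j ξ i
      = ∑ i, (f i + f j * a i - (if i = j then f j else 0)) • α i := by
  rw [aux_sum_update, hξ, smul_sub, Finset.smul_sum]
  simp only [add_smul, sub_smul, Finset.sum_add_distrib, Finset.sum_sub_distrib,
    smul_smul, ite_smul, zero_smul, Finset.sum_ite_eq', Finset.mem_univ, if_true]
  abel

lemma aux_coeffs {V : Type*} [AddCommGroup V] [Module ℝ V] {n : ℕ}
    {α : Fin n → V} (hind : LinearIndependent ℝ α) {f g : Fin n → ℝ}
    (h : ∑ i, f i • α i = ∑ i, g i • α i) : ∀ i, f i = g i := by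
  have h0 : ∑ i, (f i - g i) • α i = 0 := by
    simp only [sub_smul, Finset.sum_sub_distrib, h, sub_self]
  intro i
  have := Fintype.linearIndependent_iff.mp hind _ h0 i
  linarith

/-- In a prime lattice `Λ` of rank `n` with shortest nonzero norm `1`, every shortest
vector `ξ` is a `ℤ`-linear combination of any `n` linearly independent shortest vectors
`α₁, …, αₙ` with all coefficients in `{0, 1, −1}`. -/
theorem stmt6 (n : ℕ) (Λ : Submodule ℤ (EuclideanSpace ℝ (Fin n)))
    (hlat : ∃ b : Fin n → EuclideanSpace ℝ (Fin n),
      LinearIndependent ℝ b ∧ Λ = Submodule.span ℤ (Set.range b))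
    (hmin : ∀ x ∈ Λ, x ≠ 0 → 1 ≤ ‖x‖)
    (hprime : IsPrimeLattice Λ)
    (α : Fin n → EuclideanSpace ℝ (Fin n))
    (hα : ∀ i, α i ∈ Λ ∧ ‖α i‖ = 1)
    (hind : LinearIndependent ℝ α)
    (ξ : EuclideanSpace ℝ (Fin n)) (hξ : ξ ∈ Λ) (hξ1 : ‖ξ‖ = 1) :
    ∃ a : Fin n → ℤ, (∀ i, a i = 0 ∨ a i = 1 ∨ a i = -1) ∧ ξ = ∑ i, a i • α i := by
  have hspan := hprime α hα hind
  have hξmem : ξ ∈ Submodule.span ℤ (Set.range α) := hspan ▸ hξ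
  obtain ⟨a, ha⟩ := (Submodule.mem_span_range_iff_exists_fun ℤ).mp hξmem
  refine ⟨a, fun j => ?_, ha.symm⟩
  by_cases h0 : a j = 0
  · exact Or.inl h0
  right
  -- real-coefficient expression of ξ
  have hξr : ξ = ∑ i, ((a i : ℝ)) • α i := by
    rw [← ha]
    exact Finset.sum_congr rfl fun i _ => (Int.cast_smul_eq_zsmul ℝ (a i) (α i)).symm
  -- the updated family
  set β := Function.update α j ξ with hβ
  have hβmem : ∀ i, β i ∈ Λ ∧ ‖β i‖ = 1 := by
    intro i; rcases eq_or_ne i j with rfl | h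
    · simpa [hβ] using ⟨hξ, hξ1⟩
    · simpa [hβ, Function.update_of_ne h] using hα i
  have hβind : LinearIndependent ℝ β := by
    rw [Fintype.linearIndependent_iff]
    intro g hg
    have hg' : ∑ i, (g i + g j * (a i : ℝ) - (if i = j then g j else 0)) • α i
        = ∑ i, (0 : ℝ) • α i := by
      rw [← aux_expand α j ξ _ hξr g, ← hβ, hg]
      simp
    have hco := aux_coeffs hind hg'
    have hgj : g j = 0 := by
      have := hco j
      simp at this
      rcases this with h | h
      · exact h
      · exact absurd (by exact_mod_cast h) h0
    intro i
    have := hco i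
    rcases eq_or_ne i j with rfl | h
    · exact hgj
    · simpa [h, hgj] using this
  have hspanβ := hprime β hβmem hβind
  have hαj : α j ∈ Submodule.span ℤ (Set.range β) := hspanβ ▸ (hα j).1
  obtain ⟨c, hc⟩ := (Submodule.mem_span_range_iff_exists_fun ℤ).mp hαj
  -- real version
  have hcr : ∑ i, ((c i : ℝ)) • β i = α j := by
    rw [← hc]
    exact Finset.sum_congr rfl fun i _ => Int.cast_smul_eq_zsmul ℝ (c i) (β i)
  have hαjr : α j = ∑ i, ((if i = j then (1:ℝ) else 0)) • α i := by
    simp [Finset.sum_ite_eq']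
  have key : ∑ i, ((c i : ℝ) + (c j : ℝ) * (a i : ℝ) - (if i = j then (c j : ℝ) else 0)) • α i
      = ∑ i, ((if i = j then (1:ℝ) else 0)) • α i := by
    rw [← aux_expand α j ξ _ hξr (fun i => (c i : ℝ)), ← hβ, hcr, ← hαjr]
  have hcoef := aux_coeffs hind key j
  simp at hcoef
  -- hcoef : (c j : ℝ) * (a j : ℝ) = 1
  have hz : c j * a j = 1 := by exact_mod_cast hcoef
  have : a j ∣ 1 := Dvd.intro_left _ hz
  exact (Int.isUnit_iff.mp (isUnit_of_dvd_one this))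
end

section
/- Let n ≤ 4 and let Λ ⊆ ℝⁿ be a lattice of rank n, normalized so that its shortest nonzero vectors have norm 1, and suppose Ξ(Λ) spans ℝⁿ. Then either Λ is prime, or n = 4 and there exist four pairwise orthogonal vectors e₁, e₂, e₃, e₄ ∈ Ξ(Λ) such that Λ = span_ℤ{e₁, e₂, e₃, (e₁+e₂+e₃+e₄)/2}. -/
open scoped RealInnerProductSpace

/-- If `w, ξ ∈ Λ`, `‖ξ‖ = 1`, `w ∓ ξ ≠ 0`, and every nonzero vector of `Λ` has
norm at least 1, then `2|⟪w,ξ⟫| ≤ ‖w‖²`. -/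
lemma aux_inner_le {n : ℕ} (Λ : Submodule ℤ (EuclideanSpace ℝ (Fin n)))
    (hmin : ∀ x ∈ Λ, x ≠ 0 → 1 ≤ ‖x‖)
    {w ξ : EuclideanSpace ℝ (Fin n)} (hw : w ∈ Λ) (hξ : ξ ∈ Λ) (hξ1 : ‖ξ‖ = 1)
    (h1 : w - ξ ≠ 0) (h2 : w + ξ ≠ 0) :
    2 * |⟪w, ξ⟫| ≤ ‖w‖ ^ 2 := by
  have ha := hmin (w - ξ) (Λ.sub_mem hw hξ) h1
  have hb := hmin (w + ξ) (Λ.add_mem hw hξ) h2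
  have ha2 : (1:ℝ) ≤ ‖w - ξ‖ ^ 2 := by nlinarith [norm_nonneg (w - ξ)]
  have hb2 : (1:ℝ) ≤ ‖w + ξ‖ ^ 2 := by nlinarith [norm_nonneg (w + ξ)]
  rw [norm_sub_sq_real] at ha2
  rw [norm_add_sq_real] at hb2
  rw [hξ1] at ha2 hb2
  rcases abs_cases (⟪w, ξ⟫ : ℝ) with ⟨h, _⟩ | ⟨h, _⟩ <;> rw [h] <;> nlinarith

/-- Reduction: every `w ∈ Λ` is, modulo `span ℤ (range ξ)`, either zero or
(forcing `n = 4`) of the form `∑ (±1/2) • ξ i`. -/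
lemma aux_key {n : ℕ} (hn : n ≤ 4) (Λ : Submodule ℤ (EuclideanSpace ℝ (Fin n)))
    (hmin : ∀ x ∈ Λ, x ≠ 0 → 1 ≤ ‖x‖)
    (ξ : Fin n → EuclideanSpace ℝ (Fin n)) (hξ : ∀ i, ξ i ∈ Λ ∧ ‖ξ i‖ = 1)
    (hli : LinearIndependent ℝ ξ) {w : EuclideanSpace ℝ (Fin n)} (hw : w ∈ Λ) :
    w ∈ Submodule.span ℤ (Set.range ξ) ∨
      (n = 4 ∧ ∃ c : Fin n → ℝ, (∀ i, c i = 1/2 ∨ c i = -1/2) ∧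
        w - ∑ i, c i • ξ i ∈ Submodule.span ℤ (Set.range ξ)) := by
  classical
  have hcard : Fintype.card (Fin n) = Module.finrank ℝ (EuclideanSpace ℝ (Fin n)) := by
    simp [finrank_euclideanSpace_fin]
  -- the case n = 0 : then w is in the span trivially? need Nonempty (Fin n) for basis
  rcases Nat.eq_zero_or_pos n with hn0 | hnpos
  · left
    subst hn0
    have : w = 0 := Subsingleton.elim w 0
    simp [this]
  have : Nonempty (Fin n) := ⟨⟨0, hnpos⟩⟩
  set B := basisOfLinearIndependentOfCardEqFinrank hli hcard with hBdef
  have hB : ∀ i, B i = ξ i := by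
    intro i
    rw [hBdef, coe_basisOfLinearIndependentOfCardEqFinrank]
  set c : Fin n → ℝ := fun i => B.repr w i - round (B.repr w i) with hcdef
  have hc : ∀ i, |c i| ≤ 1/2 := fun i => abs_sub_round _
  set y : EuclideanSpace ℝ (Fin n) := ∑ i, c i • ξ i with hydef
  have hwy : w - y ∈ Submodule.span ℤ (Set.range ξ) := by
    have hw_eq : w = ∑ i, (B.repr w i) • ξ i := by
      conv_lhs => rw [← B.sum_repr w]
      exact Finset.sum_congr rfl fun i _ => by rw [hB]
    have : w - y = ∑ i, (round (B.repr w i) : ℤ) • ξ i := by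
      rw [hydef]
      conv_lhs => rw [hw_eq]
      rw [← Finset.sum_sub_distrib]
      refine Finset.sum_congr rfl fun i _ => ?_
      rw [hcdef, ← Int.cast_smul_eq_zsmul ℝ, ← sub_smul]
      ring_nf
    rw [this]
    exact Submodule.sum_mem _ fun i _ =>
      Submodule.smul_mem _ _ (Submodule.subset_span ⟨i, rfl⟩)
  clear_value c y
  by_cases hy0 : y = 0
  · left
    have := hwy
    rwa [hy0, sub_zero] at this
  right
  -- y is a nonzero lattice vector
  have hspanle : Submodule.span ℤ (Set.range ξ) ≤ Λ := by
    rw [Submodule.span_le]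
    rintro x ⟨i, rfl⟩
    exact (hξ i).1
  have hyΛ : y ∈ Λ := by
    have : y = w - (w - y) := by rw [sub_sub_cancel]
    rw [this]
    exact Λ.sub_mem hw (hspanle hwy)
  -- nonzero linear combinations
  have hnz : ∀ (g : Fin n → ℝ) (i : Fin n), g i ≠ 0 → ∑ j, g j • ξ j ≠ 0 := by
    intro g i hg h
    exact hg (Fintype.linearIndependent_iff.mp hli g h i)
  -- bounds
  have hT1 : (1:ℝ) ≤ ‖y‖ ^ 2 := by
    have := hmin y hyΛ hy0
    nlinarith [norm_nonneg y]
  have hone : ∀ i : Fin n, ξ i = ∑ j, (if j = i then (1:ℝ) else 0) • ξ j := by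
    intro i
    simp
  have ht : ∀ i, 2 * |⟪y, ξ i⟫| ≤ ‖y‖ ^ 2 := by
    intro i
    refine aux_inner_le Λ hmin hyΛ (hξ i).1 (hξ i).2 ?_ ?_
    · have : y - ξ i = ∑ j, (c j - if j = i then 1 else 0) • ξ j := by
        rw [hydef]
        conv_lhs => rw [hone i]
        rw [← Finset.sum_sub_distrib]
        exact Finset.sum_congr rfl fun j _ => (sub_smul _ _ _).symm
      rw [this]
      rcases abs_le.mp (hc i) with ⟨h1, h2⟩
      have hne : c i - (if i = i then (1:ℝ) else 0) ≠ 0 := by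
        rw [if_pos rfl]; intro h; linarith
      exact hnz _ i hne
    · have : y + ξ i = ∑ j, (c j + if j = i then 1 else 0) • ξ j := by
        rw [hydef]
        conv_lhs => rw [hone i]
        rw [← Finset.sum_add_distrib]
        exact Finset.sum_congr rfl fun j _ => (add_smul _ _ _).symm
      rw [this]
      rcases abs_le.mp (hc i) with ⟨h1, h2⟩
      have hne : c i + (if i = i then (1:ℝ) else 0) ≠ 0 := by
        rw [if_pos rfl]; intro h; linarith
      exact hnz _ i hne
  have hTsum : ‖y‖ ^ 2 = ∑ i, c i * ⟪y, ξ i⟫ := by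
    rw [← real_inner_self_eq_norm_sq]
    conv_lhs => rw [hydef, inner_sum]
    refine Finset.sum_congr rfl fun i _ => ?_
    rw [real_inner_smul_right, ← hydef]
  have hterm : ∀ i, c i * ⟪y, ξ i⟫ ≤ ‖y‖ ^ 2 / 4 := by
    intro i
    have h1 := hc i
    have h2 := ht i
    calc c i * ⟪y, ξ i⟫ ≤ |c i * ⟪y, ξ i⟫| := le_abs_self _
    _ = |c i| * |⟪y, ξ i⟫| := abs_mul _ _
    _ ≤ (1/2) * (‖y‖^2/2) := by
        apply mul_le_mul h1 (by linarith) (abs_nonneg _) (by norm_num)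
    _ = ‖y‖ ^ 2 / 4 := by ring
  -- n = 4
  have hn4 : n = 4 := by
    by_contra h
    have hn3 : n ≤ 3 := by omega
    have : ‖y‖ ^ 2 ≤ ∑ _i : Fin n, ‖y‖ ^ 2 / 4 := by
      conv_lhs => rw [hTsum]
      exact Finset.sum_le_sum fun i _ => hterm i
    rw [Finset.sum_const, Finset.card_univ, Fintype.card_fin, nsmul_eq_mul] at this
    have hcast : (n : ℝ) ≤ 3 := by exact_mod_cast hn3
    nlinarith
  subst hn4
  refine ⟨rfl, c, ?_, by rw [← hydef]; exact hwy⟩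
  -- each coefficient is ±1/2
  have heach : ∀ i, c i * ⟪y, ξ i⟫ = ‖y‖ ^ 2 / 4 := by
    have hsum0 : ∑ i, (‖y‖ ^ 2 / 4 - c i * ⟪y, ξ i⟫) = 0 := by
      rw [Finset.sum_sub_distrib, Finset.sum_const, Finset.card_univ, Fintype.card_fin,
        nsmul_eq_mul, ← hTsum]
      ring
    intro i
    have := (Finset.sum_eq_zero_iff_of_nonneg (fun i _ => by linarith [hterm i])).mp hsum0 i
      (Finset.mem_univ i)
    linarith
  intro i
  have h1 := hc i
  have h2 := ht i
  have h3 := heach i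
  have habs : |c i| = 1/2 := by
    have hub : ‖y‖^2/4 ≤ |c i| * (‖y‖^2/2) := by
      calc ‖y‖^2/4 = c i * ⟪y, ξ i⟫ := h3.symm
      _ ≤ |c i * ⟪y, ξ i⟫| := le_abs_self _
      _ = |c i| * |⟪y, ξ i⟫| := abs_mul _ _
      _ ≤ |c i| * (‖y‖^2/2) := by
          apply mul_le_mul_of_nonneg_left (by linarith) (abs_nonneg _)
    nlinarith [abs_nonneg (c i)]
  rcases abs_eq (by norm_num : (0:ℝ) ≤ 1/2) |>.mp habs with h | h
  · exact Or.inl h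
  · exact Or.inr (by linarith)




/-- For `n ≤ 4`, a lattice `Λ ⊆ ℝⁿ` of rank `n`, normalized so that its shortest
nonzero vectors have norm `1` and such that the set of shortest vectors spans `ℝⁿ`,
is either prime, or `n = 4` and `Λ` is generated over `ℤ` by
`e₁, e₂, e₃, (e₁+e₂+e₃+e₄)/2` for four pairwise orthogonal shortest vectors `eᵢ`. -/
theorem stmt7 (n : ℕ) (hn : n ≤ 4) (Λ : Submodule ℤ (EuclideanSpace ℝ (Fin n)))
    (hlat : ∃ b : Fin n → EuclideanSpace ℝ (Fin n),
      LinearIndependent ℝ b ∧ Λ = Submodule.span ℤ (Set.range b))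
    (hmin : ∀ x ∈ Λ, x ≠ 0 → 1 ≤ ‖x‖)
    (hspan : Submodule.span ℝ {x : EuclideanSpace ℝ (Fin n) | x ∈ Λ ∧ ‖x‖ = 1} = ⊤) :
    IsPrimeLattice Λ ∨
      (n = 4 ∧ ∃ e : Fin 4 → EuclideanSpace ℝ (Fin n),
        (∀ i, e i ∈ Λ ∧ ‖e i‖ = 1) ∧
        (∀ i j, i ≠ j → (inner ℝ (e i) (e j) : ℝ) = 0) ∧
        Λ = Submodule.span ℤ
          {e 0, e 1, e 2, (2⁻¹ : ℝ) • (e 0 + e 1 + e 2 + e 3)}) := by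
  classical
  by_cases hP : IsPrimeLattice Λ
  · exact Or.inl hP
  right
  unfold IsPrimeLattice at hP
  push_neg at hP
  obtain ⟨ξ, hξ, hli, hne⟩ := hP
  have hspanle : Submodule.span ℤ (Set.range ξ) ≤ Λ := by
    rw [Submodule.span_le]; rintro x ⟨i, rfl⟩; exact (hξ i).1
  obtain ⟨z, hzΛ, hzns⟩ := SetLike.exists_of_lt (lt_of_le_of_ne hspanle hne)
  rcases aux_key hn Λ hmin ξ hξ hli hzΛ with h | ⟨hn4, c, hc, hmem⟩
  · exact absurd h hzns
  subst hn4
  -- common setup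
  have hnz : ∀ (g : Fin 4 → ℝ) (i : Fin 4), g i ≠ 0 → ∑ j, g j • ξ j ≠ 0 := by
    intro g i hg h
    exact hg (Fintype.linearIndependent_iff.mp hli g h i)
  obtain ⟨y₀, hy₀def⟩ : ∃ v, v = (2⁻¹ : ℝ) • (ξ 0 + ξ 1 + ξ 2 + ξ 3) := ⟨_, rfl⟩
  have hy₀sum : y₀ = ∑ j, (2⁻¹:ℝ) • ξ j := by
    rw [hy₀def, Fin.sum_univ_four, smul_add, smul_add, smul_add]
  have hone : ∀ i : Fin 4, ξ i = ∑ j, (if j = i then (1:ℝ) else 0) • ξ j := by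
    intro i; simp
  have hex : ∀ k : Fin 4, ∃ j, j ≠ k := by decide
  -- y₀ - ∑ c' ξ is in any submodule containing the ξ's, for half-integer c'
  have hdiff : ∀ (c' : Fin 4 → ℝ), (∀ i, c' i = 1/2 ∨ c' i = -1/2) →
      ∀ (S' : Submodule ℤ (EuclideanSpace ℝ (Fin 4))), (∀ k, ξ k ∈ S') →
      y₀ - ∑ i, c' i • ξ i ∈ S' := by
    intro c' hc' S' hξS'
    have : y₀ - ∑ i, c' i • ξ i = ∑ i, ((2⁻¹ : ℝ) - c' i) • ξ i := by
      rw [hy₀sum, ← Finset.sum_sub_distrib]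
      exact Finset.sum_congr rfl fun i _ => (sub_smul _ _ _).symm
    rw [this]
    refine Submodule.sum_mem _ fun i _ => ?_
    rcases hc' i with h | h
    · rw [h]; norm_num
    · rw [h]
      have : ((2⁻¹ : ℝ) - (-1/2)) = 1 := by norm_num
      rw [this, one_smul]
      exact hξS' i
  -- y₀ is in Λ
  have hsumΛ : ∑ i, c i • ξ i ∈ Λ := by
    have h1 := hspanle hmem
    have h2 := Λ.sub_mem hzΛ h1
    rwa [sub_sub_cancel] at h2
  have hy₀Λ : y₀ ∈ Λ := by
    have h1 := hdiff c hc Λ (fun k => (hξ k).1)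
    have h2 := Λ.add_mem h1 hsumΛ
    rwa [sub_add_cancel] at h2
  -- inner product bounds for y₀
  have hy₀ne : ∀ k : Fin 4, (y₀ - ξ k ≠ 0) ∧ (y₀ + ξ k ≠ 0) := by
    intro k
    obtain ⟨j₀, hj₀⟩ := hex k
    constructor
    · have : y₀ - ξ k = ∑ j, ((2⁻¹:ℝ) - if j = k then 1 else 0) • ξ j := by
        rw [hy₀sum]
        conv_lhs => rw [hone k]
        rw [← Finset.sum_sub_distrib]
        exact Finset.sum_congr rfl fun j _ => (sub_smul _ _ _).symm
      rw [this]
      refine hnz _ j₀ ?_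
      have : ((2⁻¹:ℝ) - if j₀ = k then 1 else 0) = 2⁻¹ := by rw [if_neg hj₀]; ring
      rw [this]; norm_num
    · have : y₀ + ξ k = ∑ j, ((2⁻¹:ℝ) + if j = k then 1 else 0) • ξ j := by
        rw [hy₀sum]
        conv_lhs => rw [hone k]
        rw [← Finset.sum_add_distrib]
        exact Finset.sum_congr rfl fun j _ => (add_smul _ _ _).symm
      rw [this]
      refine hnz _ j₀ ?_
      have : ((2⁻¹:ℝ) + if j₀ = k then 1 else 0) = 2⁻¹ := by rw [if_neg hj₀]; ring
      rw [this]; norm_num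
  have ht : ∀ k, 2 * |⟪y₀, ξ k⟫| ≤ ‖y₀‖ ^ 2 := fun k =>
    aux_inner_le Λ hmin hy₀Λ (hξ k).1 (hξ k).2 (hy₀ne k).1 (hy₀ne k).2
  have hTsum : ‖y₀‖ ^ 2 = ∑ k, 2⁻¹ * ⟪y₀, ξ k⟫ := by
    rw [← real_inner_self_eq_norm_sq]
    conv_lhs => rw [hy₀sum, inner_sum]
    refine Finset.sum_congr rfl fun k _ => ?_
    rw [real_inner_smul_right, ← hy₀sum]
  have htval : ∀ k, ⟪y₀, ξ k⟫ = ‖y₀‖ ^ 2 / 2 := by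
    have hb : ∀ k, ⟪y₀, ξ k⟫ ≤ ‖y₀‖^2/2 := by
      intro k
      have h1 := ht k
      have h2 := le_abs_self (⟪y₀, ξ k⟫ : ℝ)
      linarith
    have hsum0 : ∑ k, (‖y₀‖^2/2 - ⟪y₀, ξ k⟫) * 2⁻¹ = 0 := by
      rw [← Finset.sum_mul, Finset.sum_sub_distrib, Finset.sum_const, Finset.card_univ]
      have : ∑ k, (⟪y₀, ξ k⟫ : ℝ) = 2 * ‖y₀‖^2 := by
        rw [hTsum, ← Finset.mul_sum]; ring
      rw [this]
      simp
      ring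
    intro k
    have := (Finset.sum_eq_zero_iff_of_nonneg (fun k _ => by
      have := hb k; linarith)).mp hsum0 k (Finset.mem_univ k)
    have h2 : (0:ℝ) < 2⁻¹ := by norm_num
    nlinarith [hb k]
  -- orthogonality
  have horth : ∀ i j : Fin 4, i ≠ j → (⟪ξ i, ξ j⟫ : ℝ) = 0 := by
    intro i j hij
    obtain ⟨z', hz'def⟩ : ∃ v, v = ξ i - y₀ := ⟨_, rfl⟩
    have hz'sum : z' = ∑ k, ((if k = i then (1:ℝ) else 0) - 2⁻¹) • ξ k := by
      rw [hz'def, hy₀sum]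
      conv_lhs => rw [hone i]
      rw [← Finset.sum_sub_distrib]
      exact Finset.sum_congr rfl fun k _ => (sub_smul _ _ _).symm
    have hz'Λ : z' ∈ Λ := by rw [hz'def]; exact Λ.sub_mem (hξ i).1 hy₀Λ
    have hz'norm : ‖z'‖ ^ 2 = 1 := by
      rw [hz'def, norm_sub_sq_real, real_inner_comm, htval i, (hξ i).2]
      ring
    have hz'ne : ∀ k, (z' - ξ k ≠ 0) ∧ (z' + ξ k ≠ 0) := by
      intro k
      constructor
      · have hrep : z' - ξ k
            = ∑ l, (((if l = i then (1:ℝ) else 0) - 2⁻¹) - (if l = k then 1 else 0)) • ξ l := by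
          rw [hz'sum]
          conv_lhs => rw [hone k]
          rw [← Finset.sum_sub_distrib]
          exact Finset.sum_congr rfl fun l _ => (sub_smul _ _ _).symm
        rw [hrep]
        refine hnz _ i ?_
        by_cases h : i = k <;> simp [h] <;> norm_num
      · have hrep : z' + ξ k
            = ∑ l, (((if l = i then (1:ℝ) else 0) - 2⁻¹) + (if l = k then 1 else 0)) • ξ l := by
          rw [hz'sum]
          conv_lhs => rw [hone k]
          rw [← Finset.sum_add_distrib]
          exact Finset.sum_congr rfl fun l _ => (add_smul _ _ _).symm
        rw [hrep]
        refine hnz _ i ?_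
        by_cases h : i = k <;> simp [h] <;> norm_num
    have hu : ∀ k, 2 * |⟪z', ξ k⟫| ≤ 1 := by
      intro k
      have := aux_inner_le Λ hmin hz'Λ (hξ k).1 (hξ k).2 (hz'ne k).1 (hz'ne k).2
      rwa [hz'norm] at this
    have hinner_y₀ : (⟪z', y₀⟫ : ℝ) = ∑ k, 2⁻¹ * ⟪z', ξ k⟫ := by
      conv_lhs => rw [hy₀sum, inner_sum]
      exact Finset.sum_congr rfl fun k _ => real_inner_smul_right _ _ _
    have hids : (1:ℝ) = ⟪z', ξ i⟫ - 2⁻¹ * ∑ k, (⟪z', ξ k⟫ : ℝ) := by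
      have h1 : (⟪z', z'⟫ : ℝ) = 1 := by rw [real_inner_self_eq_norm_sq, hz'norm]
      have h2 : (⟪z', z'⟫ : ℝ) = ⟪z', ξ i⟫ - ⟪z', y₀⟫ := by
        nth_rewrite 2 [hz'def]
        rw [inner_sub_right]
      rw [hinner_y₀, ← Finset.mul_sum] at h2
      linarith
    have hvsum : ∑ k, (if k = i then (⟪z', ξ k⟫:ℝ) else -⟪z', ξ k⟫) = 2 := by
      have hrw : ∀ k, (if k = i then (⟪z', ξ k⟫:ℝ) else -⟪z', ξ k⟫)
          = 2*(if k = i then (⟪z', ξ k⟫:ℝ) else 0) - ⟪z', ξ k⟫ := by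
        intro k; by_cases h : k = i <;> simp [h] <;> ring
      rw [Finset.sum_congr rfl fun k _ => hrw k, Finset.sum_sub_distrib, ← Finset.mul_sum,
        Finset.sum_ite_eq']
      simp only [Finset.mem_univ, if_true]
      linarith [hids]
    have hv0 : ∑ k, ((1:ℝ)/2 - (if k = i then (⟪z', ξ k⟫:ℝ) else -⟪z', ξ k⟫)) = 0 := by
      rw [Finset.sum_sub_distrib, hvsum, Finset.sum_const, Finset.card_univ]
      norm_num
    have hvall := (Finset.sum_eq_zero_iff_of_nonneg (fun k _ => by
      have h1 := hu k
      have h2 := le_abs_self (⟪z', ξ k⟫ : ℝ)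
      have h3 := neg_abs_le (⟪z', ξ k⟫ : ℝ)
      rcases eq_or_ne k i with h | h
      · rw [if_pos h]; linarith
      · rw [if_neg h]; linarith)).mp hv0
    have hui : (⟪z', ξ i⟫ : ℝ) = 1/2 := by
      have := hvall i (Finset.mem_univ i)
      rw [if_pos rfl] at this
      linarith
    have huj : (⟪z', ξ j⟫ : ℝ) = -(1/2) := by
      have := hvall j (Finset.mem_univ j)
      rw [if_neg (Ne.symm hij)] at this
      linarith
    have hT1 : ‖y₀‖^2 = 1 := by
      have h1 : (⟪z', ξ i⟫ : ℝ) = 1 - ‖y₀‖^2/2 := by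
        rw [hz'def, inner_sub_left, htval i]
        have : (⟪ξ i, ξ i⟫ : ℝ) = 1 := by
          rw [real_inner_self_eq_norm_sq, (hξ i).2]; norm_num
        rw [this]
      linarith only [h1, hui]
    have h1 : (⟪z', ξ j⟫ : ℝ) = ⟪ξ i, ξ j⟫ - ‖y₀‖^2/2 := by
      rw [hz'def, inner_sub_left, htval j]
    rw [hT1] at h1
    linarith only [h1, huj]
  -- span equality
  refine ⟨rfl, ξ, hξ, horth, ?_⟩
  rw [show ((2⁻¹:ℝ) • (ξ 0 + ξ 1 + ξ 2 + ξ 3)) = y₀ from hy₀def.symm]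
  have hy₀S : y₀ ∈ Submodule.span ℤ ({ξ 0, ξ 1, ξ 2, y₀} : Set (EuclideanSpace ℝ (Fin 4))) :=
    Submodule.subset_span (by simp)
  have hξS : ∀ k, ξ k ∈ Submodule.span ℤ ({ξ 0, ξ 1, ξ 2, y₀} : Set (EuclideanSpace ℝ (Fin 4))) := by
    have h0 : ξ 0 ∈ Submodule.span ℤ ({ξ 0, ξ 1, ξ 2, y₀} : Set (EuclideanSpace ℝ (Fin 4))) :=
      Submodule.subset_span (by simp)
    have h1 : ξ 1 ∈ Submodule.span ℤ ({ξ 0, ξ 1, ξ 2, y₀} : Set (EuclideanSpace ℝ (Fin 4))) :=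
      Submodule.subset_span (by simp)
    have h2 : ξ 2 ∈ Submodule.span ℤ ({ξ 0, ξ 1, ξ 2, y₀} : Set (EuclideanSpace ℝ (Fin 4))) :=
      Submodule.subset_span (by simp)
    have h3 : ξ 3 ∈ Submodule.span ℤ ({ξ 0, ξ 1, ξ 2, y₀} : Set (EuclideanSpace ℝ (Fin 4))) := by
      have hrw : ξ 3 = ((2:ℝ) • y₀ - ξ 0) - ξ 1 - ξ 2 := by
        rw [hy₀def]
        module
      rw [hrw, two_smul]
      exact Submodule.sub_mem _ (Submodule.sub_mem _ (Submodule.sub_mem _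
        (Submodule.add_mem _ hy₀S hy₀S) h0) h1) h2
    intro k
    fin_cases k
    · exact h0
    · exact h1
    · exact h2
    · exact h3
  have hrangeS : Submodule.span ℤ (Set.range ξ)
      ≤ Submodule.span ℤ ({ξ 0, ξ 1, ξ 2, y₀} : Set (EuclideanSpace ℝ (Fin 4))) := by
    rw [Submodule.span_le]
    rintro x ⟨k, rfl⟩
    exact hξS k
  apply le_antisymm
  · intro w hw
    rcases aux_key hn Λ hmin ξ hξ hli hw with h | ⟨-, c', hc', hmem'⟩
    · exact hrangeS h
    · have ha : w - ∑ i, c' i • ξ i ∈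
          Submodule.span ℤ ({ξ 0, ξ 1, ξ 2, y₀} : Set (EuclideanSpace ℝ (Fin 4))) :=
        hrangeS hmem'
      have hb : ∑ i, c' i • ξ i ∈
          Submodule.span ℤ ({ξ 0, ξ 1, ξ 2, y₀} : Set (EuclideanSpace ℝ (Fin 4))) := by
        have h1 := hdiff c' hc' _ hξS
        have h2 := Submodule.sub_mem _ hy₀S h1
        rwa [sub_sub_cancel] at h2
      have := Submodule.add_mem _ ha hb
      rwa [sub_add_cancel] at this
  · rw [Submodule.span_le]
    rintro x (rfl | rfl | rfl | rfl)
    · exact (hξ 0).1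
    · exact (hξ 1).1
    · exact (hξ 2).1
    · exact hy₀Λ
end

section
/- Let Y be a finite subset of ℤⁿ containing the standard basis vectors e₁, …, eₙ, such that any n linearly independent elements of Y form a ℤ-basis of ℤⁿ. Then every square minor of every matrix whose rows are elements of Y lies in {0, 1, −1}; that is, for any elements A_{j₁}, …, A_{j_k} of Y and any k column indices i₁ < ⋯ < i_k, the determinant of the k×k matrix of the corresponding entries equals 0, 1, or −1. -/
/-- For a finite set `Y ⊆ ℤⁿ` containing the standard basis vectors, such that any `n`
linearly independent elements of `Y` form a `ℤ`-basis of `ℤⁿ` (i.e. have determinant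
`±1` as rows of a matrix), every square minor of any matrix whose rows are elements of
`Y` lies in `{0, 1, −1}`. -/
theorem stmt8 (n : ℕ) (Y : Finset (Fin n → ℤ))
    (hbasis : ∀ i : Fin n, Pi.single i 1 ∈ Y)
    (hprime : ∀ B : Fin n → (Fin n → ℤ), (∀ i, B i ∈ Y) → LinearIndependent ℤ B →
      (Matrix.of B).det = 1 ∨ (Matrix.of B).det = -1)
    (k : ℕ) (A : Fin k → (Fin n → ℤ)) (hA : ∀ j, A j ∈ Y)
    (cols : Fin k → Fin n) (hcols : StrictMono cols) :
    (Matrix.of fun j l : Fin k => A j (cols l)).det = 0 ∨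
    (Matrix.of fun j l : Fin k => A j (cols l)).det = 1 ∨
    (Matrix.of fun j l : Fin k => A j (cols l)).det = -1 := by
  classical
  set S : Finset (Fin n) := Finset.univ.image cols with hS
  let g : Fin k ⊕ {x : Fin n // x ∉ S} → Fin n := Sum.elim cols Subtype.val
  have hmem : ∀ j : Fin k, cols j ∈ S := fun j =>
    Finset.mem_image.mpr ⟨j, Finset.mem_univ j, rfl⟩
  have hginj : Function.Injective g := by
    rintro (a | a) (b | b) h
    · exact congrArg Sum.inl (hcols.injective h)
    · simp only [g, Sum.elim_inl, Sum.elim_inr] at h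
      exact absurd (h ▸ hmem a) b.2
    · simp only [g, Sum.elim_inl, Sum.elim_inr] at h
      exact absurd (h.symm ▸ hmem b) a.2
    · exact congrArg Sum.inr (Subtype.ext h)
  have hgsurj : Function.Surjective g := by
    intro l
    by_cases hl : l ∈ S
    · obtain ⟨j, -, hj⟩ := Finset.mem_image.mp hl
      exact ⟨Sum.inl j, hj⟩
    · exact ⟨Sum.inr ⟨l, hl⟩, rfl⟩
  let e : (Fin k ⊕ {x : Fin n // x ∉ S}) ≃ Fin n := Equiv.ofBijective g ⟨hginj, hgsurj⟩
  have he : ∀ x, e x = g x := fun x => rfl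
  let M : Matrix (Fin k ⊕ {x : Fin n // x ∉ S}) (Fin k ⊕ {x : Fin n // x ∉ S}) ℤ :=
    Matrix.fromBlocks (Matrix.of fun j l : Fin k => A j (cols l))
      (Matrix.of fun j (x : {x : Fin n // x ∉ S}) => A j x.1) 0 1
  let B : Fin n → Fin n → ℤ := Matrix.reindex e e M
  have hBrow : ∀ i, B i ∈ Y := by
    intro i
    obtain ⟨x, rfl⟩ := e.surjective i
    have hrow : ∀ x l, B (e x) l = M x (e.symm l) := by
      intro x l
      simp [B, Matrix.reindex_apply, Matrix.submatrix_apply]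
    cases x with
    | inl j =>
      have : B (e (Sum.inl j)) = A j := by
        funext l
        rw [hrow]
        obtain ⟨y, rfl⟩ := e.surjective l
        rw [e.symm_apply_apply]
        cases y with
        | inl j' => simp [M, he, g]
        | inr x => simp [M, he, g]
      rw [this]; exact hA j
    | inr x =>
      have : B (e (Sum.inr x)) = Pi.single x.1 1 := by
        funext l
        rw [hrow]
        obtain ⟨y, rfl⟩ := e.surjective l
        rw [e.symm_apply_apply]
        cases y with
        | inl j' =>
          have hne : cols j' ≠ x.1 := by
            intro h
            exact x.2 (h ▸ hmem j')
          simp [M, Pi.single_apply, he, g, hne]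
        | inr x' =>
          have : (e (Sum.inr x') = x.1) ↔ x' = x := by
            constructor
            · intro h; exact Sum.inr_injective (hginj (show g _ = g _ from h))
            · rintro rfl; rfl
          simp [M, Pi.single_apply, Matrix.one_apply, this, eq_comm]
      rw [this]; exact hbasis x.1
  have hdet : (Matrix.of B).det = (Matrix.of fun j l : Fin k => A j (cols l)).det := by
    have : (Matrix.of B) = Matrix.reindex e e M := rfl
    rw [this, Matrix.det_reindex_self, Matrix.det_fromBlocks_zero₂₁]
    simp
  by_cases hli : LinearIndependent ℤ B
  · rcases hprime B hBrow hli with h | h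
    · exact Or.inr (Or.inl (hdet ▸ h))
    · exact Or.inr (Or.inr (hdet ▸ h))
  · left
    rw [← hdet]
    by_contra hd
    apply hli
    rw [Fintype.linearIndependent_iff]
    intro c hc i
    have hv : Matrix.vecMul c (Matrix.of B) = 0 := by
      funext l
      have := congrFun hc l
      simpa [Matrix.vecMul, dotProduct, Finset.sum_apply] using this
    have := Matrix.eq_zero_of_vecMul_eq_zero hd hv
    exact congrFun this i
end

section
/- Let Y be a finite subset of ℤⁿ containing the standard basis vectors e₁, …, eₙ, such that any n linearly independent elements of Y form a ℤ-basis of ℤⁿ. If A = (a₁, …, aₙ) and B = (b₁, …, bₙ) are elements of Y whose n-th coordinates satisfy aₙ = bₙ = 1, then aᵢ · bᵢ ≥ 0 for every index i. -/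
lemma aux_li {n : ℕ} (M : Matrix (Fin n) (Fin n) ℤ) (h : M.det ≠ 0) :
    LinearIndependent ℤ (fun i => M i) := by
  rw [Fintype.linearIndependent_iff]
  intro g hg i
  have h1 : Matrix.vecMul g M = 0 := by
    funext j
    have := congrFun hg j
    simpa [Matrix.vecMul, dotProduct, Finset.sum_apply] using this
  have h2 : M.det • g = 0 := by
    have := congrArg (fun w => Matrix.vecMul w M.adjugate) h1
    simpa [Matrix.vecMul_vecMul, Matrix.mul_adjugate, Matrix.smul_vecMul] using this
  have := congrFun h2 i
  simp only [Pi.smul_apply, smul_eq_mul, Pi.zero_apply] at this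
  rcases mul_eq_zero.1 this with h' | h'
  · exact absurd h' h
  · exact h'

lemma aux_one_row {n : ℕ} (k : Fin n) :
    (1 : Matrix (Fin n) (Fin n) ℤ) k = Pi.single k 1 := by
  funext j
  simp [Matrix.one_apply, Pi.single_apply, eq_comm]

lemma det_updateRow_one {n : ℕ} (i : Fin n) (v : Fin n → ℤ) :
    ((1 : Matrix (Fin n) (Fin n) ℤ).updateRow i v).det = v i := by
  have h : v = ∑ k, v k • (1 : Matrix (Fin n) (Fin n) ℤ) k := by
    funext j
    simp [Finset.sum_apply, Matrix.one_apply, Finset.sum_ite_eq']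
  nth_rewrite 1 [h]
  rw [Matrix.det_updateRow_sum]
  simp

lemma aux_small (n : ℕ) (Y : Finset (Fin n → ℤ))
    (hbasis : ∀ i : Fin n, Pi.single i 1 ∈ Y)
    (hprime : ∀ B : Fin n → (Fin n → ℤ), (∀ i, B i ∈ Y) → LinearIndependent ℤ B →
      (Matrix.of B).det = 1 ∨ (Matrix.of B).det = -1) :
    ∀ X ∈ Y, ∀ j, X j = 0 ∨ X j = 1 ∨ X j = -1 := by
  intro X hX j
  by_cases h0 : X j = 0
  · exact Or.inl h0
  right
  set M : Matrix (Fin n) (Fin n) ℤ := (1 : Matrix (Fin n) (Fin n) ℤ).updateRow j X with hM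
  have hdet : M.det = X j := det_updateRow_one j X
  have hrows : ∀ k, M k ∈ Y := by
    intro k
    by_cases hk : k = j
    · subst hk; rw [hM, Matrix.updateRow_self]; exact hX
    · rw [hM, Matrix.updateRow_ne hk, aux_one_row]; exact hbasis k
  have hli : LinearIndependent ℤ (fun k => M k) := aux_li M (by rw [hdet]; exact h0)
  have h2 := hprime (fun k => M k) hrows hli
  have hMeq : (Matrix.of fun k => M k) = M := rfl
  rw [hMeq, hdet] at h2
  exact h2

lemma aux_key_s9 (n : ℕ) (Y : Finset (Fin n → ℤ))
    (hbasis : ∀ i : Fin n, Pi.single i 1 ∈ Y)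
    (hprime : ∀ B : Fin n → (Fin n → ℤ), (∀ i, B i ∈ Y) → LinearIndependent ℤ B →
      (Matrix.of B).det = 1 ∨ (Matrix.of B).det = -1)
    (m : Fin n) (C D : Fin n → ℤ) (hC : C ∈ Y) (hD : D ∈ Y) (hCm : C m = 1) (hDm : D m = 1)
    (i : Fin n) (hCi : C i = 1) (hDi : D i = -1) : False := by
  have him : i ≠ m := fun h => by rw [h, hDm] at hDi; omega
  set M0 : Matrix (Fin n) (Fin n) ℤ := (1 : Matrix (Fin n) (Fin n) ℤ).updateRow m C with hM0
  have hM0det : M0.det = 1 := by rw [hM0, det_updateRow_one, hCm]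
  set c : Fin n → ℤ := fun k => if k = m then D m else D k - D m * C k with hc
  have hD_eq : D = ∑ k, c k • M0 k := by
    funext j
    rw [Finset.sum_apply]
    rw [← Finset.add_sum_erase _ _ (Finset.mem_univ m)]
    simp only [Pi.smul_apply, smul_eq_mul]
    have h1 : c m * M0 m j = D m * C j := by
      simp [hc, hM0, Matrix.updateRow_self]
    rw [h1]
    by_cases hj : j = m
    · have h2 : ∀ k ∈ Finset.univ.erase m, c k * M0 k j = 0 := by
        intro k hk
        have hkm : k ≠ m := (Finset.mem_erase.1 hk).1
        have hkj : k ≠ j := by rw [hj]; exact hkm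
        simp [hM0, Matrix.updateRow_ne hkm, Matrix.one_apply, hkj]
      rw [Finset.sum_eq_zero h2]
      rw [hj]
      simp [hCm, hj]
    · have h2 : ∀ k ∈ Finset.univ.erase m, c k * M0 k j = if k = j then c j else 0 := by
        intro k hk
        have hkm : k ≠ m := (Finset.mem_erase.1 hk).1
        by_cases hkj : k = j
        · subst hkj; simp [hM0, Matrix.updateRow_ne hkm, Matrix.one_apply]
        · simp [hM0, Matrix.updateRow_ne hkm, Matrix.one_apply, hkj]
      rw [Finset.sum_congr rfl h2, Finset.sum_ite_eq' _ j]
      have hjmem : j ∈ Finset.univ.erase m := Finset.mem_erase.2 ⟨hj, Finset.mem_univ j⟩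
      rw [if_pos hjmem]
      simp [hc, hj]
      try ring
  set T : Matrix (Fin n) (Fin n) ℤ := M0.updateRow i D with hT
  have hTdet : T.det = -2 := by
    rw [hT]
    nth_rewrite 1 [hD_eq]
    rw [Matrix.det_updateRow_sum, hM0det]
    simp [hc, him, hDi, hCi, hDm]
  have hrows : ∀ k, T k ∈ Y := by
    intro k
    by_cases hki : k = i
    · subst hki; rw [hT, Matrix.updateRow_self]; exact hD
    · rw [hT, Matrix.updateRow_ne hki]
      by_cases hkm : k = m
      · subst hkm; rw [hM0, Matrix.updateRow_self]; exact hC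
      · rw [hM0, Matrix.updateRow_ne hkm, aux_one_row]; exact hbasis k
  have hli : LinearIndependent ℤ (fun k => T k) := aux_li T (by rw [hTdet]; omega)
  have h2 := hprime (fun k => T k) hrows hli
  have hTeq : (Matrix.of fun k => T k) = T := rfl
  rw [hTeq, hTdet] at h2
  omega

/-- For a finite set `Y ⊆ ℤⁿ` containing the standard basis vectors, such that any `n`
linearly independent elements of `Y` form a `ℤ`-basis of `ℤⁿ`, any two elements `A, B`
of `Y` whose `n`-th coordinate equals `1` satisfy `Aᵢ · Bᵢ ≥ 0` for every index `i`. -/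
theorem stmt9 (n : ℕ) (hn : 0 < n) (Y : Finset (Fin n → ℤ))
    (hbasis : ∀ i : Fin n, Pi.single i 1 ∈ Y)
    (hprime : ∀ B : Fin n → (Fin n → ℤ), (∀ i, B i ∈ Y) → LinearIndependent ℤ B →
      (Matrix.of B).det = 1 ∨ (Matrix.of B).det = -1)
    (A B : Fin n → ℤ) (hA : A ∈ Y) (hB : B ∈ Y)
    (hAn : A ⟨n - 1, by omega⟩ = 1) (hBn : B ⟨n - 1, by omega⟩ = 1) :
    ∀ i, 0 ≤ A i * B i := by
  intro i
  have hsmall := aux_small n Y hbasis hprime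
  rcases hsmall A hA i with hAi | hAi | hAi
  · simp [hAi]
  · rcases hsmall B hB i with hBi | hBi | hBi
    · simp [hBi]
    · simp [hAi, hBi]
    · exact absurd (aux_key_s9 n Y hbasis hprime _ A B hA hB hAn hBn i hAi hBi) not_false
  · rcases hsmall B hB i with hBi | hBi | hBi
    · simp [hBi]
    · exact absurd (aux_key_s9 n Y hbasis hprime _ B A hB hA hBn hAn i hBi hAi) not_false
    · simp [hAi, hBi]
end

section
/- Let Y be a finite subset of ℤⁿ containing the standard basis vectors e₁, …, eₙ, such that any n linearly independent elements of Y form a ℤ-basis of ℤⁿ, and let i₁, i₂, i₃ be distinct indices. Suppose A ∈ Y satisfies A_{i₁}·A_{i₂} = 1 and A_{i₃} = 0. Then: (a) every B ∈ Y satisfies B_{i₁}·B_{i₂} ≥ 0; (b) any two elements B, C ∈ Y with B_{i₃} = C_{i₃} = 1 satisfy (B_{i₁} − C_{i₁})(B_{i₂} − C_{i₂}) ≥ 0, and the same holds for any two elements B, C ∈ Y with B_{i₃} = C_{i₃} = −1. -/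
open Matrix


lemma li_of_det_ne_zero {n : ℕ} (M : Fin n → (Fin n → ℤ))
    (h : (Matrix.of M).det ≠ 0) : LinearIndependent ℤ M := by
  classical
  let f : (Fin n → ℤ) →ₗ[ℤ] (Fin n → ℚ) :=
    { toFun := fun x i => (x i : ℚ)
      map_add' := by intro x y; funext i; push_cast; simp
      map_smul' := by intro c x; funext i; push_cast; simp }
  have hq : (Matrix.of (fun i j => ((M i j : ℚ)))).det ≠ 0 := by
    have h1 : (Matrix.of (fun i j => ((M i j : ℚ)))) = (Matrix.of M).map (Int.cast : ℤ → ℚ) := rfl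
    have h2 : ((Matrix.of M).map (Int.cast : ℤ → ℚ)).det = ((Matrix.of M).det : ℚ) := by
      have := RingHom.map_det (Int.castRingHom ℚ) (Matrix.of M)
      simpa [Matrix.map, RingHom.mapMatrix] using this.symm
    rw [h1, h2]
    exact_mod_cast h
  have hu : IsUnit (Matrix.of (fun i j => ((M i j : ℚ)))) := by
    rw [Matrix.isUnit_iff_isUnit_det]
    exact isUnit_iff_ne_zero.2 hq
  have hliQ : LinearIndependent ℚ (fun i => (Matrix.of (fun i j => ((M i j : ℚ)))) i) :=
    Matrix.linearIndependent_rows_iff_isUnit.2 hu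
  have hliZ : LinearIndependent ℤ (fun i => (Matrix.of (fun i j => ((M i j : ℚ)))) i) :=
    hliQ.restrict_scalars (by intro a b hab; simpa using hab)
  exact LinearIndependent.of_comp f hliZ


lemma minor_mem {n k : ℕ} {Y : Finset (Fin n → ℤ)}
    (hbasis : ∀ i : Fin n, Pi.single i 1 ∈ Y)
    (hprime : ∀ B : Fin n → (Fin n → ℤ), (∀ i, B i ∈ Y) → LinearIndependent ℤ B →
      (Matrix.of B).det = 1 ∨ (Matrix.of B).det = -1)
    (v : Fin k → (Fin n → ℤ)) (hv : ∀ a, v a ∈ Y)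
    (ι : Fin k → Fin n) (hι : Function.Injective ι) :
    (Matrix.of (fun a b => v a (ι b))).det = 0 ∨
    (Matrix.of (fun a b => v a (ι b))).det = 1 ∨
    (Matrix.of (fun a b => v a (ι b))).det = -1 := by
  classical
  set e₀ : Fin k ≃ Set.range ι := Equiv.ofInjective ι hι with he₀
  set M : Fin n → (Fin n → ℤ) :=
    fun r => if h : r ∈ Set.range ι then v (e₀.symm ⟨r, h⟩) else Pi.single r 1 with hM
  have hrows : ∀ r, M r ∈ Y := by
    intro r
    rw [hM]
    dsimp only
    split
    · exact hv _
    · exact hbasis r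
  -- the block decomposition
  set g : {a : Fin n // a ∈ Set.range ι} ⊕ {a : Fin n // a ∉ Set.range ι} ≃ Fin n :=
    Equiv.sumCompl (· ∈ Set.range ι) with hg
  set D : Matrix (Set.range ι) (Set.range ι) ℤ :=
    Matrix.of (fun x y : Set.range ι => v (e₀.symm x) (y : Fin n)) with hD
  set Bm : Matrix (Set.range ι) {a : Fin n // a ∉ Set.range ι} ℤ :=
    Matrix.of (fun (x : Set.range ι) (y : {a : Fin n // a ∉ Set.range ι}) =>
      v (e₀.symm x) (y : Fin n)) with hBm
  have hMin : ∀ (r : Fin n) (h : r ∈ Set.range ι), M r = v (e₀.symm ⟨r, h⟩) := by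
    intro r h; simp only [hM]; rw [dif_pos h]
  have hMout : ∀ (r : Fin n), r ∉ Set.range ι → M r = Pi.single r 1 := by
    intro r h; simp only [hM]; rw [dif_neg h]
  have hblock : (Matrix.of M).submatrix g g = Matrix.fromBlocks D Bm 0 1 := by
    ext x y
    cases x with
    | inl x =>
      cases y with
      | inl y =>
        simp only [submatrix_apply, hg, Equiv.sumCompl_apply_inl, fromBlocks_apply₁₁, hD,
          Matrix.of_apply]
        rw [hMin _ x.2]
      | inr y =>
        simp only [submatrix_apply, hg, Equiv.sumCompl_apply_inl, Equiv.sumCompl_apply_inr,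
          fromBlocks_apply₁₂, hBm, Matrix.of_apply]
        rw [hMin _ x.2]
    | inr x =>
      cases y with
      | inl y =>
        simp only [submatrix_apply, hg, Equiv.sumCompl_apply_inr, Equiv.sumCompl_apply_inl,
          fromBlocks_apply₂₁, Matrix.zero_apply, Matrix.of_apply]
        rw [hMout _ x.2]
        exact Pi.single_eq_of_ne (fun hc => x.2 (by rw [← hc]; exact y.2)) 1
      | inr y =>
        simp only [submatrix_apply, hg, Equiv.sumCompl_apply_inr, fromBlocks_apply₂₂,
          Matrix.of_apply]
        rw [hMout _ x.2]
        by_cases hxy : x = y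
        · subst hxy
          simp [Matrix.one_apply]
        · rw [Pi.single_eq_of_ne (fun hc => hxy (Subtype.ext hc.symm)) 1]
          exact (Matrix.one_apply_ne hxy).symm
  have hdetD : D.det = (Matrix.of (fun a b => v a (ι b))).det := by
    rw [← Matrix.det_submatrix_equiv_self e₀ D]
    congr 1
    ext a b
    simp [hD, he₀]
  have hdetM : (Matrix.of M).det = (Matrix.of (fun a b => v a (ι b))).det := by
    rw [← Matrix.det_submatrix_equiv_self g (Matrix.of M), hblock,
      Matrix.det_fromBlocks_zero₂₁, Matrix.det_one, mul_one, hdetD]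
  by_cases h0 : (Matrix.of (fun a b => v a (ι b))).det = 0
  · exact Or.inl h0
  · right
    have hli : LinearIndependent ℤ M := li_of_det_ne_zero M (by rw [hdetM]; exact h0)
    have := hprime M hrows hli
    rwa [hdetM] at this

lemma arith (u w : ℤ) (h : w - u = 0 ∨ w - u = 1 ∨ w - u = -1) : 0 ≤ u * w := by
  rcases h with h|h|h
  · have hw : w = u := by omega
    rw [hw]; exact mul_self_nonneg u
  · have hw : w = u + 1 := by omega
    subst hw
    rcases le_or_gt 0 u with hu|hu
    · nlinarith
    · have h1 : u + 1 ≤ 0 := by omega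
      nlinarith
  · have hw : w = u - 1 := by omega
    subst hw
    rcases le_or_gt u 0 with hu|hu
    · nlinarith
    · have h1 : 1 ≤ u := by omega
      nlinarith

/-- For a finite set `Y ⊆ ℤⁿ` containing the standard basis vectors, such that any `n`
linearly independent elements of `Y` form a `ℤ`-basis of `ℤⁿ`: if some `A ∈ Y` has
`A_{i₁} · A_{i₂} = 1` and `A_{i₃} = 0` for distinct indices `i₁, i₂, i₃`, then
(a) every `B ∈ Y` satisfies `B_{i₁} · B_{i₂} ≥ 0`, and (b) any two elements of `Y`
whose `i₃`-th coordinate equals `1` (resp. both equal `−1`) satisfy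
`(B_{i₁} − C_{i₁})(B_{i₂} − C_{i₂}) ≥ 0`. -/
theorem stmt10 (n : ℕ) (Y : Finset (Fin n → ℤ))
    (hbasis : ∀ i : Fin n, Pi.single i 1 ∈ Y)
    (hprime : ∀ B : Fin n → (Fin n → ℤ), (∀ i, B i ∈ Y) → LinearIndependent ℤ B →
      (Matrix.of B).det = 1 ∨ (Matrix.of B).det = -1)
    (i₁ i₂ i₃ : Fin n) (h12 : i₁ ≠ i₂) (h13 : i₁ ≠ i₃) (h23 : i₂ ≠ i₃)
    (A : Fin n → ℤ) (hA : A ∈ Y) (hA12 : A i₁ * A i₂ = 1) (hA3 : A i₃ = 0) :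
    (∀ B ∈ Y, 0 ≤ B i₁ * B i₂) ∧
    (∀ B ∈ Y, ∀ C ∈ Y, B i₃ = 1 → C i₃ = 1 →
      0 ≤ (B i₁ - C i₁) * (B i₂ - C i₂)) ∧
    (∀ B ∈ Y, ∀ C ∈ Y, B i₃ = -1 → C i₃ = -1 →
      0 ≤ (B i₁ - C i₁) * (B i₂ - C i₂)) := by
  have h21 : i₂ ≠ i₁ := h12.symm
  have h31 : i₃ ≠ i₁ := h13.symm
  have h32 : i₃ ≠ i₂ := h23.symm
  have hε : (A i₁ = 1 ∧ A i₂ = 1) ∨ (A i₁ = -1 ∧ A i₂ = -1) :=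
    Int.mul_eq_one_iff_eq_one_or_neg_one.mp hA12
  have hι2 : Function.Injective ![i₁, i₂] := by
    intro a b hab
    fin_cases a <;> fin_cases b <;> simp_all
  have hι3 : Function.Injective ![i₁, i₂, i₃] := by
    intro a b hab
    fin_cases a <;> fin_cases b <;> simp_all
  refine ⟨?_, ?_, ?_⟩
  · intro B hB
    have hv : ∀ a : Fin 2, ![A, B] a ∈ Y := by
      intro a; fin_cases a <;> assumption
    have hm := minor_mem hbasis hprime ![A, B] hv ![i₁, i₂] hι2
    rw [Matrix.det_fin_two] at hm
    simp only [Matrix.of_apply, Matrix.cons_val_zero, Matrix.cons_val_one, Matrix.head_cons] at hm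
    rcases hε with ⟨h1, h2⟩ | ⟨h1, h2⟩ <;> rw [h1, h2] at hm <;>
      exact arith _ _ (by omega)
  · intro B hB C hC hB3 hC3
    have hv : ∀ a : Fin 3, ![A, B, C] a ∈ Y := by
      intro a; fin_cases a <;> assumption
    have hm := minor_mem hbasis hprime ![A, B, C] hv ![i₁, i₂, i₃] hι3
    rw [Matrix.det_fin_three] at hm
    simp only [Matrix.of_apply, Matrix.cons_val_zero, Matrix.cons_val_one, Matrix.head_cons,
      Matrix.cons_val_two, Matrix.tail_cons] at hm
    rw [hA3, hB3, hC3] at hm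
    rcases hε with ⟨h1, h2⟩ | ⟨h1, h2⟩ <;> rw [h1, h2] at hm <;>
      exact arith _ _ (by omega)
  · intro B hB C hC hB3 hC3
    have hv : ∀ a : Fin 3, ![A, B, C] a ∈ Y := by
      intro a; fin_cases a <;> assumption
    have hm := minor_mem hbasis hprime ![A, B, C] hv ![i₁, i₂, i₃] hι3
    rw [Matrix.det_fin_three] at hm
    simp only [Matrix.of_apply, Matrix.cons_val_zero, Matrix.cons_val_one, Matrix.head_cons,
      Matrix.cons_val_two, Matrix.tail_cons] at hm
    rw [hA3, hB3, hC3] at hm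
    rcases hε with ⟨h1, h2⟩ | ⟨h1, h2⟩ <;> rw [h1, h2] at hm <;>
      exact arith _ _ (by omega)
end

section
/- For every positive integer n, the tridiagonal matrix Qₙ is invertible, its inverse has entries (Qₙ⁻¹)_{ij} = (2/(n+1)) · min(i,j) · (n+1 − max(i,j)), and Qₙ⁻¹ = (2/(n+1)) · Σ_{A ∈ Xₙ} AᵀA, where the sum runs over the n(n+1)/2 interval-indicator vectors of the ladder set Xₙ (regarded as row vectors); equivalently Qₙ · (Σ_{A ∈ Xₙ} AᵀA) = ((n+1)/2) · Iₙ. -/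
/-- The tridiagonal matrix `Qₙ` with diagonal entries `1` and entries `−1/2` immediately
above and below the diagonal. -/
noncomputable def Qn (n : ℕ) : Matrix (Fin n) (Fin n) ℝ :=
  Matrix.of fun i j =>
    if i = j then 1
    else if (i : ℕ) + 1 = (j : ℕ) ∨ (j : ℕ) + 1 = (i : ℕ) then -(1 / 2)
    else 0

/-- The indicator vector `χ_{[p,q]}` of the interval `[p, q]`, as a row vector in `ℝⁿ`. -/
def intervalVec {n : ℕ} (p q : Fin n) : Fin n → ℝ :=
  fun i => if p ≤ i ∧ i ≤ q then 1 else 0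

/-- The sum `Σ_{A ∈ Xₙ} AᵀA` of rank-one matrices over the ladder set `Xₙ` of
interval-indicator vectors. -/
noncomputable def ladderSum (n : ℕ) : Matrix (Fin n) (Fin n) ℝ :=
  ∑ p : Fin n, ∑ q : Fin n,
    if p ≤ q then Matrix.vecMulVec (intervalVec p q) (intervalVec p q) else 0

lemma fin_val_min {n : ℕ} (i j : Fin n) : ((min i j : Fin n) : ℕ) = min (i:ℕ) (j:ℕ) := by
  rcases le_total i j with h | h
  · rw [min_eq_left h, min_eq_left (Fin.le_def.mp h)]
  · rw [min_eq_right h, min_eq_right (Fin.le_def.mp h)]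

lemma fin_val_max {n : ℕ} (i j : Fin n) : ((max i j : Fin n) : ℕ) = max (i:ℕ) (j:ℕ) := by
  rcases le_total i j with h | h
  · rw [max_eq_right h, max_eq_right (Fin.le_def.mp h)]
  · rw [max_eq_left h, max_eq_left (Fin.le_def.mp h)]

lemma ladder_apply (n : ℕ) (i j : Fin n) :
    ladderSum n i j = ((min (i : ℕ) (j : ℕ) : ℝ) + 1) * ((n : ℝ) - (max (i : ℕ) (j : ℕ) : ℝ)) := by
  have h1 : ladderSum n i j = ∑ p : Fin n, ∑ q : Fin n,
      (if p ≤ min i j then (1:ℝ) else 0) * (if max i j ≤ q then (1:ℝ) else 0) := by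
    unfold ladderSum
    rw [Matrix.sum_apply]
    refine Finset.sum_congr rfl fun p _ => ?_
    rw [Matrix.sum_apply]
    refine Finset.sum_congr rfl fun q _ => ?_
    have he : (if p ≤ q then Matrix.vecMulVec (intervalVec p q) (intervalVec p q) else 0) i j
        = if p ≤ q then intervalVec p q i * intervalVec p q j else 0 := by
      split_ifs <;> simp [Matrix.vecMulVec_apply]
    rw [he]
    simp only [intervalVec]
    split_ifs
    all_goals simp only [Fin.le_def, le_min_iff, max_le_iff, not_and_or, not_le] at *
    all_goals try norm_num
    all_goals exfalso; omega
  rw [h1, ← Finset.sum_mul_sum]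
  have hA : (∑ p : Fin n, if p ≤ min i j then (1:ℝ) else 0)
      = ((min (i:ℕ) (j:ℕ) : ℝ) + 1) := by
    rw [Finset.sum_boole]
    have h : Finset.univ.filter (fun p : Fin n => p ≤ min i j) = Finset.Iic (min i j) := by
      ext p; simp
    rw [h, Fin.card_Iic, fin_val_min]
    push_cast; ring
  have hB : (∑ q : Fin n, if max i j ≤ q then (1:ℝ) else 0)
      = ((n : ℝ) - (max (i:ℕ) (j:ℕ) : ℝ)) := by
    rw [Finset.sum_boole]
    have h : Finset.univ.filter (fun q : Fin n => max i j ≤ q) = Finset.Ici (max i j) := by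
      ext q; simp
    rw [h, Fin.card_Ici, fin_val_max, Nat.cast_sub (le_of_lt (max_lt i.isLt j.isLt)), Nat.cast_max]
  rw [hA, hB]

lemma sum_fin_eq {n : ℕ} (m : ℕ) (f : ℕ → ℝ) :
    (∑ k : Fin n, if (k : ℕ) = m then f (k : ℕ) else 0) = if m < n then f m else 0 := by
  rcases lt_or_ge m n with h | h
  · rw [if_pos h, Finset.sum_eq_single (⟨m, h⟩ : Fin n)]
    · simp
    · intro k _ hk
      rw [if_neg]
      intro hkm
      exact hk (Fin.ext hkm)
    · simp
  · rw [if_neg (not_lt.2 h)]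
    apply Finset.sum_eq_zero
    intro k _
    rw [if_neg]
    omega

/-- Row `i` of `Qn` dotted with the column `k ↦ F (k+1)`, assuming `F 0 = 0 = F (n+1)`. -/
lemma qn_row_sum {n : ℕ} (i : Fin n) (F : ℕ → ℝ) (hF0 : F 0 = 0) (hFn : F (n + 1) = 0) :
    (∑ k : Fin n, Qn n i k * F ((k : ℕ) + 1))
      = F ((i : ℕ) + 1) - (1 / 2) * F (i : ℕ) - (1 / 2) * F ((i : ℕ) + 2) := by
  have hsplit : ∀ k : Fin n, Qn n i k * F ((k : ℕ) + 1)
      = (if (k : ℕ) = (i : ℕ) then F ((k : ℕ) + 1) else 0)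
        + (if (k : ℕ) = (i : ℕ) - 1 ∧ 0 < (i : ℕ) then -(1/2) * F ((k : ℕ) + 1) else 0)
        + (if (k : ℕ) = (i : ℕ) + 1 then -(1/2) * F ((k : ℕ) + 1) else 0) := by
    intro k
    unfold Qn
    simp only [Matrix.of_apply, Fin.ext_iff]
    split_ifs <;> first | ring1 | (exfalso; omega)
  rw [Finset.sum_congr rfl fun k _ => hsplit k]
  rw [Finset.sum_add_distrib, Finset.sum_add_distrib]
  have h1 : (∑ k : Fin n, if (k : ℕ) = (i : ℕ) then F ((k : ℕ) + 1) else 0)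
      = F ((i : ℕ) + 1) := by
    rw [sum_fin_eq (i : ℕ) (fun t => F (t + 1)), if_pos i.isLt]
  have h2 : (∑ k : Fin n, if (k : ℕ) = (i : ℕ) - 1 ∧ 0 < (i : ℕ) then -(1/2) * F ((k : ℕ) + 1) else 0)
      = -(1/2) * F (i : ℕ) := by
    rcases Nat.eq_zero_or_pos (i : ℕ) with h0 | h0
    · rw [h0, hF0]
      rw [Finset.sum_eq_zero, mul_zero]
      intro k _
      rw [if_neg]
      omega
    · have : ∀ k : Fin n, (if (k : ℕ) = (i : ℕ) - 1 ∧ 0 < (i : ℕ) then -(1/2) * F ((k : ℕ) + 1) else 0)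
          = (if (k : ℕ) = (i : ℕ) - 1 then -(1/2) * F ((k : ℕ) + 1) else 0) := by
        intro k
        split_ifs <;> first | rfl | omega
      rw [Finset.sum_congr rfl fun k _ => this k,
        sum_fin_eq ((i : ℕ) - 1) (fun t => -(1/2) * F (t + 1)),
        if_pos (by have := i.isLt; omega : (i : ℕ) - 1 < n)]
      have hmm : (i : ℕ) - 1 + 1 = (i : ℕ) := by omega
      simp only [hmm]
  have h3 : (∑ k : Fin n, if (k : ℕ) = (i : ℕ) + 1 then -(1/2) * F ((k : ℕ) + 1) else 0)
      = -(1/2) * F ((i : ℕ) + 2) := by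
    rw [sum_fin_eq ((i : ℕ) + 1) (fun t => -(1/2) * F (t + 1))]
    rcases lt_or_ge ((i : ℕ) + 1) n with h | h
    · rw [if_pos h]
    · rw [if_neg (not_lt.2 h)]
      have : (i : ℕ) + 2 = n + 1 := by have := i.isLt; omega
      rw [this, hFn, mul_zero]
  rw [h1, h2, h3]
  ring

lemma key_mul (n : ℕ) (i j : Fin n) :
    (Qn n * ladderSum n) i j = if i = j then ((n:ℝ) + 1) / 2 else 0 := by
  rw [Matrix.mul_apply]
  set b := (j : ℕ) with hb
  have hbn : b < n := j.isLt
  set F : ℕ → ℝ := fun t => ((min t (b+1) : ℕ) : ℝ) * ((n:ℝ) + 1 - ((max t (b+1) : ℕ) : ℝ))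
    with hF
  have hcol : ∀ k : Fin n, ladderSum n k j = F ((k : ℕ) + 1) := by
    intro k
    rw [ladder_apply]
    simp only [hF]
    have h1 : min ((k:ℕ)+1) (b+1) = min (k:ℕ) b + 1 := by omega
    have h2 : max ((k:ℕ)+1) (b+1) = max (k:ℕ) b + 1 := by omega
    rw [h1, h2]
    push_cast
    ring
  rw [Finset.sum_congr rfl fun k _ => by rw [hcol k]]
  have hF0 : F 0 = 0 := by
    simp only [hF]
    have : min 0 (b+1) = 0 := by omega
    rw [this]
    simp
  have hFn : F (n + 1) = 0 := by
    simp only [hF]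
    have : max (n+1) (b+1) = n+1 := by omega
    rw [this]
    push_cast
    ring
  rw [qn_row_sum i F hF0 hFn]
  set a := (i : ℕ) with ha
  have han : a < n := i.isLt
  have heq : (i = j) ↔ (a = b) := by rw [Fin.ext_iff]
  rcases lt_trichotomy a b with h | h | h
  · rw [if_neg (heq.not.mpr (by omega))]
    simp only [hF]
    have e1 : min (a+1) (b+1) = a+1 := by omega
    have e2 : max (a+1) (b+1) = b+1 := by omega
    have e3 : min a (b+1) = a := by omega
    have e4 : max a (b+1) = b+1 := by omega
    have e5 : min (a+2) (b+1) = a+2 := by omega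
    have e6 : max (a+2) (b+1) = b+1 := by omega
    rw [e1, e2, e3, e4, e5, e6]
    push_cast
    ring
  · rw [if_pos (heq.mpr h)]
    simp only [hF]
    have e1 : min (a+1) (b+1) = b+1 := by omega
    have e2 : max (a+1) (b+1) = b+1 := by omega
    have e3 : min a (b+1) = a := by omega
    have e4 : max a (b+1) = b+1 := by omega
    have e5 : min (a+2) (b+1) = b+1 := by omega
    have e6 : max (a+2) (b+1) = b+2 := by omega
    rw [e1, e2, e3, e4, e5, e6]
    rw [h]
    push_cast
    ring
  · rw [if_neg (heq.not.mpr (by omega))]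
    simp only [hF]
    have e1 : min (a+1) (b+1) = b+1 := by omega
    have e2 : max (a+1) (b+1) = a+1 := by omega
    have e3 : min a (b+1) = b+1 := by omega
    have e4 : max a (b+1) = a := by omega
    have e5 : min (a+2) (b+1) = b+1 := by omega
    have e6 : max (a+2) (b+1) = a+2 := by omega
    rw [e1, e2, e3, e4, e5, e6]
    push_cast
    ring

/-- `Qₙ` is invertible, its inverse has entries
`(Qₙ⁻¹)_{ij} = (2/(n+1)) · min(i,j) · (n+1 − max(i,j))` (with `1`-based indices),
and `Qₙ⁻¹ = (2/(n+1)) Σ_{A ∈ Xₙ} AᵀA`. -/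
theorem stmt13 (n : ℕ) (hn : 0 < n) :
    IsUnit (Qn n) ∧
    (∀ i j : Fin n, (Qn n)⁻¹ i j =
      (2 / ((n : ℝ) + 1)) * ((min (i : ℕ) (j : ℕ) : ℝ) + 1) *
        ((n : ℝ) + 1 - ((max (i : ℕ) (j : ℕ) : ℝ) + 1))) ∧
    (Qn n)⁻¹ = (2 / ((n : ℝ) + 1)) • ladderSum n := by
  have hne : ((n : ℝ) + 1) ≠ 0 := by positivity
  have hone : Qn n * ((2 / ((n : ℝ) + 1)) • ladderSum n) = 1 := by
    rw [Matrix.mul_smul]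
    ext i j
    rw [Matrix.smul_apply, key_mul n i j, Matrix.one_apply]
    split_ifs
    · rw [smul_eq_mul]
      field_simp
    · simp
  have hinv : (Qn n)⁻¹ = (2 / ((n : ℝ) + 1)) • ladderSum n := Matrix.inv_eq_right_inv hone
  refine ⟨?_, ?_, hinv⟩
  · exact ⟨⟨Qn n, (2 / ((n : ℝ) + 1)) • ladderSum n, hone, mul_eq_one_comm.mp hone⟩, rfl⟩
  · intro i j
    rw [hinv, Matrix.smul_apply, ladder_apply, smul_eq_mul]
    ring
end

section
/- Let n ≥ 3 and 2 ≤ k ≤ n−1. For every nonzero integer vector v = (v₁, …, vₙ) ∈ ℤⁿ, the quadratic form q(v) = Σ_{i=1}^{n} vᵢ² − Σ_{i=1}^{n−1} vᵢ·v_{i+1} + (1/k)·v_{n−k}·vₙ satisfies q(v) ≥ 1, with equality if and only if v or −v belongs to the faulted ladder set X_{n,k}; that is, equality holds exactly when ±v is the indicator χ_{[p,q]} of an interval with q ≤ n−1, or the indicator χ_{[p,n]} with p > n−k. Equivalently, the symmetric matrix Q_{n,k} = Qₙ + (1/(2k))(E_{n,n−k} + E_{n−k,n}) satisfies v Q_{n,k}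 vᵀ ≥ 1 for all nonzero v ∈ ℤⁿ with equality exactly on ±X_{n,k}. -/
open Finset


/-- Telescoping square identity. -/
lemma sq_ident' (w : ℕ → ℤ) : ∀ m : ℕ,
    2 * ((∑ i ∈ range (m+1), w i ^ 2) - ∑ i ∈ range m, w i * w (i+1))
      = w 0 ^ 2 + w m ^ 2 + ∑ i ∈ range m, (w i - w (i+1)) ^ 2 := by
  intro m
  induction m with
  | zero => simp; ring
  | succ m ih =>
    rw [sum_range_succ (fun i => w i ^ 2), sum_range_succ (fun i => w i * w (i+1)),
      sum_range_succ (fun i => (w i - w (i+1))^2)]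
    linear_combination ih



lemma abs_tele' (f : ℕ → ℤ) (m : ℕ) : |f 0 - f m| ≤ ∑ i ∈ range m, (f i - f (i+1)) ^ 2 := by
  calc |f 0 - f m| = |∑ i ∈ range m, (f i - f (i+1))| := by rw [Finset.sum_range_sub' f m]
    _ ≤ ∑ i ∈ range m, |f i - f (i+1)| := Finset.abs_sum_le_sum_abs _ _
    _ ≤ ∑ i ∈ range m, (f i - f (i+1)) ^ 2 := by
        refine Finset.sum_le_sum fun i _ => ?_
        calc |f i - f (i+1)| ≤ |f i - f (i+1)| ^ 2 := Int.le_self_sq _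
          _ = (f i - f (i+1)) ^ 2 := sq_abs _

lemma abs_bound' (w : ℕ → ℤ) (m : ℕ) :
    |w m| ≤ w 0 ^ 2 + ∑ i ∈ range m, (w i - w (i+1)) ^ 2 := by
  have h1 := abs_tele' w m
  have h2 : |w m| ≤ |w 0| + |w 0 - w m| := by
    simpa using abs_sub (w 0) (w 0 - w m)
  have h3 : |w 0| ≤ w 0 ^ 2 := by
    calc |w 0| ≤ |w 0| ^ 2 := Int.le_self_sq _
      _ = w 0 ^ 2 := sq_abs _
  linarith


/-- Classification: if the "energy" of an integer path starting implicitly at 0 and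
ending at 0 is exactly 2, then the path is ± an interval indicator. -/
lemma classify2' (m : ℕ) (hm : 1 ≤ m) (w : ℕ → ℤ)
    (h2 : w 0 ^ 2 + ∑ i ∈ range m, (w i - w (i+1)) ^ 2 = 2)
    (hend : w m = 0) :
    ∃ p q : ℕ, p ≤ q ∧ q < m ∧
      ((∀ i ≤ m, w i = if p ≤ i ∧ i ≤ q then 1 else 0) ∨
       (∀ i ≤ m, w i = if p ≤ i ∧ i ≤ q then -1 else 0)) := by
  set s : ℕ → ℤ := fun i => match i with | 0 => w 0 | (j+1) => w (j+1) - w j with hs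
  have hstep : ∀ j : ℕ, w (j+1) = w j + s (j+1) := by intro j; simp [hs]
  have hsum2 : ∑ i ∈ range (m+1), s i ^ 2 = 2 := by
    rw [Finset.sum_range_succ' (fun i => s i ^ 2) m]
    rw [← h2]
    have : ∀ i ∈ range m, s (i+1) ^ 2 = (w i - w (i+1)) ^ 2 := by
      intro i _; simp only [hs]; ring
    rw [Finset.sum_congr rfl this]
    simp [hs]; ring
  have hpart : ∀ j : ℕ, ∑ i ∈ range (j+1), s i = w j := by
    intro j
    induction j with
    | zero => simp [hs]
    | succ j ih => rw [Finset.sum_range_succ, ih, ← hstep]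
  have hsmall : ∀ i ∈ range (m+1), s i ^ 2 ≤ 1 := by
    intro i hi
    by_contra hgt
    push_neg at hgt
    have hnn : ∀ j ∈ range (m+1), (0:ℤ) ≤ s j ^ 2 := fun j _ => sq_nonneg _
    have hle := Finset.single_le_sum hnn hi
    rw [hsum2] at hle
    have h1 : 2 ≤ |s i| := by nlinarith [sq_abs (s i), abs_nonneg (s i)]
    nlinarith [sq_abs (s i)]
  have hsq : ∀ i ∈ range (m+1), s i ^ 2 = if s i ≠ 0 then 1 else 0 := by
    intro i hi
    rcases eq_or_ne (s i) 0 with h | h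
    · simp [h]
    · rw [if_pos h]
      have h1 : 1 ≤ |s i| := Int.one_le_abs h
      have h2 := hsmall i hi
      nlinarith [sq_abs (s i)]
  have hcard : ((range (m+1)).filter (fun i => s i ≠ 0)).card = 2 := by
    have : (2:ℤ) = ((range (m+1)).filter (fun i => s i ≠ 0)).card := by
      rw [← hsum2, Finset.sum_congr rfl hsq, Finset.sum_boole]
    exact_mod_cast this.symm
  obtain ⟨i₁, i₂, hne, hset⟩ := Finset.card_eq_two.mp hcard
  wlog hlt : i₁ < i₂ generalizing i₁ i₂
  · exact this i₂ i₁ hne.symm (by rw [hset]; exact Finset.pair_comm i₁ i₂) (by omega)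
  have hmem : ∀ j, j ∈ (range (m+1)).filter (fun i => s i ≠ 0) ↔ (j = i₁ ∨ j = i₂) := by
    intro j; rw [hset]; simp
  have hi₂m : i₂ < m + 1 :=
    Finset.mem_range.mp (Finset.mem_filter.mp ((hmem i₂).mpr (Or.inr rfl))).1
  have hzero : ∀ j, j ≤ m → j ≠ i₁ → j ≠ i₂ → s j = 0 := by
    intro j hj h1 h2
    by_contra h
    have : j ∈ (range (m+1)).filter (fun i => s i ≠ 0) :=
      Finset.mem_filter.mpr ⟨Finset.mem_range.mpr (by omega), h⟩
    rcases (hmem j).mp this with h' | h' <;> tauto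
  have hs₁ : s i₁ ≠ 0 := (Finset.mem_filter.mp ((hmem i₁).mpr (Or.inl rfl))).2
  have hsumzero : s i₁ + s i₂ = 0 := by
    have h0 : ∑ i ∈ range (m+1), s i = 0 := by rw [hpart m, hend]
    have hfil : ∑ i ∈ (range (m+1)).filter (fun i => s i ≠ 0), s i
        = ∑ i ∈ range (m+1), s i := Finset.sum_filter_ne_zero (range (m+1))
    rw [hset, Finset.sum_pair hne, h0] at hfil
    exact hfil
  have habs₁ : s i₁ = 1 ∨ s i₁ = -1 := by
    have hsq1 : s i₁ ^ 2 = 1 := by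
      have := hsq i₁ (Finset.mem_filter.mp ((hmem i₁).mpr (Or.inl rfl))).1
      rwa [if_pos hs₁] at this
    have hmul : (s i₁ - 1) * (s i₁ + 1) = 0 := by linear_combination hsq1
    rcases mul_eq_zero.mp hmul with h | h
    · exact Or.inl (by omega)
    · exact Or.inr (by omega)
  have hval : ∀ i, i ≤ m → w i = if i₁ ≤ i ∧ i < i₂ then s i₁ else 0 := by
    intro i
    induction i with
    | zero =>
      intro _
      have hw0 : w 0 = s 0 := by simp [hs]
      rcases eq_or_ne i₁ 0 with h | h
      · rw [if_pos ⟨by omega, by omega⟩, hw0, h]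
      · rw [if_neg (by omega), hw0]
        exact hzero 0 (by omega) (Ne.symm h) (by omega)
    | succ i ih =>
      intro hi
      have hii : i ≤ m := by omega
      rw [hstep i, ih hii]
      rcases eq_or_ne (i+1) i₁ with h | h
      · rw [if_neg (by omega), if_pos (by omega), h]; ring
      · rcases eq_or_ne (i+1) i₂ with h' | h'
        · rw [if_pos (by omega), if_neg (by omega), h']
          exact hsumzero
        · rw [hzero (i+1) hi h h',
            if_congr (show (i₁ ≤ i ∧ i < i₂) ↔ (i₁ ≤ i+1 ∧ i+1 < i₂) from by omega) rfl rfl]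
          ring
  refine ⟨i₁, i₂ - 1, by omega, by omega, ?_⟩
  rcases habs₁ with h | h
  · left
    intro i hi
    rw [hval i hi, h,
      if_congr (show (i₁ ≤ i ∧ i < i₂) ↔ (i₁ ≤ i ∧ i ≤ i₂ - 1) from by omega) rfl rfl]
  · right
    intro i hi
    rw [hval i hi, h,
      if_congr (show (i₁ ≤ i ∧ i < i₂) ↔ (i₁ ≤ i ∧ i ≤ i₂ - 1) from by omega) rfl rfl]

set_option maxHeartbeats 2000000 in
lemma key_lemma (k c : ℕ) (hk : 2 ≤ k) (w : ℕ → ℤ) (hw : ∃ i, i < c+k+1 ∧ w i ≠ 0) :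
    (k:ℤ) ≤ (k:ℤ) * ((∑ i ∈ range (c+k+1), w i ^ 2) - ∑ i ∈ range (c+k), w i * w (i+1))
        + w c * w (c+k) ∧
    ((k:ℤ) * ((∑ i ∈ range (c+k+1), w i ^ 2) - ∑ i ∈ range (c+k), w i * w (i+1))
        + w c * w (c+k) = k ↔
      ∃ p q : ℕ, p ≤ q ∧ q ≤ c+k ∧ (q < c+k ∨ c < p) ∧
        ((∀ i ≤ c+k, w i = if p ≤ i ∧ i ≤ q then 1 else 0) ∨
         (∀ i ≤ c+k, w i = if p ≤ i ∧ i ≤ q then -1 else 0))) := by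
  have hk0 : (0:ℤ) < (k:ℤ) := by exact_mod_cast (by omega : 0 < k)
  set S : ℤ := ((∑ i ∈ range (c+k+1), w i ^ 2) - ∑ i ∈ range (c+k), w i * w (i+1)) with hS
  set a : ℤ := w c with ha
  set b : ℤ := w (c+k) with hb
  set E : ℤ := w 0 ^ 2 + ∑ i ∈ range c, (w i - w (i+1)) ^ 2 with hE
  set G : ℤ := ∑ j ∈ range k, (w (c+j) - w (c+j+1)) ^ 2 with hG
  set D : ℤ := ∑ j ∈ range k, (w (c+j) - w (c+j+1)) with hDdef
  set F : ℤ := ∑ j ∈ range k, ((k:ℤ) * (w (c+j) - w (c+j+1)) + b) ^ 2 with hF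
  have hL1 : 2 * S = w 0 ^ 2 + b ^ 2 + ∑ i ∈ range (c+k), (w i - w (i+1)) ^ 2 :=
    sq_ident' w (c+k)
  have hsplit : ∑ i ∈ range (c+k), (w i - w (i+1)) ^ 2
      = (∑ i ∈ range c, (w i - w (i+1)) ^ 2) + G := by
    rw [hG]
    exact Finset.sum_range_add (fun i => (w i - w (i+1)) ^ 2) c k
  have hD : D = a - b := by
    rw [hDdef, ha, hb]
    exact Finset.sum_range_sub' (fun j => w (c+j)) k
  have hFexp : F = (k:ℤ)^2 * G + 2*(k:ℤ)*b*D + (k:ℤ)*b^2 := by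
    have h1 : ∀ j ∈ range k, ((k:ℤ) * (w (c+j) - w (c+j+1)) + b) ^ 2
        = (k:ℤ)^2 * ((w (c+j) - w (c+j+1))^2) + (2*(k:ℤ)*b) * (w (c+j) - w (c+j+1)) + b^2 := by
      intro j _; ring
    rw [hF, Finset.sum_congr rfl h1, Finset.sum_add_distrib, Finset.sum_add_distrib,
      ← Finset.mul_sum, ← Finset.mul_sum, Finset.sum_const, card_range, nsmul_eq_mul,
      hG, hDdef]
  have hMaster : 2*(k:ℤ)*((k:ℤ)*S + a*b) = (k:ℤ)^2*E + F + (k:ℤ)*((k:ℤ)+1)*b^2 := by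
    rw [hE]
    linear_combination ((k:ℤ)^2) * hL1 + ((k:ℤ)^2) * hsplit - hFexp - 2*(k:ℤ)*b*hD
  have hE0 : 0 ≤ E := by
    rw [hE]; positivity
  have hG0 : 0 ≤ G := by rw [hG]; positivity
  have hF0 : 0 ≤ F := by rw [hF]; positivity
  have hEa : |a| ≤ E := abs_bound' w c
  clear_value S a b E G D F
  -- the characterization predicate
  set X : Prop := ∃ p q : ℕ, p ≤ q ∧ q ≤ c+k ∧ (q < c+k ∨ c < p) ∧
        ((∀ i ≤ c+k, w i = if p ≤ i ∧ i ≤ q then 1 else 0) ∨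
         (∀ i ≤ c+k, w i = if p ≤ i ∧ i ≤ q then -1 else 0)) with hX
  -- core case analysis
  have core : 2*(k:ℤ)^2 ≤ (k:ℤ)^2*E + F + (k:ℤ)*((k:ℤ)+1)*b^2 ∧
      ((k:ℤ)^2*E + F + (k:ℤ)*((k:ℤ)+1)*b^2 = 2*(k:ℤ)^2 → X) := by
    rcases eq_or_ne b 0 with hb0 | hbne
    · -- case b = 0
      have hFG : F = (k:ℤ)^2 * G := by rw [hFexp, hb0]; ring
      have hP2 : 2 ≤ w 0 ^ 2 + ∑ i ∈ range (c+k), (w i - w (i+1)) ^ 2 := by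
        obtain ⟨t, ht, hwt⟩ := hw
        have ht' : t ≤ c + k := by omega
        have e1 : |w t| ≤ w 0 ^ 2 + ∑ i ∈ range t, (w i - w (i+1)) ^ 2 := abs_bound' w t
        have e2 : |w t| ≤ ∑ j ∈ range (c+k-t), (w (t+j) - w (t+j+1)) ^ 2 := by
          have h := abs_tele' (fun j => w (t+j)) (c+k-t)
          have heq : t + (c+k-t) = c+k := by omega
          rw [heq] at h
          have hb0' : w (c+k) = 0 := by rw [← hb]; exact hb0
          rw [hb0', sub_zero] at h
          exact h
        have e3 : w 0 ^ 2 + ∑ i ∈ range (c+k), (w i - w (i+1)) ^ 2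
            = (w 0 ^ 2 + ∑ i ∈ range t, (w i - w (i+1)) ^ 2)
              + ∑ j ∈ range (c+k-t), (w (t+j) - w (t+j+1)) ^ 2 := by
          have h := Finset.sum_range_add (fun i => (w i - w (i+1)) ^ 2) t (c+k-t)
          rw [show t + (c+k-t) = c+k from by omega] at h
          rw [h]; ring
        have e4 : 1 ≤ |w t| := Int.one_le_abs hwt
        linarith
      constructor
      · have h22 : 2 ≤ E + G := by
          rw [hE]; linarith [hP2, hsplit]
        have e3 : (k:ℤ)^2*2 ≤ (k:ℤ)^2*(E+G) :=
          mul_le_mul_of_nonneg_left h22 (by positivity)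
        rw [hb0, hFG]
        linarith
      · intro heq
        have hEG2 : E + G = 2 := by
          have h1 : (k:ℤ)^2 * (E + G) = (k:ℤ)^2 * 2 := by
            rw [hb0] at heq
            linarith [heq, hFG]
          have h2 : ((k:ℤ)^2) ≠ 0 := by positivity
          have := mul_left_cancel₀ h2 h1
          linarith
        have hPP : w 0 ^ 2 + ∑ i ∈ range (c+k), (w i - w (i+1)) ^ 2 = 2 := by
          rw [hE] at hEG2
          linarith [hsplit]
        obtain ⟨p, q, hpq, hqlt, hcl⟩ := classify2' (c+k) (by omega) w hPP (by rw [← hb]; exact hb0)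
        exact ⟨p, q, hpq, by omega, Or.inl hqlt, hcl⟩
    · rcases eq_or_ne (b^2) 1 with hb1 | hbn1
      · -- case b = ±1
        rcases eq_or_ne a 0 with ha0 | hane
        · -- a = 0 : potential equality case
          have hD0 : D = -b := by rw [hD, ha0]; ring
          have hDne : D ≠ 0 := by
            rw [hD0]; intro h; apply hbne; omega
          obtain ⟨j₁, hj₁, hdj₁⟩ : ∃ j ∈ range k, (w (c+j) - w (c+j+1)) ≠ 0 := by
            by_contra h
            push_neg at h
            exact hDne (by rw [hDdef]; exact Finset.sum_eq_zero h)
          have hG1 : 1 ≤ G := by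
            have h1 : 1 ≤ |w (c+j₁) - w (c+j₁+1)| := Int.one_le_abs hdj₁
            have h2 : 1 ≤ (w (c+j₁) - w (c+j₁+1))^2 := by nlinarith [sq_abs (w (c+j₁) - w (c+j₁+1))]
            have h3 := Finset.single_le_sum (f := fun j => (w (c+j) - w (c+j+1))^2)
              (fun j _ => sq_nonneg _) hj₁
            have h3' : (w (c+j₁) - w (c+j₁+1))^2
                ≤ ∑ x ∈ range k, (w (c+x) - w (c+x+1))^2 := h3
            rw [hG]; linarith
          have hFval : F = (k:ℤ)^2 * G - (k:ℤ) := by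
            rw [hFexp, hD0]; linear_combination (-(k:ℤ)) * hb1
          constructor
          · have e1 : (k:ℤ)^2*1 ≤ (k:ℤ)^2*G := mul_le_mul_of_nonneg_left hG1 (by positivity)
            have e2 : 0 ≤ (k:ℤ)^2*E := by positivity
            rw [hFval, hb1]
            linarith
          · intro heq
            have hEG1 : E + G = 1 := by
              have h1 : (k:ℤ)^2 * (E + G) = (k:ℤ)^2 * 1 := by
                rw [hFval] at heq
                linear_combination heq - (k:ℤ)*((k:ℤ)+1)*hb1
              have h2 : ((k:ℤ)^2) ≠ 0 := by positivity
              have := mul_left_cancel₀ h2 h1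
              linarith
            have hEz : E = 0 := by linarith [hG1, hE0]
            have hGone : G = 1 := by linarith
            -- w vanishes up to c
            have hEsum : w 0 ^ 2 + ∑ i ∈ range c, (w i - w (i+1)) ^ 2 = 0 := by
              rw [← hE]; exact hEz
            have hBnn : 0 ≤ ∑ i ∈ range c, (w i - w (i+1)) ^ 2 :=
              Finset.sum_nonneg fun i _ => sq_nonneg _
            have hw0 : w 0 = 0 := by
              have h1 : w 0 ^ 2 = 0 := by nlinarith [sq_nonneg (w 0)]
              exact sq_eq_zero_iff.mp h1
            have hsz : ∑ i ∈ range c, (w i - w (i+1)) ^ 2 = 0 := by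
              nlinarith [sq_nonneg (w 0)]
            have hdz : ∀ i ∈ range c, w i - w (i+1) = 0 := by
              intro i hi
              have := (Finset.sum_eq_zero_iff_of_nonneg
                (fun i _ => sq_nonneg (w i - w (i+1)))).mp hsz i hi
              exact sq_eq_zero_iff.mp this
            have hzero : ∀ i ≤ c, w i = 0 := by
              intro i
              induction i with
              | zero => intro _; exact hw0
              | succ i ih =>
                intro hi
                have h1 := hdz i (Finset.mem_range.mpr (by omega))
                have h2 := ih (by omega)
                linarith
            -- exactly one jump in the fault region
            have hGsum : ∑ j ∈ range k, (w (c+j) - w (c+j+1)) ^ 2 = 1 := by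
              rw [← hG]; exact hGone
            have hsmall : ∀ j ∈ range k, (w (c+j) - w (c+j+1)) ^ 2 ≤ 1 := by
              intro j hj
              have h := Finset.single_le_sum
                (f := fun j => (w (c+j) - w (c+j+1)) ^ 2) (fun _ _ => sq_nonneg _) hj
              have h' : (w (c+j) - w (c+j+1)) ^ 2
                  ≤ ∑ x ∈ range k, (w (c+x) - w (c+x+1)) ^ 2 := h
              linarith [hGsum]
            have hsqG : ∀ j ∈ range k, (w (c+j) - w (c+j+1)) ^ 2
                = if (w (c+j) - w (c+j+1)) ≠ 0 then 1 else 0 := by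
              intro j hj
              rcases eq_or_ne (w (c+j) - w (c+j+1)) 0 with h | h
              · simp [h]
              · rw [if_pos h]
                have h1 : 1 ≤ |w (c+j) - w (c+j+1)| := Int.one_le_abs h
                have h2 := hsmall j hj
                nlinarith [sq_abs (w (c+j) - w (c+j+1))]
            have hcard1 : ((range k).filter
                (fun j => (w (c+j) - w (c+j+1)) ≠ 0)).card = 1 := by
              have h : (1:ℤ) = ((range k).filter
                  (fun j => (w (c+j) - w (c+j+1)) ≠ 0)).card := by
                rw [← hGsum, Finset.sum_congr rfl hsqG, Finset.sum_boole]
              exact_mod_cast h.symm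
            obtain ⟨j₀, hj₀set⟩ := Finset.card_eq_one.mp hcard1
            have hj₀mem : j₀ ∈ (range k).filter (fun j => (w (c+j) - w (c+j+1)) ≠ 0) := by
              rw [hj₀set]; exact Finset.mem_singleton_self _
            have hj₀k : j₀ < k := Finset.mem_range.mp (Finset.mem_filter.mp hj₀mem).1
            have hdz2 : ∀ j, j < k → j ≠ j₀ → w (c+j) - w (c+j+1) = 0 := by
              intro j hjk hne
              by_contra h
              have : j ∈ (range k).filter (fun j => (w (c+j) - w (c+j+1)) ≠ 0) :=
                Finset.mem_filter.mpr ⟨Finset.mem_range.mpr hjk, h⟩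
              rw [hj₀set, Finset.mem_singleton] at this
              exact hne this
            have hdj₀ : w (c+j₀) - w (c+j₀+1) = -b := by
              have h0 : ∑ j ∈ range k, (w (c+j) - w (c+j+1)) = -b := by
                rw [← hDdef]; exact hD0
              have hfil : ∑ j ∈ (range k).filter
                  (fun j => (w (c+j) - w (c+j+1)) ≠ 0), (w (c+j) - w (c+j+1))
                  = ∑ j ∈ range k, (w (c+j) - w (c+j+1)) :=
                Finset.sum_filter_ne_zero (range k)
              rw [hj₀set, Finset.sum_singleton, h0] at hfil
              exact hfil
            have hval : ∀ j ≤ k, w (c+j) = if j ≤ j₀ then 0 else b := by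
              intro j
              induction j with
              | zero =>
                intro _
                rw [if_pos (Nat.zero_le j₀)]
                exact ha.symm.trans ha0
              | succ j ih =>
                intro hj
                have hwj := ih (by omega)
                rcases eq_or_ne j j₀ with he | he
                · subst he
                  rw [if_pos (le_refl _)] at hwj
                  rw [if_neg (by omega)]
                  have : w (c+j) - w (c+j+1) = -b := hdj₀
                  have hx : w (c+(j+1)) = w (c+j+1) := by
                    norm_num [← Nat.add_assoc]
                  rw [hx]; linarith
                · have hd0 := hdz2 j (by omega) he
                  have hx : w (c+(j+1)) = w (c+j+1) := by
                    norm_num [← Nat.add_assoc]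
                  rw [hx]
                  have hwj1 : w (c+j+1) = w (c+j) := by linarith
                  rw [hwj1, hwj]
                  split_ifs with h1 h2 h2 <;> first | rfl | omega
            have hbcases : b = 1 ∨ b = -1 := by
              have hmul : (b - 1) * (b + 1) = 0 := by linear_combination hb1
              rcases mul_eq_zero.mp hmul with h | h
              · exact Or.inl (by omega)
              · exact Or.inr (by omega)
            have hvalall : ∀ i ≤ c+k, w i = if c+j₀+1 ≤ i ∧ i ≤ c+k then b else 0 := by
              intro i hi
              rcases le_or_gt i c with hic | hic
              · rw [hzero i hic, if_neg (by omega)]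
              · have hij : i = c + (i - c) := by omega
                rw [hij, hval (i-c) (by omega)]
                split_ifs with h1 h2 h2 <;> first | rfl | omega
            refine ⟨c+j₀+1, c+k, by omega, le_refl _, Or.inr (by omega), ?_⟩
            rcases hbcases with hbe | hbe
            · left; intro i hi; rw [hvalall i hi, hbe]
            · right; intro i hi; rw [hvalall i hi, hbe]
        · -- a ≠ 0 : strict
          have hE1 : 1 ≤ E := le_trans (Int.one_le_abs hane) hEa
          have hFk : (k:ℤ) ≤ F := by
            have hterm : ∀ j ∈ range k, (1:ℤ) ≤ ((k:ℤ) * (w (c+j) - w (c+j+1)) + b) ^ 2 := by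
              intro j _
              set d : ℤ := w (c+j) - w (c+j+1)
              have hne : (k:ℤ) * d + b ≠ 0 := by
                intro h0
                rcases eq_or_ne d 0 with hd | hd
                · rw [hd] at h0; simp at h0; exact hbne h0
                · have h1 : 1 ≤ |d| := Int.one_le_abs hd
                  have h2 : 1 ≤ d^2 := by nlinarith [sq_abs d]
                  have hk2' : (2:ℤ) ≤ (k:ℤ) := by exact_mod_cast hk
                  have h3 : b^2 = (k:ℤ)^2 * d^2 := by
                    have hbd : b = -((k:ℤ)*d) := by linarith
                    rw [hbd]; ring
                  have h4 : (4:ℤ) ≤ (k:ℤ)^2 := by nlinarith [hk2']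
                  have h5 : (4:ℤ)*1 ≤ (k:ℤ)^2 * d^2 :=
                    mul_le_mul h4 h2 (by norm_num) (by positivity)
                  linarith
              have := Int.one_le_abs hne
              nlinarith [sq_abs ((k:ℤ) * d + b)]
            have h := Finset.sum_le_sum hterm
            rw [Finset.sum_const, card_range, nsmul_eq_mul, mul_one] at h
            rw [hF]; exact_mod_cast h
          have e2 : (k:ℤ)^2*1 ≤ (k:ℤ)^2*E := mul_le_mul_of_nonneg_left hE1 (by positivity)
          constructor
          · rw [hb1]; linarith
          · intro heq; rw [hb1] at heq; exfalso; linarith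
      · -- |b| ≥ 2
        have hb4 : 4 ≤ b^2 := by
          have h1 : 2 ≤ |b| := by
            by_contra hcon
            push_neg at hcon
            rw [abs_lt] at hcon
            have h2 : b = -1 ∨ b = 0 ∨ b = 1 := by omega
            rcases h2 with h | h | h
            · exact hbn1 (by rw [h]; norm_num)
            · exact hbne h
            · exact hbn1 (by rw [h]; norm_num)
          nlinarith [sq_abs b, abs_nonneg b]
        have e2 : 0 ≤ (k:ℤ)^2*E := by positivity
        have e3 : (k:ℤ)*((k:ℤ)+1)*4 ≤ (k:ℤ)*((k:ℤ)+1)*b^2 :=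
          mul_le_mul_of_nonneg_left hb4 (by positivity)
        have e4 : (0:ℤ) ≤ (k:ℤ)^2 := sq_nonneg _
        constructor
        · linarith
        · intro heq; exfalso; linarith
  -- conclude
  constructor
  · have h1 : 2*(k:ℤ)*(k:ℤ) ≤ 2*(k:ℤ)*((k:ℤ)*S + a*b) := by
      rw [hMaster]; linarith [core.1]
    have h2 := le_of_mul_le_mul_left h1 (by positivity : (0:ℤ) < 2*(k:ℤ))
    linarith
  · constructor
    · intro hT
      apply core.2
      rw [← hMaster, hT]
      ring
    · intro hXX
      rw [hX] at hXX
      obtain ⟨p, q, hpq, hqle, hcase, hvals⟩ := hXX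
      obtain ⟨ε, hε1, hwv⟩ : ∃ ε : ℤ, ε^2 = 1 ∧
          ∀ i ≤ c+k, w i = if p ≤ i ∧ i ≤ q then ε else 0 := by
        rcases hvals with h | h
        · exact ⟨1, by norm_num, h⟩
        · exact ⟨-1, by norm_num, h⟩
      have hsq : ∑ i ∈ range (c+k+1), w i ^ 2 = ((Finset.Icc p q).card : ℤ) := by
        have h1 : ∀ i ∈ range (c+k+1), w i ^ 2 = if p ≤ i ∧ i ≤ q then (1:ℤ) else 0 := by
          intro i hi
          have hi' : i ≤ c+k := by have := Finset.mem_range.mp hi; omega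
          rw [hwv i hi']
          split_ifs
          · exact hε1
          · ring
        rw [Finset.sum_congr rfl h1, Finset.sum_boole]
        congr 1
        apply Finset.card_nbij' id id <;> intro i hi <;>
          simp only [Finset.mem_filter, Finset.mem_range, Finset.mem_Icc, Finset.mem_coe, id] at * <;> omega
      have hcross : ∑ i ∈ range (c+k), w i * w (i+1) = ((Finset.Ico p q).card : ℤ) := by
        have h1 : ∀ i ∈ range (c+k), w i * w (i+1)
            = if p ≤ i ∧ i + 1 ≤ q then (1:ℤ) else 0 := by
          intro i hi
          have hi' : i < c+k := Finset.mem_range.mp hi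
          rw [hwv i (by omega), hwv (i+1) (by omega)]
          by_cases h2 : p ≤ i ∧ i + 1 ≤ q
          · rw [if_pos (show p ≤ i ∧ i ≤ q by omega),
              if_pos (show p ≤ i+1 ∧ i+1 ≤ q by omega), if_pos h2, ← sq]
            exact hε1
          · rw [if_neg h2]
            rcases (show ¬(p ≤ i ∧ i ≤ q) ∨ ¬(p ≤ i+1 ∧ i+1 ≤ q) by omega) with h3 | h3
            · rw [if_neg h3, zero_mul]
            · rw [if_neg h3, mul_zero]
        rw [Finset.sum_congr rfl h1, Finset.sum_boole]
        congr 1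
        apply Finset.card_nbij' id id <;> intro i hi <;>
          simp only [Finset.mem_filter, Finset.mem_range, Finset.mem_Ico, Finset.mem_coe, id] at * <;> omega
      have hScalc : S = 1 := by
        rw [hS, hsq, hcross, Nat.card_Icc, Nat.card_Ico]
        omega
      have hab : a * b = 0 := by
        rcases hcase with hcq | hcp
        · have hbe : b = 0 := by
            rw [hb, hwv (c+k) (le_refl _), if_neg (by omega)]
          rw [hbe, mul_zero]
        · have hae : a = 0 := by
            rw [ha, hwv c (by omega), if_neg (by omega)]
          rw [hae, zero_mul]
      rw [hScalc, hab]
      ring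


lemma char_equiv (n k c : ℕ) (hk2 : 2 ≤ k) (hc : n = c+k+1) (v : Fin n → ℤ) (w : ℕ → ℤ)
    (hw : ∀ (i : ℕ) (h : i < n), w i = v ⟨i, h⟩) :
    (∃ p q : ℕ, p ≤ q ∧ q ≤ c+k ∧ (q < c+k ∨ c < p) ∧
        ((∀ i ≤ c+k, w i = if p ≤ i ∧ i ≤ q then 1 else 0) ∨
         (∀ i ≤ c+k, w i = if p ≤ i ∧ i ≤ q then -1 else 0))) ↔
      (∃ p q : Fin n, p ≤ q ∧
        ((q : ℕ) ≤ n - 2 ∨ ((q : ℕ) = n - 1 ∧ n - k ≤ (p : ℕ))) ∧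
        ((v = fun i => if p ≤ i ∧ i ≤ q then 1 else 0) ∨
         (v = fun i => if p ≤ i ∧ i ≤ q then -1 else 0))) := by
  constructor
  · rintro ⟨p, q, hpq, hqle, hcase, hvals⟩
    refine ⟨⟨p, by omega⟩, ⟨q, by omega⟩, hpq, ?_, ?_⟩
    · show q ≤ n - 2 ∨ (q = n - 1 ∧ n - k ≤ p)
      omega
    · rcases hvals with h | h
      · left
        funext i
        rw [← hw ↑i i.isLt, h ↑i (by omega)]
        · exact if_congr (by simp [Fin.le_def]) rfl rfl
      · right
        funext i
        rw [← hw ↑i i.isLt, h ↑i (by omega)]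
        · exact if_congr (by simp [Fin.le_def]) rfl rfl
  · rintro ⟨p, q, hpq, hcond, hvals⟩
    refine ⟨↑p, ↑q, hpq, by omega, by omega, ?_⟩
    rcases hvals with h | h
    · left
      intro i hi
      have hin : i < n := by omega
      rw [hw i hin, congrFun h ⟨i, hin⟩]
      exact if_congr (by simp [Fin.le_def]) rfl rfl
    · right
      intro i hi
      have hin : i < n := by omega
      rw [hw i hin, congrFun h ⟨i, hin⟩]
      exact if_congr (by simp [Fin.le_def]) rfl rfl

set_option maxHeartbeats 1000000 in
/-- For `n ≥ 3` and `2 ≤ k ≤ n − 1`, the faulted quadratic form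
`q(v) = Σ vᵢ² − Σ vᵢ v_{i+1} + (1/k) v_{n−k} vₙ` satisfies `q(v) ≥ 1` for every nonzero
integer vector `v`, with equality iff `v` or `−v` belongs to the faulted ladder set
`X_{n,k}` (interval indicators `χ_{[p,q]}` with `q ≤ n−1`, or `χ_{[p,n]}` with
`p > n − k`; here indices inside `Fin n` are `0`-based). -/
theorem stmt14 (n k : ℕ) (hn : 3 ≤ n) (hk2 : 2 ≤ k) (hkn : k ≤ n - 1)
    (v : Fin n → ℤ) (hv : v ≠ 0) :
    1 ≤ (∑ i, ((v i : ℝ)) ^ 2)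
        - (∑ i : Fin n, if h : (i : ℕ) + 1 < n then (v i : ℝ) * (v ⟨(i : ℕ) + 1, h⟩ : ℝ) else 0)
        + (1 / (k : ℝ)) * (v ⟨n - k - 1, by omega⟩ : ℝ) * (v ⟨n - 1, by omega⟩ : ℝ) ∧
    ((∑ i, ((v i : ℝ)) ^ 2)
        - (∑ i : Fin n, if h : (i : ℕ) + 1 < n then (v i : ℝ) * (v ⟨(i : ℕ) + 1, h⟩ : ℝ) else 0)
        + (1 / (k : ℝ)) * (v ⟨n - k - 1, by omega⟩ : ℝ) * (v ⟨n - 1, by omega⟩ : ℝ) = 1 ↔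
      ∃ p q : Fin n, p ≤ q ∧
        ((q : ℕ) ≤ n - 2 ∨ ((q : ℕ) = n - 1 ∧ n - k ≤ (p : ℕ))) ∧
        ((v = fun i => if p ≤ i ∧ i ≤ q then 1 else 0) ∨
         (v = fun i => if p ≤ i ∧ i ≤ q then -1 else 0))) := by
  obtain ⟨c, hc⟩ : ∃ c, n = c + k + 1 := ⟨n - k - 1, by omega⟩
  set w : ℕ → ℤ := fun i => if h : i < n then v ⟨i, h⟩ else 0 with hwdef
  have hwv : ∀ i : Fin n, w i = v i := by
    intro i; rw [hwdef]; simp [i.isLt]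
  have hv' : ∃ i, i < c+k+1 ∧ w i ≠ 0 := by
    rcases Function.ne_iff.mp hv with ⟨i, hi⟩
    refine ⟨↑i, by omega, ?_⟩
    rw [hwv i]; simpa using hi
  have hk0R : (0:ℝ) < (k:ℝ) := by exact_mod_cast (by omega : 0 < k)
  have hb1 : (∑ i, ((v i : ℝ)) ^ 2) = ((∑ i ∈ range (c+k+1), w i ^ 2 : ℤ) : ℝ) := by
    rw [← hc]
    push_cast
    rw [← Fin.sum_univ_eq_sum_range (fun j => ((w j : ℤ) : ℝ)^2) n]
    exact Finset.sum_congr rfl fun i _ => by rw [hwv i]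
  have hb2 : (∑ i : Fin n, if h : (i : ℕ) + 1 < n then (v i : ℝ) * (v ⟨(i : ℕ) + 1, h⟩ : ℝ) else 0)
      = ((∑ i ∈ range (c+k), w i * w (i+1) : ℤ) : ℝ) := by
    have h1 : ∀ i : Fin n, (if h : (i:ℕ)+1 < n then (v i:ℝ) * (v ⟨(i:ℕ)+1, h⟩:ℝ) else 0)
        = (((if (i:ℕ)+1 < n then w i * w ((i:ℕ)+1) else 0 : ℤ)):ℝ) := by
      intro i
      by_cases h : (i:ℕ)+1 < n
      · rw [dif_pos h, if_pos h]
        have e1 : w ↑i = v i := hwv i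
        have e2 : w ((i:ℕ)+1) = v ⟨(i:ℕ)+1, h⟩ := dif_pos h
        rw [e1, e2]; push_cast; ring
      · rw [dif_neg h, if_neg h]; norm_num
    have h2 : ∑ i : Fin n, (if (i:ℕ)+1 < n then w i * w ((i:ℕ)+1) else 0 : ℤ)
        = ∑ i ∈ range (c+k), w i * w (i+1) := by
      rw [Fin.sum_univ_eq_sum_range (fun j => if j+1 < n then w j * w (j+1) else 0) n]
      rw [hc, Finset.sum_range_succ, if_neg (by omega), add_zero]
      exact Finset.sum_congr rfl fun i hi =>
        if_pos (by have := Finset.mem_range.mp hi; omega)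
    calc ∑ i : Fin n, (if h : (i:ℕ)+1 < n then (v i:ℝ) * (v ⟨(i:ℕ)+1, h⟩:ℝ) else 0)
        = ∑ i : Fin n, (((if (i:ℕ)+1 < n then w i * w ((i:ℕ)+1) else 0 : ℤ)):ℝ) :=
          Finset.sum_congr rfl fun i _ => h1 i
      _ = ((∑ i : Fin n, (if (i:ℕ)+1 < n then w i * w ((i:ℕ)+1) else 0 : ℤ) : ℤ) : ℝ) := by
          push_cast; rfl
      _ = ((∑ i ∈ range (c+k), w i * w (i+1) : ℤ) : ℝ) := by rw [h2]
  have hx : (v ⟨n - k - 1, by omega⟩ : ℝ) = ((w c : ℤ) : ℝ) := by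
    have h1 : w c = v ⟨c, by omega⟩ := dif_pos (show c < n by omega)
    have e : w c = v ⟨n - k - 1, by omega⟩ := by
      rw [h1]; congr 1; exact Fin.ext (by simp; omega)
    rw [e]
  have hy : (v ⟨n - 1, by omega⟩ : ℝ) = ((w (c+k) : ℤ) : ℝ) := by
    have h1 : w (c+k) = v ⟨c+k, by omega⟩ := dif_pos (show c+k < n by omega)
    have e : w (c+k) = v ⟨n - 1, by omega⟩ :=
      h1.trans (by congr 1; exact Fin.ext (by simp; omega))
    rw [e]
  have hkey := key_lemma k c hk2 w hv'
  set T : ℤ := (k:ℤ) * ((∑ i ∈ range (c+k+1), w i ^ 2)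
      - ∑ i ∈ range (c+k), w i * w (i+1)) + w c * w (c+k) with hT
  have hexpr : (∑ i, ((v i : ℝ)) ^ 2)
        - (∑ i : Fin n, if h : (i : ℕ) + 1 < n then (v i : ℝ) * (v ⟨(i : ℕ) + 1, h⟩ : ℝ) else 0)
        + (1 / (k : ℝ)) * (v ⟨n - k - 1, by omega⟩ : ℝ) * (v ⟨n - 1, by omega⟩ : ℝ)
      = ((T:ℤ):ℝ) / (k:ℝ) := by
    rw [hb1, hb2, hx, hy, hT]
    push_cast
    field_simp
  rw [hexpr]
  constructor
  · rw [le_div_iff₀ hk0R, one_mul]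
    exact_mod_cast hkey.1
  · rw [div_eq_one_iff_eq hk0R.ne']
    have hcast : ((T:ℤ):ℝ) = (k:ℝ) ↔ T = (k:ℤ) := by
      constructor
      · intro h; exact_mod_cast h
      · intro h; exact_mod_cast h
    have hwproof : ∀ (i : ℕ) (h : i < n), w i = v ⟨i, h⟩ := fun i h => dif_pos h
    rw [hcast, hkey.2, char_equiv n k c hk2 hc v w hwproof]
end

section
/- Let Q be an n×n real symmetric positive definite matrix with Q₁₁ = 1 and v Q vᵀ ≥ 1 for every nonzero row vector v ∈ ℤⁿ. If the set {v ∈ ℤⁿ : v Q vᵀ = 1} spans a proper linear subspace of ℝⁿ, then Q does not minimize the determinant among such matrices: there exists an n×n real symmetric positive definite matrix Q' with Q'₁₁ = 1, v Q' vᵀ ≥ 1 for every nonzero v ∈ ℤⁿ, and det Q' < det Q. -/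
open Matrix


lemma aux_quad_lower {n : ℕ} (hn : 0 < n) (Q : Matrix (Fin n) (Fin n) ℝ) (hpd : Q.PosDef) :
    ∃ c > 0, ∀ x : Fin n → ℝ, c * (x ⬝ᵥ x) ≤ x ⬝ᵥ Q *ᵥ x := by
  classical
  set K : Set (Fin n → ℝ) := {x | x ⬝ᵥ x = 1} with hK
  have hdotc : Continuous fun x : Fin n → ℝ => x ⬝ᵥ x := by
    simp only [dotProduct]
    exact continuous_finset_sum _ fun i _ => (continuous_apply i).mul (continuous_apply i)
  have hgc : Continuous fun x : Fin n → ℝ => x ⬝ᵥ Q *ᵥ x := by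
    simp only [dotProduct, mulVec]
    exact continuous_finset_sum _ fun i _ => (continuous_apply i).mul
      (continuous_finset_sum _ fun j _ => continuous_const.mul (continuous_apply j))
  have hKc : IsClosed K := isClosed_eq hdotc continuous_const
  have hKb : Bornology.IsBounded K := by
    apply Bornology.IsBounded.subset (Metric.isBounded_closedBall (x := (0 : Fin n → ℝ)) (r := 1))
    intro x hx
    simp only [Metric.mem_closedBall, dist_zero_right]
    rw [pi_norm_le_iff_of_nonneg zero_le_one]
    intro i
    have h1 : x i * x i ≤ x ⬝ᵥ x := by
      have := Finset.single_le_sum (f := fun j => x j * x j)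
        (fun j _ => mul_self_nonneg (x j)) (Finset.mem_univ i)
      simpa [dotProduct] using this
    have h2 : x i * x i ≤ 1 := by rw [hx] at h1; simpa using h1
    rw [Real.norm_eq_abs]
    nlinarith [abs_nonneg (x i), abs_mul_abs_self (x i)]
  have hKcomp : IsCompact K := Metric.isCompact_of_isClosed_isBounded hKc hKb
  have hKne : K.Nonempty := by
    refine ⟨Pi.single ⟨0, hn⟩ 1, ?_⟩
    simp [hK, dotProduct, Pi.single_apply]
  obtain ⟨z, hzK, hzmin⟩ := hKcomp.exists_isMinOn hKne hgc.continuousOn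
  have hz0 : z ≠ 0 := by
    intro h
    rw [h] at hzK
    simp [hK, dotProduct] at hzK
  have hc : 0 < z ⬝ᵥ Q *ᵥ z := by
    have := hpd.dotProduct_mulVec_pos hz0
    simpa using this
  refine ⟨z ⬝ᵥ Q *ᵥ z, hc, fun x => ?_⟩
  rcases eq_or_ne x 0 with rfl | hx0
  · simp
  · have hxx : 0 < x ⬝ᵥ x := by
      obtain ⟨i, hi⟩ := Function.ne_iff.mp hx0
      have h1 : x i * x i ≤ x ⬝ᵥ x := by
        have := Finset.single_le_sum (f := fun j => x j * x j)
          (fun j _ => mul_self_nonneg (x j)) (Finset.mem_univ i)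
        simpa [dotProduct] using this
      nlinarith [mul_self_pos.mpr hi]
    set t : ℝ := Real.sqrt (x ⬝ᵥ x) with ht
    have htpos : 0 < t := Real.sqrt_pos.mpr hxx
    have htsq : t * t = x ⬝ᵥ x := Real.mul_self_sqrt hxx.le
    have hyK : (t⁻¹ • x) ∈ K := by
      simp only [hK, Set.mem_setOf_eq, smul_dotProduct, dotProduct_smul, smul_eq_mul]
      field_simp
      nlinarith
    have hval : (t⁻¹ • x) ⬝ᵥ Q *ᵥ (t⁻¹ • x) = t⁻¹ * (t⁻¹ * (x ⬝ᵥ Q *ᵥ x)) := by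
      rw [mulVec_smul, smul_dotProduct, dotProduct_smul]
      simp [smul_eq_mul]
    have hthis : z ⬝ᵥ Q *ᵥ z ≤ t⁻¹ * (t⁻¹ * (x ⬝ᵥ Q *ᵥ x)) := by
      have h0 := hzmin hyK
      simp only [Set.mem_setOf_eq] at h0
      rw [hval] at h0
      exact h0
    have h2 : (z ⬝ᵥ Q *ᵥ z) * (t * t) ≤ x ⬝ᵥ Q *ᵥ x := by
      have h3 := mul_le_mul_of_nonneg_left hthis (le_of_lt (mul_pos htpos htpos))
      calc (z ⬝ᵥ Q *ᵥ z) * (t * t) = t * t * (z ⬝ᵥ Q *ᵥ z) := by ring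
        _ ≤ t * t * (t⁻¹ * (t⁻¹ * (x ⬝ᵥ Q *ᵥ x))) := h3
        _ = x ⬝ᵥ Q *ᵥ x := by field_simp
    rw [← htsq]; linarith


lemma aux_vecMulVec_mulVec {n : ℕ} (w x : Fin n → ℝ) :
    vecMulVec w w *ᵥ x = (w ⬝ᵥ x) • w := by
  ext i
  simp only [mulVec, vecMulVec_apply, dotProduct, Pi.smul_apply, smul_eq_mul]
  rw [Finset.sum_mul]
  exact Finset.sum_congr rfl fun j _ => by ring

lemma aux_quad_sub {n : ℕ} (Q : Matrix (Fin n) (Fin n) ℝ) (t : ℝ) (w x : Fin n → ℝ) :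
    x ⬝ᵥ (Q - t • vecMulVec w w) *ᵥ x = x ⬝ᵥ Q *ᵥ x - t * (x ⬝ᵥ w) ^ 2 := by
  rw [sub_mulVec, dotProduct_sub, smul_mulVec, dotProduct_smul, aux_vecMulVec_mulVec,
    dotProduct_smul, smul_eq_mul, smul_eq_mul, dotProduct_comm w x]
  ring

lemma aux_cs {n : ℕ} (x w : Fin n → ℝ) : (x ⬝ᵥ w) ^ 2 ≤ (x ⬝ᵥ x) * (w ⬝ᵥ w) := by
  have h := Finset.sum_mul_sq_le_sq_mul_sq Finset.univ x w
  have h1 : x ⬝ᵥ x = ∑ i, x i ^ 2 := by simp [dotProduct, sq]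
  have h2 : w ⬝ᵥ w = ∑ i, w i ^ 2 := by simp [dotProduct, sq]
  rw [h1, h2]
  exact h

lemma aux_symm {n : ℕ} (Q : Matrix (Fin n) (Fin n) ℝ) (hsymm : Q.IsSymm) (t : ℝ) (w : Fin n → ℝ) :
    (Q - t • vecMulVec w w).IsSymm := by
  rw [Matrix.IsSymm, transpose_sub, transpose_smul, hsymm.eq]
  congr 1
  ext i j
  simp [vecMulVec_apply, mul_comm]

lemma aux_dot_pos {n : ℕ} (x : Fin n → ℝ) (hx : x ≠ 0) : 0 < x ⬝ᵥ x := by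
  obtain ⟨i, hi⟩ := Function.ne_iff.mp hx
  have h1 : x i * x i ≤ x ⬝ᵥ x := by
    have := Finset.single_le_sum (f := fun j => x j * x j)
      (fun j _ => mul_self_nonneg (x j)) (Finset.mem_univ i)
    simpa [dotProduct] using this
  nlinarith [mul_self_pos.mpr hi]

lemma aux_det {n : ℕ} (Q : Matrix (Fin n) (Fin n) ℝ) (hpd : Q.PosDef) (t : ℝ) (w : Fin n → ℝ) :
    (Q - t • vecMulVec w w).det = Q.det * (1 - t * (w ⬝ᵥ Q⁻¹ *ᵥ w)) := by
  classical
  have hdet : IsUnit Q.det := hpd.det_pos.ne'.isUnit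
  have hQQ : Q * Q⁻¹ = 1 := Matrix.mul_nonsing_inv Q hdet
  have hmv : ∀ u : Fin n → ℝ, Q * vecMulVec u w = vecMulVec (Q *ᵥ u) w := by
    intro u; ext i j
    simp only [Matrix.mul_apply, vecMulVec_apply, mulVec, dotProduct, Finset.sum_mul]
    exact Finset.sum_congr rfl fun k _ => by ring
  set u : Fin n → ℝ := -(t • (Q⁻¹ *ᵥ w)) with hu
  have hQu : Q *ᵥ u = -(t • w) := by
    rw [hu, mulVec_neg, mulVec_smul, mulVec_mulVec, hQQ, one_mulVec]
  have hfact : Q - t • vecMulVec w w = Q * (1 + replicateCol Unit u * replicateRow Unit w) := by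
    rw [Matrix.mul_add, Matrix.mul_one, ← vecMulVec_eq (ι := Unit), hmv, hQu]
    ext i j
    simp only [Matrix.add_apply, Matrix.sub_apply, Matrix.smul_apply, vecMulVec_apply,
      Matrix.neg_apply, Pi.neg_apply, Pi.smul_apply, smul_eq_mul]
    ring
  rw [hfact, det_mul, det_one_add_replicateCol_mul_replicateRow]
  congr 1
  rw [hu]
  simp only [dotProduct_neg, dotProduct_smul, smul_eq_mul]
  ring


/-- The quadratic form `v Q vᵀ` of a real matrix evaluated at an integer vector. -/
noncomputable def intQuadForm {n : ℕ} (Q : Matrix (Fin n) (Fin n) ℝ) (v : Fin n → ℤ) : ℝ :=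
  dotProduct (fun i => (v i : ℝ)) (Q.mulVec fun i => (v i : ℝ))

/-- If `Q ∈ Ω₁` (symmetric positive definite, `Q₁₁ = 1`, and `v Q vᵀ ≥ 1` for all
nonzero integer vectors) is such that the integer vectors with `v Q vᵀ = 1` span a
proper subspace of `ℝⁿ`, then `Q` does not minimize the determinant on `Ω₁`. -/
theorem stmt15 (n : ℕ) (hn : 0 < n) (Q : Matrix (Fin n) (Fin n) ℝ)
    (hsymm : Q.IsSymm) (hpd : Q.PosDef)
    (h11 : Q ⟨0, hn⟩ ⟨0, hn⟩ = 1)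
    (hge : ∀ v : Fin n → ℤ, v ≠ 0 → 1 ≤ intQuadForm Q v)
    (hspan : Submodule.span ℝ
        ((fun v : Fin n → ℤ => fun i => (v i : ℝ)) ''
          {v : Fin n → ℤ | intQuadForm Q v = 1}) ≠ ⊤) :
    ∃ Q' : Matrix (Fin n) (Fin n) ℝ, Q'.IsSymm ∧ Q'.PosDef ∧
      Q' ⟨0, hn⟩ ⟨0, hn⟩ = 1 ∧
      (∀ v : Fin n → ℤ, v ≠ 0 → 1 ≤ intQuadForm Q' v) ∧
      Q'.det < Q.det := by
  classical
  obtain ⟨c, hc, hcQ⟩ := aux_quad_lower hn Q hpd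
  set ι : (Fin n → ℤ) → (Fin n → ℝ) := fun v i => (v i : ℝ) with hι
  -- the orthogonal functional
  obtain ⟨f, hf0, hfbot⟩ := Submodule.exists_dual_map_eq_bot_of_lt_top
    (lt_top_iff_ne_top.mpr hspan) inferInstance
  set w : Fin n → ℝ := fun j => f (fun k => if j = k then 1 else 0) with hw
  have hfw : ∀ x : Fin n → ℝ, f x = x ⬝ᵥ w := by
    intro x
    conv_lhs => rw [pi_eq_sum_univ x]
    rw [map_sum]
    simp only [_root_.map_smul, smul_eq_mul]
    simp [dotProduct, hw]
  have hw0 : w ≠ 0 := by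
    intro h
    apply hf0
    apply LinearMap.ext
    intro x
    rw [hfw x, h]
    simp
  have horth : ∀ v : Fin n → ℤ, intQuadForm Q v = 1 → ι v ⬝ᵥ w = 0 := by
    intro v hv
    have hmem : ι v ∈ Submodule.span ℝ
        ((fun v : Fin n → ℤ => fun i => (v i : ℝ)) '' {v : Fin n → ℤ | intQuadForm Q v = 1}) :=
      Submodule.subset_span ⟨v, hv, rfl⟩
    have h0 : f (ι v) = 0 := by
      have h1 := Submodule.mem_map_of_mem (f := f) hmem
      rw [hfbot] at h1
      simpa using h1
    rw [hfw] at h0; exact h0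
  set e0 : Fin n := ⟨0, hn⟩ with he0
  have hsingle : intQuadForm Q (Pi.single e0 1) = Q e0 e0 := by
    simp [intQuadForm, mulVec, dotProduct, Pi.single_apply]
  have hwe0 : w e0 = 0 := by
    have h := horth (Pi.single e0 1) (by rw [hsingle]; exact h11)
    simpa [hι, dotProduct, Pi.single_apply] using h
  -- finiteness of short vectors
  have hfin : {v : Fin n → ℤ | intQuadForm Q v < 2}.Finite := by
    set B : ℤ := ⌈(2 / c : ℝ)⌉ with hB
    apply Set.Finite.subset (Set.finite_Icc (fun _ : Fin n => -B) (fun _ => B))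
    intro v hv
    simp only [Set.mem_setOf_eq] at hv
    have hvv : c * (ι v ⬝ᵥ ι v) ≤ intQuadForm Q v := hcQ (ι v)
    have hi : ∀ i, (v i) ^ 2 ≤ B := by
      intro i
      have h1 : ((v i : ℝ)) ^ 2 ≤ ι v ⬝ᵥ ι v := by
        have := Finset.single_le_sum (f := fun j => (ι v j) * (ι v j))
          (fun j _ => mul_self_nonneg _) (Finset.mem_univ i)
        simpa [dotProduct, sq, hι] using this
      have h3 : ((v i : ℝ)) ^ 2 ≤ 2 / c := by
        rw [le_div_iff₀ hc]; nlinarith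
      have h4 : ((v i : ℝ)) ^ 2 ≤ (B : ℝ) := le_trans h3 (Int.le_ceil _)
      exact_mod_cast h4
    rw [Set.mem_Icc]
    constructor <;> (rw [Pi.le_def]; intro i)
    · nlinarith [hi i, sq_nonneg (2 * (v i) + 1)]
    · nlinarith [hi i, sq_nonneg (2 * (v i) - 1)]
  -- the gap δ
  set F : Finset (Fin n → ℤ) := hfin.toFinset.filter (fun v => intQuadForm Q v ≠ 1 ∧ v ≠ 0)
    with hF
  obtain ⟨δ, hδ0, hδle⟩ : ∃ δ : ℝ, 0 < δ ∧ ∀ v : Fin n → ℤ, v ≠ 0 → intQuadForm Q v ≠ 1 →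
      intQuadForm Q v < 2 → 1 + δ ≤ intQuadForm Q v := by
    by_cases hFne : F.Nonempty
    · refine ⟨F.inf' hFne (fun v => intQuadForm Q v) - 1, ?_, ?_⟩
      · obtain ⟨v0, hv0F, hval⟩ := F.exists_mem_eq_inf' hFne (fun v => intQuadForm Q v)
        simp only [hF, Finset.mem_filter, Set.Finite.mem_toFinset, Set.mem_setOf_eq] at hv0F
        have h1 := hge v0 hv0F.2.2
        have hne := hv0F.2.1
        rw [hval]
        rcases lt_or_eq_of_le h1 with h | h
        · linarith
        · exact absurd h.symm hne
      · intro v hv h1 h2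
        have hmem : v ∈ F := by
          simp only [hF, Finset.mem_filter, Set.Finite.mem_toFinset, Set.mem_setOf_eq]
          exact ⟨h2, h1, hv⟩
        have := Finset.inf'_le (fun v => intQuadForm Q v) hmem
        linarith
    · refine ⟨1, one_pos, fun v hv h1 h2 => ?_⟩
      exfalso
      apply hFne
      refine ⟨v, ?_⟩
      simp only [hF, Finset.mem_filter, Set.Finite.mem_toFinset, Set.mem_setOf_eq]
      exact ⟨h2, h1, hv⟩
  set W : ℝ := w ⬝ᵥ w with hWdef
  have hW : 0 < W := aux_dot_pos w hw0
  set m : ℝ := min 1 δ with hm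
  have hm0 : 0 < m := lt_min one_pos hδ0
  have hm1 : m ≤ 1 := min_le_left _ _
  have hmδ : m ≤ δ := min_le_right _ _
  set t : ℝ := m * c / (2 * W) with ht
  have ht0 : 0 < t := by
    apply div_pos (mul_pos hm0 hc)
    linarith
  have htW : 2 * W * t = m * c := by
    rw [ht]; field_simp
  refine ⟨Q - t • vecMulVec w w, aux_symm Q hsymm t w, ?_, ?_, ?_, ?_⟩
  · -- positive definite
    refine Matrix.PosDef.of_dotProduct_mulVec_pos ?_ ?_
    · show (Q - t • vecMulVec w w)ᴴ = Q - t • vecMulVec w w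
      rw [conjTranspose_eq_transpose_of_trivial]
      exact (aux_symm Q hsymm t w)
    · intro x hx
      have hstar : star x = x := by funext i; simp
      rw [hstar, aux_quad_sub]
      have hcx : c * (x ⬝ᵥ x) ≤ x ⬝ᵥ Q *ᵥ x := hcQ x
      have hcs := aux_cs x w
      have hxx : 0 < x ⬝ᵥ x := aux_dot_pos x hx
      nlinarith [mul_le_mul_of_nonneg_left hcs ht0.le, mul_pos hxx hc,
        mul_le_mul_of_nonneg_right hm1 (mul_pos hxx hc).le, mul_pos hxx hW]
  · -- (1,1) entry
    show (Q - t • vecMulVec w w) e0 e0 = 1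
    simp only [Matrix.sub_apply, Matrix.smul_apply, vecMulVec_apply, smul_eq_mul, hwe0,
      mul_zero, zero_mul, sub_zero]
    exact h11
  · -- quadratic form at least 1 on nonzero integer vectors
    intro v hv
    have hquad : intQuadForm (Q - t • vecMulVec w w) v
        = intQuadForm Q v - t * (ι v ⬝ᵥ w) ^ 2 := aux_quad_sub Q t w (ι v)
    rw [hquad]
    by_cases h1 : intQuadForm Q v = 1
    · rw [horth v h1, h1]; simp
    · set a : ℝ := intQuadForm Q v with ha
      set s : ℝ := (ι v ⬝ᵥ w) ^ 2 with hs
      have ha1 : 1 ≤ a := hge v hv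
      have hcv : c * (ι v ⬝ᵥ ι v) ≤ a := hcQ (ι v)
      have hcs : s ≤ (ι v ⬝ᵥ ι v) * W := aux_cs (ι v) w
      have hs0 : 0 ≤ s := sq_nonneg _
      have hkey : c * s ≤ a * W := by nlinarith
      have hts : t * s ≤ m * a / 2 := by
        rw [le_div_iff₀ (by norm_num : (0:ℝ) < 2)]
        nlinarith [mul_le_mul_of_nonneg_left hkey hm0.le]
      rcases lt_or_ge a 2 with h2 | h2
      · have hδa := hδle v hv h1 h2
        have hma : m * a < m * 2 := mul_lt_mul_of_pos_left h2 hm0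
        linarith
      · have hma : m * a ≤ 1 * a := mul_le_mul_of_nonneg_right hm1 (by linarith)
        linarith
  · -- determinant decreases
    rw [aux_det Q hpd t w]
    have hp : 0 < w ⬝ᵥ Q⁻¹ *ᵥ w := by
      have h := (hpd.inv).dotProduct_mulVec_pos hw0
      have hstar : star w = w := by funext i; simp
      rw [hstar] at h
      exact h
    have hdetpos := hpd.det_pos
    nlinarith [mul_pos ht0 hp]
end

section
/- For every positive integer n, the set Ω₂ of all n×n real symmetric positive definite matrices Q with Qᵢᵢ = 1 for every i and v Q vᵀ ≥ 1 for every nonzero row vector v ∈ ℤⁿ is a convex and compact subset of the space of n×n real symmetric matrices. -/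
open Matrix

/-- The set `Ω₂` of symmetric positive definite matrices with unit diagonal whose
associated quadratic form is `≥ 1` on all nonzero integer vectors. -/
def Omega2 (n : ℕ) : Set (Matrix (Fin n) (Fin n) ℝ) :=
  {Q | Q.IsSymm ∧ Q.PosDef ∧ (∀ i, Q i i = 1) ∧
    ∀ v : Fin n → ℤ, v ≠ 0 → 1 ≤ intQuadForm Q v}

lemma dirichlet_approx {n : ℕ} (x : Fin n → ℝ) (M : ℕ) (hM : 0 < M) :
    ∃ (q : ℤ) (v : Fin n → ℤ), q ≠ 0 ∧ 1 ≤ |q| ∧ ∀ i, |(q : ℝ) * x i - v i| < 1 / M := by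
  have hMR : (0:ℝ) < M := by exact_mod_cast hM
  set f : Fin (M ^ n + 1) → (Fin n → Fin M) := fun a i =>
    ⟨(⌊Int.fract ((a : ℕ) * x i) * M⌋).toNat, by
      have h0 : (0:ℝ) ≤ Int.fract ((a : ℕ) * x i) * M :=
        mul_nonneg (Int.fract_nonneg _) hMR.le
      have h1 : Int.fract ((a : ℕ) * x i) * M < M := by
        nlinarith [Int.fract_lt_one ((a : ℕ) * x i)]
      have := Int.floor_lt.2 (show Int.fract ((a : ℕ) * x i) * M < ((M:ℤ):ℝ) by exact_mod_cast h1)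
      omega⟩ with hf
  obtain ⟨a, b, hab, hfab⟩ := Fintype.exists_ne_map_eq_of_card_lt f (by simp)
  have habz : (a : ℤ) ≠ (b : ℤ) := fun h => hab (Fin.ext (by exact_mod_cast h))
  refine ⟨(b : ℤ) - (a : ℤ), fun i => ⌊((b:ℕ) : ℝ) * x i⌋ - ⌊((a:ℕ) : ℝ) * x i⌋,
    sub_ne_zero.2 habz.symm, Int.one_le_abs (sub_ne_zero.2 habz.symm), ?_⟩
  intro i
  have hfeq : ⌊Int.fract ((a : ℕ) * x i) * M⌋ = ⌊Int.fract ((b : ℕ) * x i) * M⌋ := by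
    have h1 : (⌊Int.fract ((a : ℕ) * x i) * M⌋).toNat = (⌊Int.fract ((b : ℕ) * x i) * M⌋).toNat := by
      simpa [hf] using congrArg Fin.val (congrFun hfab i)
    have ha0 : 0 ≤ ⌊Int.fract ((a : ℕ) * x i) * M⌋ :=
      Int.floor_nonneg.2 (mul_nonneg (Int.fract_nonneg _) hMR.le)
    have hb0 : 0 ≤ ⌊Int.fract ((b : ℕ) * x i) * M⌋ :=
      Int.floor_nonneg.2 (mul_nonneg (Int.fract_nonneg _) hMR.le)
    omega
  have hlt : |Int.fract ((a : ℕ) * x i) * M - Int.fract ((b : ℕ) * x i) * M| < 1 :=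
    Int.abs_sub_lt_one_of_floor_eq_floor hfeq
  have key : ((((b:ℤ) - (a:ℤ)) : ℤ) : ℝ) * x i - ((⌊((b:ℕ) : ℝ) * x i⌋ - ⌊((a:ℕ) : ℝ) * x i⌋ : ℤ) : ℝ)
      = Int.fract ((b : ℕ) * x i) - Int.fract ((a : ℕ) * x i) := by
    unfold Int.fract
    push_cast
    ring
  rw [key]
  rw [abs_sub_comm] at hlt
  rw [lt_div_iff₀ hMR]
  calc |Int.fract ((b : ℕ) * x i) - Int.fract ((a : ℕ) * x i)| * M
      = |(Int.fract ((b : ℕ) * x i) - Int.fract ((a : ℕ) * x i)) * M| := by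
        rw [abs_mul, abs_of_nonneg hMR.le]
    _ = |Int.fract ((b : ℕ) * x i) * M - Int.fract ((a : ℕ) * x i) * M| := by ring_nf
    _ < 1 := hlt

lemma entry_bound {n : ℕ} {Q : Matrix (Fin n) (Fin n) ℝ} (hQ : Q.PosSemidef)
    (hd : ∀ i, Q i i = 1) (i j : Fin n) : |Q i j| ≤ 1 := by
  have hsym : Q j i = Q i j := by
    have h := hQ.isHermitian.apply i j
    simpa using h
  have h1 := hQ.dotProduct_mulVec_nonneg (Pi.single i (1:ℝ) + Pi.single j 1)
  have h2 := hQ.dotProduct_mulVec_nonneg (Pi.single i (1:ℝ) - Pi.single j 1)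
  simp only [star_trivial, add_dotProduct, sub_dotProduct, mulVec_add, mulVec_sub,
    dotProduct_add, dotProduct_sub, mulVec_single, single_dotProduct, one_mul, mul_one, Pi.smul_apply, op_smul_eq_mul, col_apply] at h1 h2
  rw [abs_le]
  constructor <;> nlinarith [hd i, hd j]

lemma posDef_of_conds {n : ℕ} {Q : Matrix (Fin n) (Fin n) ℝ} (hsym : Q.IsSymm)
    (hQ : Q.PosSemidef) (hd : ∀ i, Q i i = 1)
    (hv : ∀ v : Fin n → ℤ, v ≠ 0 → 1 ≤ intQuadForm Q v) : Q.PosDef := by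
  refine PosDef.of_dotProduct_mulVec_pos hQ.1 fun x hx => ?_
  by_contra hle
  push_neg at hle
  have hx0 : star x ⬝ᵥ Q *ᵥ x = 0 := le_antisymm hle (hQ.dotProduct_mulVec_nonneg x)
  have hker : Q *ᵥ x = 0 := (hQ.dotProduct_mulVec_zero_iff x).1 hx0
  obtain ⟨k, hk⟩ := Function.ne_iff.1 hx
  have hk' : x k ≠ 0 := by simpa using hk
  have hxk : (0:ℝ) < |x k| := abs_pos.2 hk'
  set M : ℕ := n + 1 + ⌈1 / |x k|⌉₊ with hMdef
  have hM : 0 < M := by omega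
  have hMR : (0:ℝ) < M := by exact_mod_cast hM
  have hMxk : 1 / (M:ℝ) < |x k| := by
    rw [div_lt_iff₀ hMR]
    have h1 : (1:ℝ) / |x k| < M := by
      have hc := Nat.le_ceil (1 / |x k|)
      have h2 : (⌈1 / |x k|⌉₊ : ℝ) < M := by exact_mod_cast (by omega : ⌈1 / |x k|⌉₊ < M)
      linarith
    have h3 := mul_lt_mul_of_pos_right h1 hxk
    rw [div_mul_cancel₀ 1 hxk.ne'] at h3
    linarith [h3]
  obtain ⟨q, v, hq0, hq1, happ⟩ := dirichlet_approx x M hM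
  have hvk : (v k : ℝ) ≠ 0 := by
    intro h
    have h1 := happ k
    rw [h, sub_zero, abs_mul] at h1
    have hq1' : (1:ℝ) ≤ |(q:ℝ)| := by exact_mod_cast hq1
    nlinarith
  have hvne : v ≠ 0 := by
    intro h; apply hvk; rw [h]; simp
  have hge := hv v hvne
  set d : Fin n → ℝ := fun i => (v i : ℝ) - q * x i with hddef
  have hdsmall : ∀ i, |d i| < 1 / M := by
    intro i
    have h := happ i
    rw [abs_sub_comm] at h
    exact h
  have hcd : (fun i => (v i : ℝ)) = d + q • x := by
    funext i; simp [hddef]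
  have hquad : intQuadForm Q v = d ⬝ᵥ Q *ᵥ d := by
    rw [intQuadForm, hcd]
    rw [mulVec_add, mulVec_smul, hker, smul_zero, add_zero, add_dotProduct]
    have hxQd : x ⬝ᵥ Q *ᵥ d = 0 := by
      rw [dotProduct_mulVec]
      have hz : x ᵥ* Q = 0 := by
        have h1 : x ᵥ* Q = Qᵀ *ᵥ x := by rw [← mulVec_transpose]
        rw [h1, hsym.eq, hker]
      rw [hz, zero_dotProduct]
    rw [smul_dotProduct, hxQd, smul_zero, add_zero]
  have hbound : d ⬝ᵥ Q *ᵥ d < 1 := by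
    have h1 : d ⬝ᵥ Q *ᵥ d ≤ ∑ i, ∑ j, |d i| * (|Q i j| * |d j|) := by
      calc d ⬝ᵥ Q *ᵥ d = ∑ i, ∑ j, d i * (Q i j * d j) := by
            simp [dotProduct, mulVec, Finset.mul_sum]
      _ ≤ ∑ i, ∑ j, |d i * (Q i j * d j)| :=
            Finset.sum_le_sum fun i _ => Finset.sum_le_sum fun j _ => le_abs_self _
      _ = ∑ i, ∑ j, |d i| * (|Q i j| * |d j|) := by simp [abs_mul]
    have h2 : ∀ i j : Fin n, |d i| * (|Q i j| * |d j|) ≤ (1/(M:ℝ)) * (1/M) := by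
      intro i j
      have hdi := (hdsmall i).le
      have hdj := (hdsmall j).le
      have hQij := entry_bound hQ hd i j
      have ha : |Q i j| * |d j| ≤ 1 / (M:ℝ) := by
        calc |Q i j| * |d j| ≤ 1 * (1 / M) :=
              mul_le_mul hQij hdj (abs_nonneg _) zero_le_one
        _ = 1 / M := one_mul _
      exact mul_le_mul hdi ha (mul_nonneg (abs_nonneg _) (abs_nonneg _)) (by positivity)
    have h3 : ∑ i : Fin n, ∑ j : Fin n, |d i| * (|Q i j| * |d j|)
        ≤ (n:ℝ) * n * ((1/M) * (1/M)) := by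
      calc (∑ i : Fin n, ∑ j : Fin n, |d i| * (|Q i j| * |d j|))
          ≤ ∑ _i : Fin n, ∑ _j : Fin n, (1/(M:ℝ)) * (1/M) :=
            Finset.sum_le_sum fun i _ => Finset.sum_le_sum fun j _ => h2 i j
      _ = (n:ℝ) * n * ((1/M) * (1/M)) := by
            simp [Finset.sum_const]; ring
    have h4 : (n:ℝ) * n * ((1/M) * (1/M)) < 1 := by
      have hnM : (n:ℝ) < M := by exact_mod_cast (by omega : n < M)
      have hn0 : (0:ℝ) ≤ n := Nat.cast_nonneg n
      have hMM : (0:ℝ) < M * M := by positivity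
      have he : (n:ℝ) * n * ((1/M) * (1/M)) = (n*n)/(M*M) := by field_simp
      rw [he, div_lt_one hMM]
      nlinarith
    linarith
  rw [hquad] at hge
  linarith

lemma posDef_smul {n : ℕ} {Q : Matrix (Fin n) (Fin n) ℝ} (h : Q.PosDef) {a : ℝ}
    (ha : 0 < a) : (a • Q).PosDef := by
  refine PosDef.of_dotProduct_mulVec_pos ?_ fun x hx => ?_
  · rw [Matrix.IsHermitian, conjTranspose_smul, star_trivial, h.1.eq]
  · rw [smul_mulVec, dotProduct_smul, smul_eq_mul]
    exact mul_pos ha (h.dotProduct_mulVec_pos hx)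


lemma intQuadForm_comb {n : ℕ} (Q1 Q2 : Matrix (Fin n) (Fin n) ℝ) (a b : ℝ)
    (v : Fin n → ℤ) :
    intQuadForm (a • Q1 + b • Q2) v = a * intQuadForm Q1 v + b * intQuadForm Q2 v := by
  unfold intQuadForm
  rw [add_mulVec, smul_mulVec, smul_mulVec, dotProduct_add,
    dotProduct_smul, dotProduct_smul, smul_eq_mul, smul_eq_mul]


lemma quad_cont {n : ℕ} (c : Fin n → ℝ) :
    Continuous fun Q : Matrix (Fin n) (Fin n) ℝ => c ⬝ᵥ Q *ᵥ c := by
  simp only [dotProduct, mulVec]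
  apply continuous_finset_sum
  intro i _
  apply Continuous.mul continuous_const
  apply continuous_finset_sum
  intro j _
  exact ((continuous_id.matrix_elem i j).mul continuous_const)


lemma omega2_convex (n : ℕ) : Convex ℝ (Omega2 n) := by
  rintro Q1 ⟨hs1, hp1, hd1, hq1⟩ Q2 ⟨hs2, hp2, hd2, hq2⟩ a b ha hb hab
  refine ⟨?_, ?_, ?_, ?_⟩
  · show (a • Q1 + b • Q2)ᵀ = _
    rw [transpose_add, transpose_smul, transpose_smul, hs1.eq, hs2.eq]
  · rcases ha.lt_or_eq with ha' | ha'
    · rcases hb.lt_or_eq with hb' | hb'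
      · exact (posDef_smul hp1 ha').add (posDef_smul hp2 hb')
      · have : a = 1 := by linarith [hab]
        simp [← hb', this, hp1]
    · have : b = 1 := by linarith [hab]
      simp [← ha', this, hp2]
  · intro i
    simp only [Matrix.add_apply, Matrix.smul_apply, smul_eq_mul, hd1 i, hd2 i,
      mul_one]
    exact hab
  · intro v hv
    rw [intQuadForm_comb]
    nlinarith [hq1 v hv, hq2 v hv]


lemma omega2_isClosed (n : ℕ) : IsClosed (Omega2 n) := by
  have heq : Omega2 n = {Q : Matrix (Fin n) (Fin n) ℝ | Q.IsSymm} ∩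
      ({Q | Q.PosSemidef} ∩ ({Q | ∀ i, Q i i = 1} ∩
      {Q | ∀ v : Fin n → ℤ, v ≠ 0 → 1 ≤ intQuadForm Q v})) := by
    ext Q
    constructor
    · rintro ⟨hs, hp, hd, hq⟩
      exact ⟨hs, hp.posSemidef, hd, hq⟩
    · rintro ⟨hs, hp, hd, hq⟩
      exact ⟨hs, posDef_of_conds hs hp hd hq, hd, hq⟩
  rw [heq]
  have hsc : IsClosed {Q : Matrix (Fin n) (Fin n) ℝ | Q.IsSymm} := by
    have : {Q : Matrix (Fin n) (Fin n) ℝ | Q.IsSymm} = {Q | Qᵀ = Q} := rfl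
    rw [this]
    exact isClosed_eq (Continuous.matrix_transpose continuous_id) continuous_id
  have hhc : IsClosed {Q : Matrix (Fin n) (Fin n) ℝ | Q.IsHermitian} := by
    have : {Q : Matrix (Fin n) (Fin n) ℝ | Q.IsHermitian} = {Q | Qᴴ = Q} := rfl
    rw [this]
    exact isClosed_eq (Continuous.matrix_conjTranspose continuous_id) continuous_id
  refine hsc.inter (IsClosed.inter ?_ (IsClosed.inter ?_ ?_))
  · have : {Q : Matrix (Fin n) (Fin n) ℝ | Q.PosSemidef} =
        {Q | Q.IsHermitian} ∩ ⋂ x : Fin n → ℝ, {Q | 0 ≤ star x ⬝ᵥ Q *ᵥ x} := by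
      ext Q
      simp only [Set.mem_inter_iff, Set.mem_iInter, Set.mem_setOf_eq]
      exact ⟨fun h => ⟨h.1, h.dotProduct_mulVec_nonneg⟩, fun h => PosSemidef.of_dotProduct_mulVec_nonneg h.1 h.2⟩
    rw [this]
    refine hhc.inter (isClosed_iInter fun x => ?_)
    have : {Q : Matrix (Fin n) (Fin n) ℝ | 0 ≤ star x ⬝ᵥ Q *ᵥ x} =
        {Q | 0 ≤ x ⬝ᵥ Q *ᵥ x} := by simp
    rw [this]
    exact isClosed_le continuous_const (quad_cont x)
  · have : {Q : Matrix (Fin n) (Fin n) ℝ | ∀ i, Q i i = 1} =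
        ⋂ i, {Q : Matrix (Fin n) (Fin n) ℝ | Q i i = 1} := by
      ext Q; simp
    rw [this]
    exact isClosed_iInter fun i =>
      isClosed_eq ((continuous_apply i).comp (continuous_apply i)) continuous_const
  · have : {Q : Matrix (Fin n) (Fin n) ℝ | ∀ v : Fin n → ℤ, v ≠ 0 → 1 ≤ intQuadForm Q v} =
        ⋂ (v : Fin n → ℤ) (_ : v ≠ 0), {Q | 1 ≤ intQuadForm Q v} := by
      ext Q; simp [Set.mem_iInter]
    rw [this]
    exact isClosed_iInter fun v => isClosed_iInter fun hv =>
      isClosed_le continuous_const (by unfold intQuadForm; exact quad_cont fun i => (v i : ℝ))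


lemma omega2_isCompact (n : ℕ) : IsCompact (Omega2 n) := by
  have hK : IsCompact (Set.pi Set.univ fun _ : Fin n =>
      Set.pi Set.univ fun _ : Fin n => Set.Icc (-1:ℝ) 1) :=
    isCompact_univ_pi fun _ => isCompact_univ_pi fun _ => isCompact_Icc
  refine IsCompact.of_isClosed_subset hK (omega2_isClosed n) ?_
  rintro Q ⟨hs, hp, hd, hq⟩
  intro i _
  intro j _
  exact abs_le.1 (entry_bound hp.posSemidef hd i j)


/-- `Ω₂` is a convex and compact subset of the space of `n × n` real matrices. -/
theorem stmt16 (n : ℕ) : Convex ℝ (Omega2 n) ∧ IsCompact (Omega2 n) := by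
  exact ⟨omega2_convex n, omega2_isCompact n⟩
end
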